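/- arXiv:1312.1036 — 14 statements merged into one kernel-verified Lean document; each statement's English description precedes it below -/
import Mathlib

section
/- The set A of natural numbers whose base-b representation begins with the digit 1, i.e., A = ∪_{k≥0} [b^k, 2·b^k) ∩ ℕ, has quotient set R(A) = {a/a' : a, a' ∈ A} dense in [0,∞) when b = 3. -/
/-- The quotient (ratio) set of a set of naturals, viewed in ℝ. -/
def ratioSet (A : Set ℕ) : Set ℝ := {x : ℝ | ∃ m ∈ A, ∃ n ∈ A, x = (m : ℝ) / (n : ℝ)}

/-- Lower asymptotic density of a set of naturals. -/
noncomputable def lowerDensity (A : Set ℕ) : ℝ :=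
  Filter.liminf (fun n : ℕ => (Nat.card ↥(A ∩ Set.Icc 1 n) : ℝ) / (n : ℝ)) Filter.atTop

/-- Upper asymptotic density of a set of naturals. -/
noncomputable def upperDensity (A : Set ℕ) : ℝ :=
  Filter.limsup (fun n : ℕ => (Nat.card ↥(A ∩ Set.Icc 1 n) : ℝ) / (n : ℝ)) Filter.atTop

/-- For every `N ≥ 1` there is an element of `A` in `[N, (3/2)N]`. -/
lemma exists_mem_A (N : ℕ) (hN : 1 ≤ N) :
    ∃ a : ℕ, (∃ k : ℕ, 3 ^ k ≤ a ∧ a < 2 * 3 ^ k) ∧ N ≤ a ∧ 2 * a ≤ 3 * N := by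
  set j := Nat.log 3 N with hj
  have h1 : 3 ^ j ≤ N := Nat.pow_log_le_self 3 (by omega)
  have h2 : N < 3 ^ (j + 1) := Nat.lt_pow_succ_log_self (by norm_num) N
  by_cases hc : N < 2 * 3 ^ j
  · exact ⟨N, ⟨j, h1, hc⟩, le_refl N, by omega⟩
  · refine ⟨3 ^ (j + 1), ⟨j + 1, le_refl _, by have : 0 < 3 ^ (j+1) := Nat.pow_pos (by norm_num); omega⟩, le_of_lt h2, ?_⟩
    have : 3 ^ (j + 1) = 3 * 3 ^ j := pow_succ' 3 j
    omega

theorem stmt0 :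
    Set.Ici (0 : ℝ) ⊆
      closure (ratioSet {n : ℕ | ∃ k : ℕ, 3 ^ k ≤ n ∧ n < 2 * 3 ^ k}) := by
  intro x hx
  rw [Set.mem_Ici] at hx
  rw [Metric.mem_closure_iff]
  intro ε hε
  rcases eq_or_lt_of_le hx with h0 | hxpos
  · -- x = 0 : use 1 / 3^k
    obtain ⟨k, hk⟩ := pow_unbounded_of_one_lt (1 / ε) (by norm_num : (1:ℝ) < 3)
    refine ⟨(1 : ℝ) / (3 ^ k : ℕ), ⟨1, ⟨0, by norm_num⟩, 3 ^ k, ⟨k, le_refl _, by have : 0 < 3 ^ k := Nat.pow_pos (by norm_num); omega⟩, by push_cast; ring⟩, ?_⟩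
    rw [← h0, dist_comm, Real.dist_eq]
    have h3 : (0:ℝ) < (3:ℝ) ^ k := by positivity
    rw [sub_zero, abs_of_nonneg (by positivity)]
    rw [div_lt_iff₀ (by push_cast; exact h3)]
    rw [div_lt_iff₀ hε] at hk
    push_cast
    linarith
  · -- x > 0
    obtain ⟨j, hj⟩ := pow_unbounded_of_one_lt (max (3 * x) (x / ε)) (by norm_num : (1:ℝ) < 3)
    have hj1 : 3 * x < (3:ℝ) ^ j := lt_of_le_of_lt (le_max_left _ _) hj
    have hj2 : x / ε < (3:ℝ) ^ j := lt_of_le_of_lt (le_max_right _ _) hj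
    have h3pos : (0:ℝ) < (3:ℝ) ^ j := by positivity
    set N : ℕ := ⌈(3:ℝ) ^ j / x⌉₊ with hN
    have hNpos : 1 ≤ N := Nat.one_le_ceil_iff.mpr (by positivity)
    obtain ⟨a, haA, haN, ha3N⟩ := exists_mem_A N hNpos
    have hapos : 0 < a := lt_of_lt_of_le hNpos haN
    have haR : (0:ℝ) < (a:ℝ) := by exact_mod_cast hapos
    have hNle : (3:ℝ) ^ j / x ≤ N := Nat.le_ceil _
    have hxa_lb : (3:ℝ) ^ j ≤ x * a := by
      have : (3:ℝ) ^ j / x ≤ (a:ℝ) := le_trans hNle (by exact_mod_cast haN)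
      calc (3:ℝ) ^ j = x * ((3:ℝ)^j / x) := by field_simp
        _ ≤ x * a := by apply mul_le_mul_of_nonneg_left this (le_of_lt hxpos)
    have hxa_ub : x * a < 2 * (3:ℝ) ^ j := by
      have hNlt : (N:ℝ) < (3:ℝ) ^ j / x + 1 := Nat.ceil_lt_add_one (by positivity)
      have ha' : (2:ℝ) * a ≤ 3 * N := by exact_mod_cast ha3N
      have : (a:ℝ) ≤ 3 / 2 * N := by linarith
      have hxa : x * a ≤ x * (3 / 2 * N) :=
        mul_le_mul_of_nonneg_left this (le_of_lt hxpos)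
      have : x * (3 / 2 * N) < x * (3 / 2 * ((3:ℝ)^j / x + 1)) := by
        apply mul_lt_mul_of_pos_left _ hxpos
        linarith
      have hexp : x * (3 / 2 * ((3:ℝ)^j / x + 1)) = 3 / 2 * (3:ℝ)^j + 3 / 2 * x := by
        field_simp
      rw [hexp] at this
      linarith
    set m : ℕ := ⌊x * a⌋₊ with hm
    have hm_lb : (3:ℕ) ^ j ≤ m := Nat.le_floor (by exact_mod_cast hxa_lb)
    have hm_ub : m < 2 * 3 ^ j := by
      rw [hm, Nat.floor_lt (by positivity)]
      push_cast
      exact hxa_ub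
    refine ⟨(m : ℝ) / (a : ℝ), ⟨m, ⟨j, hm_lb, hm_ub⟩, a, haA, rfl⟩, ?_⟩
    rw [Real.dist_eq]
    have hfl : x * a - 1 < (m:ℝ) := by
      have := Nat.sub_one_lt_floor (x * a)
      linarith [this]
    have hfu : (m:ℝ) ≤ x * a := Nat.floor_le (by positivity)
    have habs : |x - (m:ℝ)/(a:ℝ)| ≤ 1 / a := by
      rw [abs_of_nonneg]
      · rw [sub_le_iff_le_add, ← add_div, le_div_iff₀ haR]
        linarith [hfl]
      · rw [sub_nonneg, div_le_iff₀ haR]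
        linarith
    have h1a : 1 / (a:ℝ) ≤ x / (3:ℝ)^j := by
      have hga : (3:ℝ)^j / x ≤ (a:ℝ) := le_trans hNle (by exact_mod_cast haN)
      rw [div_le_div_iff₀ haR h3pos]
      nlinarith [hga, hxpos, h3pos]
    have hxe : x / (3:ℝ)^j < ε := by
      rw [div_lt_iff₀ h3pos]
      rw [div_lt_iff₀ hε] at hj2
      linarith
    linarith [habs, h1a, hxe]
end

section
/- For b ≥ 5 an integer, the set A = ∪_{k≥0} [b^k, 2·b^k) ∩ ℕ of natural numbers whose base-b representation begins with digit 1 is not fractionally dense: its quotient set is not dense in [0,∞). -/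
theorem stmt1 (b : ℕ) (hb : 5 ≤ b) :
    ¬ (Set.Ici (0 : ℝ) ⊆
      closure (ratioSet {n : ℕ | ∃ k : ℕ, b ^ k ≤ n ∧ n < 2 * b ^ k})) := by
  intro h
  set A : Set ℕ := {n : ℕ | ∃ k : ℕ, b ^ k ≤ n ∧ n < 2 * b ^ k} with hA
  -- Every ratio lies in Iic 2 ∪ Ici (5/2)
  have hsub : ratioSet A ⊆ Set.Iic (2 : ℝ) ∪ Set.Ici (5/2 : ℝ) := by
    rintro x ⟨m, ⟨j, hj1, hj2⟩, n, ⟨k, hk1, hk2⟩, rfl⟩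
    have hbpos : 0 < b := by omega
    have hnk : 0 < b ^ k := Nat.pow_pos (n := k) hbpos
    have hn : 0 < n := lt_of_lt_of_le hnk hk1
    have hnR : (0 : ℝ) < (n : ℝ) := by exact_mod_cast hn
    rcases le_or_gt j k with hjk | hjk
    · left
      have : m ≤ 2 * n := by
        calc m ≤ 2 * b ^ j := le_of_lt hj2
        _ ≤ 2 * b ^ k := by
            have := Nat.pow_le_pow_right hbpos hjk
            omega
        _ ≤ 2 * n := by omega
      rw [Set.mem_Iic, div_le_iff₀ hnR]
      have : (m:ℝ) ≤ 2 * n := by exact_mod_cast this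
      linarith
    · right
      have hk1j : k + 1 ≤ j := hjk
      have h5 : 5 * n ≤ 2 * m := by
        have h1 : b ^ (k + 1) ≤ b ^ j := Nat.pow_le_pow_right hbpos hk1j
        have h2 : 5 * b ^ k ≤ b ^ (k + 1) := by
          rw [pow_succ]
          calc 5 * b ^ k = b ^ k * 5 := by ring
          _ ≤ b ^ k * b := Nat.mul_le_mul_left _ hb
        omega
      rw [Set.mem_Ici, le_div_iff₀ hnR]
      have : (5 : ℝ) * n ≤ 2 * m := by exact_mod_cast h5
      linarith
  have hclosed : IsClosed (Set.Iic (2 : ℝ) ∪ Set.Ici (5/2 : ℝ)) :=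
    isClosed_Iic.union isClosed_Ici
  have hx : (9/4 : ℝ) ∈ closure (ratioSet A) := h (by norm_num)
  have := hclosed.closure_subset_iff.2 hsub hx
  rcases this with h1 | h1 <;> simp at h1 <;> norm_num at h1
end

section
/- Let 1 < a ≤ b be real numbers with b ≤ a², and let A = ∪_{k≥0} [b^k, a·b^k) ∩ ℕ. Then the quotient set R(A) = {m/n : m, n ∈ A} is dense in [0,∞). -/
lemma key (a b : ℝ) (ha : 1 < a) (hab : a ≤ b) (j k : ℕ) :
    Set.Ioo ((b : ℝ) ^ j / (a * b ^ k)) (a * b ^ j / b ^ k) ⊆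
      closure (ratioSet {n : ℕ | ∃ k : ℕ, b ^ k ≤ (n : ℝ) ∧ (n : ℝ) < a * b ^ k}) := by
  intro x hx
  have hb : (1:ℝ) < b := ha.trans_le hab
  have hb0 : (0:ℝ) < b := by linarith
  have ha0 : (0:ℝ) < a := by linarith
  have hbk : (0:ℝ) < b ^ k := pow_pos hb0 k
  have hbj : (0:ℝ) < b ^ j := pow_pos hb0 j
  obtain ⟨hxl, hxu⟩ := hx
  have hx0 : 0 < x := lt_trans (by positivity) hxl
  set c : ℝ := b ^ j / b ^ k with hc
  have hc0 : 0 < c := by positivity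
  set M : ℝ := max x c with hM
  set N : ℝ := min (a * x) (a * c) with hN
  have hcax : c < a * x := by
    rw [hc, div_lt_iff₀ hbk]
    rw [div_lt_iff₀ (by positivity : (0:ℝ) < a * b ^ k)] at hxl
    linarith
  have hxac : x < a * c := by
    rw [hc, ← mul_div_assoc]; exact hxu
  have hMN : M < N := by
    rw [hM, hN, max_lt_iff, lt_min_iff, lt_min_iff]
    refine ⟨⟨by nlinarith, hxac⟩, ⟨hcax, by nlinarith⟩⟩
  have hM0 : 0 < M := lt_max_of_lt_left hx0
  rw [Metric.mem_closure_iff]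
  intro ε hε
  obtain ⟨t, ht⟩ := pow_unbounded_of_one_lt (max ((x + 1) / (N - M)) (1 / ε)) hb
  have ht1 : (x + 1) / (N - M) < b ^ t := lt_of_le_of_lt (le_max_left _ _) ht
  have ht2 : 1 / ε < b ^ t := lt_of_le_of_lt (le_max_right _ _) ht
  set bK : ℝ := b ^ (k + t) with hbK
  set bJ : ℝ := b ^ (j + t) with hbJ
  have hbK0 : 0 < bK := pow_pos hb0 _
  have hbt : b ^ t ≤ bK := by
    rw [hbK, pow_add]
    nlinarith [one_le_pow₀ hb.le (n := k), pow_pos hb0 t]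
  have hgap : x + 1 < (N - M) * bK := by
    rw [div_lt_iff₀ (by linarith : (0:ℝ) < N - M)] at ht1
    nlinarith [pow_pos hb0 t]
  have hcbK : c * bK = bJ := by
    rw [hc, hbK, hbJ, pow_add, pow_add]
    field_simp
  set u0 : ℝ := (M * bK + 1) / x with hu0
  have hu00 : 0 ≤ u0 := by positivity
  set n : ℕ := ⌊u0⌋₊ + 1 with hn
  have hnu : u0 < (n : ℝ) := by
    rw [hn]; push_cast; exact Nat.lt_floor_add_one u0
  have hnu2 : (n : ℝ) ≤ u0 + 1 := by
    rw [hn]; push_cast; exact add_le_add_left (Nat.floor_le hu00) 1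
  have hxn_low : M * bK + 1 < x * n := by
    have := mul_lt_mul_of_pos_left hnu hx0
    rw [hu0, mul_div_cancel₀ _ (ne_of_gt hx0)] at this
    linarith
  have hxn_high : x * n < N * bK := by
    have := mul_le_mul_of_nonneg_left hnu2 hx0.le
    rw [hu0, mul_add, mul_div_cancel₀ _ (ne_of_gt hx0), mul_one] at this
    linarith
  have hxn0 : 0 ≤ x * n := by positivity
  set m : ℕ := ⌊x * n⌋₊ with hm
  have hm1 : (m : ℝ) ≤ x * n := Nat.floor_le hxn0
  have hm2 : x * n < (m : ℝ) + 1 := Nat.lt_floor_add_one _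
  have hn0 : (0:ℝ) < (n : ℝ) := by rw [hn]; push_cast; positivity
  have hMx : x ≤ M := le_max_left _ _
  have hMc : c ≤ M := le_max_right _ _
  have hNx : N ≤ a * x := min_le_left _ _
  have hNc : N ≤ a * c := min_le_right _ _
  clear_value c M N bK bJ u0 n m
  have hnA : (n : ℕ) ∈ {n : ℕ | ∃ k : ℕ, b ^ k ≤ (n : ℝ) ∧ (n : ℝ) < a * b ^ k} := by
    refine ⟨k + t, ?_, ?_⟩
    · rw [← hbK]
      have h1 := mul_le_mul_of_nonneg_right hMx hbK0.le
      have : x * bK < x * n := by linarith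
      exact (lt_of_mul_lt_mul_left this hx0.le).le
    · rw [← hbK]
      have h1 := mul_le_mul_of_nonneg_right hNx hbK0.le
      have : x * n < x * (a * bK) := by rw [← mul_assoc]; linarith
      exact lt_of_mul_lt_mul_left this hx0.le
  have hmA : (m : ℕ) ∈ {n : ℕ | ∃ k : ℕ, b ^ k ≤ (n : ℝ) ∧ (n : ℝ) < a * b ^ k} := by
    refine ⟨j + t, ?_, ?_⟩
    · rw [← hbJ, ← hcbK]
      have h1 := mul_le_mul_of_nonneg_right hMc hbK0.le
      linarith
    · rw [← hbJ, ← hcbK, ← mul_assoc]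
      have h1 := mul_le_mul_of_nonneg_right hNc hbK0.le
      linarith
  refine ⟨(m : ℝ) / (n : ℝ), ⟨m, hmA, n, hnA, rfl⟩, ?_⟩
  rw [Real.dist_eq, abs_of_nonneg (by rw [sub_nonneg, div_le_iff₀ hn0]; exact hm1)]
  have hnbig : 1 / ε < (n : ℝ) := by
    have hbKn : bK ≤ (n:ℝ) := by
      have h1 := mul_le_mul_of_nonneg_right hMx hbK0.le
      have : x * bK < x * n := by linarith
      exact (lt_of_mul_lt_mul_left this hx0.le).le
    linarith
  have hεn : 1 < ε * n := by
    rw [div_lt_iff₀ hε] at hnbig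
    linarith [mul_comm ε (n:ℝ)]
  have hkey : (x - (m:ℝ) / n) * n < ε * n := by
    rw [sub_mul, div_mul_cancel₀ _ (ne_of_gt hn0)]
    linarith
  exact lt_of_mul_lt_mul_right hkey hn0.le

theorem stmt2 (a b : ℝ) (ha : 1 < a) (hab : a ≤ b) (hba : b ≤ a ^ 2) :
    Set.Ici (0 : ℝ) ⊆
      closure (ratioSet {n : ℕ | ∃ k : ℕ, b ^ k ≤ (n : ℝ) ∧ (n : ℝ) < a * b ^ k}) := by
  have key := key a b ha hab
  set A := {n : ℕ | ∃ k : ℕ, b ^ k ≤ (n : ℝ) ∧ (n : ℝ) < a * b ^ k} with hA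
  have hb : (1:ℝ) < b := ha.trans_le hab
  have hb0 : (0:ℝ) < b := by linarith
  have ha0 : (0:ℝ) < a := by linarith
  have key2 : ∀ j k : ℕ, Set.Icc ((b : ℝ) ^ j / (a * b ^ k)) (a * b ^ j / b ^ k) ⊆
      closure (ratioSet A) := by
    intro j k
    have hbk : (0:ℝ) < b ^ k := pow_pos hb0 k
    have hbj : (0:ℝ) < b ^ j := pow_pos hb0 j
    have hlu : (b : ℝ) ^ j / (a * b ^ k) < a * b ^ j / b ^ k := by
      rw [div_lt_div_iff₀ (by positivity) hbk]
      nlinarith [mul_pos hbj hbk]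
    calc Set.Icc ((b : ℝ) ^ j / (a * b ^ k)) (a * b ^ j / b ^ k)
        = closure (Set.Ioo ((b : ℝ) ^ j / (a * b ^ k)) (a * b ^ j / b ^ k)) :=
          (closure_Ioo (ne_of_lt hlu)).symm
      _ ⊆ closure (closure (ratioSet A)) := closure_mono (key j k)
      _ = closure (ratioSet A) := closure_closure
  intro x hx
  rcases eq_or_lt_of_le (Set.mem_Ici.mp hx : (0:ℝ) ≤ x) with h0 | hx0
  · -- x = 0 : limit of 1 / b ^ k
    have hmem : ∀ k : ℕ, (1 : ℝ) / b ^ k ∈ closure (ratioSet A) := by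
      intro k
      apply key2 0 k
      constructor
      · rw [pow_zero]
        apply div_le_div_of_nonneg_left (by norm_num) (pow_pos hb0 k)
        nlinarith [pow_pos hb0 k]
      · rw [pow_zero, mul_one, div_le_div_iff₀ (pow_pos hb0 k) (pow_pos hb0 k)]
        nlinarith [pow_pos hb0 k]
    have htend : Filter.Tendsto (fun k : ℕ => (1:ℝ) / b ^ k) Filter.atTop (nhds 0) := by
      have := tendsto_pow_atTop_nhds_zero_of_lt_one
        (by positivity : (0:ℝ) ≤ 1 / b) (by rw [div_lt_one hb0]; exact hb)
      simpa [div_pow] using this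
    rw [← h0]
    exact isClosed_closure.mem_of_tendsto htend (Filter.Eventually.of_forall hmem)
  · obtain ⟨d, hd1, hd2⟩ := exists_mem_Ico_zpow (mul_pos ha0 hx0) hb
    have hjk : ((d.toNat : ℤ)) - ((-d).toNat : ℤ) = d := by omega
    set j : ℕ := d.toNat with hj
    set k : ℕ := (-d).toNat with hk
    have hbk : (0:ℝ) < b ^ k := pow_pos hb0 k
    have hcast : (b : ℝ) ^ j / b ^ k = b ^ d := by
      rw [← zpow_natCast b j, ← zpow_natCast b k, ← zpow_sub₀ (ne_of_gt hb0), hjk]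
    have hbd : (0:ℝ) < (b:ℝ) ^ d := zpow_pos hb0 d
    apply key2 j k
    constructor
    · have e1 : (b:ℝ) ^ j / (a * b ^ k) = b ^ d / a := by
        rw [← hcast, div_div, mul_comm]
      rw [e1, div_le_iff₀ ha0]
      nlinarith
    · have e2 : a * (b:ℝ) ^ j / b ^ k = a * b ^ d := by
        rw [mul_div_assoc, hcast]
      rw [e2]
      have hb1 : (b:ℝ) ^ (d + 1) = b ^ d * b := zpow_add_one₀ (ne_of_gt hb0) d
      have h2 : a * x < a * (a * b ^ d) := by nlinarith
      exact (lt_of_mul_lt_mul_left h2 ha0.le).le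
end

section
/- Let 1 < a ≤ b be real numbers with a² < b, and let A = ∪_{k≥0} [b^k, a·b^k) ∩ ℕ. Then R(A) is not dense in [0,∞); in fact every quotient of elements of A lies in an interval (b^ℓ/a, a·b^ℓ) for some integer ℓ, and for each integer ℓ the nonempty interval [a·b^ℓ, b^{ℓ+1}/a] contains no element of R(A). -/
theorem stmt3 (a b : ℝ) (ha : 1 < a) (hab : a ≤ b) (hba : a ^ 2 < b) :
    (∀ x ∈ ratioSet {n : ℕ | ∃ k : ℕ, b ^ k ≤ (n : ℝ) ∧ (n : ℝ) < a * b ^ k},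
        ∃ l : ℤ, x ∈ Set.Ioo (b ^ l / a) (a * b ^ l)) ∧
    (∀ l : ℤ, (Set.Icc (a * b ^ l) (b ^ (l + 1) / a)).Nonempty ∧
        ratioSet {n : ℕ | ∃ k : ℕ, b ^ k ≤ (n : ℝ) ∧ (n : ℝ) < a * b ^ k} ∩
          Set.Icc (a * b ^ l) (b ^ (l + 1) / a) = ∅) ∧
    ¬ (Set.Ici (0 : ℝ) ⊆
        closure (ratioSet {n : ℕ | ∃ k : ℕ, b ^ k ≤ (n : ℝ) ∧ (n : ℝ) < a * b ^ k})) := by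
  have ha0 : (0:ℝ) < a := lt_trans one_pos ha
  have hb1 : (1:ℝ) < b := lt_of_lt_of_le ha hab
  have hb0 : (0:ℝ) < b := lt_trans one_pos hb1
  -- part 1
  have part1 : ∀ x ∈ ratioSet {n : ℕ | ∃ k : ℕ, b ^ k ≤ (n : ℝ) ∧ (n : ℝ) < a * b ^ k},
      ∃ l : ℤ, x ∈ Set.Ioo (b ^ l / a) (a * b ^ l) := by
    rintro x ⟨m, ⟨k, hk1, hk2⟩, n, ⟨j, hj1, hj2⟩, rfl⟩
    have hbk : (0:ℝ) < b ^ k := pow_pos hb0 k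
    have hbj : (0:ℝ) < b ^ j := pow_pos hb0 j
    have hn0 : (0:ℝ) < n := lt_of_lt_of_le hbj hj1
    refine ⟨(k:ℤ) - j, ?_, ?_⟩
    · have : (b:ℝ) ^ ((k:ℤ) - j) = b ^ k / b ^ j := by
        rw [zpow_sub₀ (ne_of_gt hb0), zpow_natCast, zpow_natCast]
      rw [this, div_div, div_lt_div_iff₀ (by positivity) hn0]
      nlinarith
    · have : (b:ℝ) ^ ((k:ℤ) - j) = b ^ k / b ^ j := by
        rw [zpow_sub₀ (ne_of_gt hb0), zpow_natCast, zpow_natCast]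
      rw [this, mul_div_assoc', div_lt_div_iff₀ hn0 hbj]
      nlinarith
  refine ⟨part1, ?_, ?_⟩
  · -- part 2
    have part2 : ∀ l : ℤ, (Set.Icc (a * b ^ l) (b ^ (l + 1) / a)).Nonempty ∧
        ratioSet {n : ℕ | ∃ k : ℕ, b ^ k ≤ (n : ℝ) ∧ (n : ℝ) < a * b ^ k} ∩
          Set.Icc (a * b ^ l) (b ^ (l + 1) / a) = ∅ := by
      intro l
      have hbl : (0:ℝ) < b ^ l := zpow_pos hb0 l
      have hle : a * b ^ l ≤ b ^ (l + 1) / a := by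
        rw [le_div_iff₀ ha0, zpow_add_one₀ (ne_of_gt hb0)]
        nlinarith
      constructor
      · exact ⟨a * b ^ l, le_refl _, hle⟩
      · ext x
        simp only [Set.mem_inter_iff, Set.mem_Icc, Set.mem_empty_iff_false, iff_false]
        rintro ⟨hx, hx1, hx2⟩
        obtain ⟨m, hm1, hm2⟩ := part1 x hx
        rcases le_or_gt m l with h | h
        · have : b ^ m ≤ b ^ l := zpow_le_zpow_right₀ (le_of_lt hb1) h
          nlinarith
        · have : b ^ (l + 1) ≤ b ^ m := zpow_le_zpow_right₀ (le_of_lt hb1) h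
          have h1 : b ^ (l + 1) / a ≤ b ^ m / a := by gcongr
          linarith
    exact part2
  · -- part 3
    intro h
    have hlt : a < b / a := by rw [lt_div_iff₀ ha0]; nlinarith
    set x := (a + b / a) / 2 with hx
    have hx1 : a < x := by rw [hx]; linarith
    have hx2 : x < b / a := by rw [hx]; linarith
    have hx0 : x ∈ Set.Ici (0:ℝ) := le_of_lt (lt_trans ha0 hx1)
    have hcl := h hx0
    rw [mem_closure_iff] at hcl
    obtain ⟨y, hy1, hy2⟩ := hcl (Set.Ioo a (b/a)) isOpen_Ioo ⟨hx1, hx2⟩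
    obtain ⟨m, hm1, hm2⟩ := part1 y hy2
    rcases le_or_gt m 0 with h' | h'
    · have : b ^ m ≤ b ^ (0:ℤ) := zpow_le_zpow_right₀ (le_of_lt hb1) h'
      rw [zpow_zero] at this
      have : a * b ^ m ≤ a := by nlinarith
      exact absurd hy1.1 (by linarith)
    · have : b ^ (1:ℤ) ≤ b ^ m := zpow_le_zpow_right₀ (le_of_lt hb1) h'
      rw [zpow_one] at this
      have : b / a ≤ b ^ m / a := by gcongr
      exact absurd hy1.2 (by linarith)
end

section
/- Let 1 < a ≤ b be real numbers and A = ∪_{k≥0} [b^k, a·b^k) ∩ ℕ. Then the lower asymptotic density of A equals (a−1)/(b−1), i.e., liminf_{n→∞} |A ∩ [1,n]|/n = (a−1)/(b−1). -/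
open Filter Finset

set_option maxHeartbeats 1000000 in
theorem stmt4' (a b : ℝ) (ha : 1 < a) (hab : a ≤ b) :
    Filter.liminf (fun n : ℕ => (Nat.card ↥({n : ℕ | ∃ k : ℕ, b ^ k ≤ (n : ℝ) ∧ (n : ℝ) < a * b ^ k} ∩ Set.Icc 1 n) : ℝ) / (n : ℝ)) Filter.atTop =
      (a - 1) / (b - 1) := by
  have hb : 1 < b := lt_of_lt_of_le ha hab
  have hb0 : (0:ℝ) < b := lt_trans one_pos hb
  have hb1 : (0:ℝ) < b - 1 := sub_pos.2 hb
  set c : ℝ := (a - 1) / (b - 1) with hc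
  have hc0 : 0 ≤ c := div_nonneg (by linarith) hb1.le
  have hc1 : c ≤ 1 := (div_le_one hb1).2 (by linarith)
  have hcb : c * (b - 1) = a - 1 := div_mul_cancel₀ _ hb1.ne'
  set A : Set ℕ := {n : ℕ | ∃ k : ℕ, b ^ k ≤ (n : ℝ) ∧ (n : ℝ) < a * b ^ k} with hA
  set f : ℕ → ℝ := fun n => (Nat.card ↥(A ∩ Set.Icc 1 n) : ℝ) / (n : ℝ) with hf
  have hpow_pos : ∀ k : ℕ, (0:ℝ) < b ^ k := fun k => pow_pos hb0 k
  have hpow1 : ∀ k : ℕ, (1:ℝ) ≤ b ^ k := fun k => one_le_pow₀ hb.le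
  set I : ℕ → Finset ℕ := fun k => Finset.Ico ⌈b ^ k⌉₊ ⌈a * b ^ k⌉₊ with hI
  have memI : ∀ k m : ℕ, m ∈ I k ↔ (b ^ k ≤ (m:ℝ) ∧ (m:ℝ) < a * b ^ k) := by
    intro k m
    simp [hI, Finset.mem_Ico, Nat.ceil_le, Nat.lt_ceil]
  have hceil_le : ∀ k, ⌈b ^ k⌉₊ ≤ ⌈a * b ^ k⌉₊ := by
    intro k
    exact Nat.ceil_le_ceil (le_mul_of_one_le_left (hpow_pos k).le ha.le)
  have cardI_le : ∀ k, ((I k).card : ℝ) ≤ (a - 1) * b ^ k + 1 := by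
    intro k
    rw [hI]
    simp only [Nat.card_Ico]
    rw [Nat.cast_sub (hceil_le k)]
    have h1 : (⌈a * b ^ k⌉₊ : ℝ) < a * b ^ k + 1 :=
      Nat.ceil_lt_add_one (by positivity)
    have h2 : b ^ k ≤ (⌈b ^ k⌉₊ : ℝ) := Nat.le_ceil _
    nlinarith
  have cardI_ge : ∀ k, (a - 1) * b ^ k - 1 ≤ ((I k).card : ℝ) := by
    intro k
    rw [hI]
    simp only [Nat.card_Ico]
    rw [Nat.cast_sub (hceil_le k)]
    have h1 : a * b ^ k ≤ (⌈a * b ^ k⌉₊ : ℝ) := Nat.le_ceil _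
    have h2 : (⌈b ^ k⌉₊ : ℝ) < b ^ k + 1 := Nat.ceil_lt_add_one (hpow_pos k).le
    nlinarith
  -- I k fits inside [b^k, b^(k+1))
  have hIsub : ∀ k m : ℕ, m ∈ I k → b ^ k ≤ (m:ℝ) ∧ (m:ℝ) < b ^ (k+1) := by
    intro k m hm
    obtain ⟨h1, h2⟩ := (memI k m).1 hm
    refine ⟨h1, lt_of_lt_of_le h2 ?_⟩
    rw [pow_succ']
    exact mul_le_mul_of_nonneg_right hab (hpow_pos k).le
  have hdisj : ∀ k l : ℕ, k ≠ l → Disjoint (I k) (I l) := by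
    have key : ∀ k l : ℕ, k < l → Disjoint (I k) (I l) := by
      intro k l hkl
      rw [Finset.disjoint_left]
      intro m hmk hml
      obtain ⟨_, h2⟩ := hIsub k m hmk
      obtain ⟨h3, _⟩ := hIsub l m hml
      have : (b:ℝ) ^ (k+1) ≤ b ^ l := pow_le_pow_right₀ hb.le hkl
      linarith
    intro k l hkl
    rcases lt_or_gt_of_ne hkl with h | h
    · exact key k l h
    · exact (key l k h).symm
  -- the key counting identity
  have key : ∀ n K : ℕ, 1 ≤ n → (n:ℝ) < b ^ (K+1) →
      (Nat.card ↥(A ∩ Set.Icc 1 n) : ℝ)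
        = ∑ k ∈ Finset.range (K+1), ((I k ∩ Finset.Icc 1 n).card : ℝ) := by
    intro n K hn hnK
    have hset : A ∩ Set.Icc 1 n
        = ↑((Finset.range (K+1)).biUnion (fun k => I k ∩ Finset.Icc 1 n)) := by
      ext m
      simp only [Set.mem_inter_iff, Set.mem_setOf_eq, Set.mem_Icc, Finset.coe_biUnion,
        Finset.mem_coe, Finset.mem_biUnion, Finset.mem_range, Finset.mem_inter,
        Finset.mem_Icc, Set.mem_iUnion, hA, memI]
      constructor
      · rintro ⟨⟨k, hk1, hk2⟩, hm1, hm2⟩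
        refine ⟨k, ?_, ⟨hk1, hk2⟩, hm1, hm2⟩
        have h1 : (b:ℝ) ^ k ≤ n := le_trans hk1 (by exact_mod_cast hm2)
        have : (b:ℝ) ^ k < b ^ (K+1) := lt_of_le_of_lt h1 hnK
        exact Nat.lt_succ_iff.2 (Nat.lt_succ_iff.1 ((pow_lt_pow_iff_right₀ hb).1 this))
      · rintro ⟨k, _, ⟨hk1, hk2⟩, hm1, hm2⟩
        exact ⟨⟨k, hk1, hk2⟩, hm1, hm2⟩
    rw [hset, Nat.card_coe_set_eq, Set.ncard_coe_finset,
      Finset.card_biUnion fun k _ l _ hkl =>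
        Finset.disjoint_of_subset_left Finset.inter_subset_left
          (Finset.disjoint_of_subset_right Finset.inter_subset_left (hdisj k l hkl))]
    push_cast
    rfl
  -- geometric sums
  have geom : ∀ K : ℕ, ∑ k ∈ Finset.range K, (b:ℝ) ^ k = (b ^ K - 1) / (b - 1) :=
    fun K => geom_sum_eq hb.ne' K
  -- upper bound on counting function
  have count_le : ∀ n K : ℕ, 1 ≤ n → (n:ℝ) < b ^ (K+1) →
      (Nat.card ↥(A ∩ Set.Icc 1 n) : ℝ) ≤ c * b ^ (K+1) + (K+1) := by
    intro n K hn hnK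
    rw [key n K hn hnK]
    have h1 : ∑ k ∈ Finset.range (K+1), ((I k ∩ Finset.Icc 1 n).card : ℝ)
        ≤ ∑ k ∈ Finset.range (K+1), ((a - 1) * b ^ k + 1) := by
      refine Finset.sum_le_sum fun k _ => ?_
      refine le_trans ?_ (cardI_le k)
      exact Nat.cast_le.2 (Finset.card_le_card Finset.inter_subset_left)
    refine le_trans h1 ?_
    rw [Finset.sum_add_distrib, ← Finset.mul_sum, geom]
    simp only [Finset.sum_const, Finset.card_range, nsmul_eq_mul, mul_one]
    have : (a - 1) * ((b ^ (K+1) - 1) / (b - 1)) = c * (b ^ (K+1) - 1) := by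
      rw [hc]; field_simp; try ring
    rw [this]
    push_cast
    nlinarith [hpow_pos (K+1)]
  -- lower bound on counting function
  have count_ge : ∀ n K : ℕ, 1 ≤ n → b ^ K ≤ (n:ℝ) → (n:ℝ) < b ^ (K+1) →
      c * n - ((K:ℝ) + 2) ≤ (Nat.card ↥(A ∩ Set.Icc 1 n) : ℝ) := by
    intro n K hn hKn hnK
    rw [key n K hn hnK, Finset.sum_range_succ]
    have full : ∀ k : ℕ, a * b ^ k ≤ (n:ℝ) + 1 → I k ∩ Finset.Icc 1 n = I k := by
      intro k hk
      refine Finset.inter_eq_left.2 fun m hm => ?_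
      obtain ⟨h1, h2⟩ := (memI k m).1 hm
      have hm1 : 1 ≤ m := by exact_mod_cast le_trans (hpow1 k) h1
      have hm2 : (m:ℝ) < (n:ℝ) + 1 := lt_of_lt_of_le h2 hk
      have : m < n + 1 := by exact_mod_cast hm2
      exact Finset.mem_Icc.2 ⟨hm1, Nat.lt_succ_iff.1 this⟩
    have hlow : ∀ k : ℕ, k < K → (a - 1) * b ^ k - 1 ≤ ((I k ∩ Finset.Icc 1 n).card : ℝ) := by
      intro k hk
      rw [full k ?_]
      · exact cardI_ge k
      · have h1 : a * b ^ k ≤ b ^ (k+1) := by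
          rw [pow_succ']; exact mul_le_mul_of_nonneg_right hab (hpow_pos k).le
        have h2 : (b:ℝ) ^ (k+1) ≤ b ^ K := pow_le_pow_right₀ hb.le hk
        linarith
    have hsum : ∑ k ∈ Finset.range K, ((a - 1) * b ^ k - 1)
        ≤ ∑ k ∈ Finset.range K, ((I k ∩ Finset.Icc 1 n).card : ℝ) :=
      Finset.sum_le_sum fun k hk => hlow k (Finset.mem_range.1 hk)
    have hsum2 : ∑ k ∈ Finset.range K, ((a - 1) * b ^ k - 1)
        = c * (b ^ K - 1) - K := by
      rw [Finset.sum_sub_distrib, ← Finset.mul_sum, geom]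
      simp only [Finset.sum_const, Finset.card_range, nsmul_eq_mul, mul_one]
      rw [hc]; field_simp; try ring
    -- top interval
    rcases le_or_gt (a * b ^ K) (n:ℝ) with htop | htop
    · -- the K-th interval is entirely below n
      have : (a - 1) * b ^ K - 1 ≤ ((I K ∩ Finset.Icc 1 n).card : ℝ) := by
        rw [full K (by linarith)]
        exact cardI_ge K
      have hbK : c * (n:ℝ) ≤ c * b ^ (K+1) := mul_le_mul_of_nonneg_left hnK.le hc0
      have hKe : c * (b ^ K - 1) - K + ((a-1) * b ^ K - 1) = c * b ^ (K+1) - c - (K+1) := by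
        rw [← hcb, pow_succ]; ring
      linarith [hsum, hsum2]
    · -- partial top interval: use Icc ⌈b^K⌉₊ n
      have hceilKn : ⌈b ^ K⌉₊ ≤ n := Nat.ceil_le.2 hKn
      have hJ : Finset.Icc ⌈b ^ K⌉₊ n ⊆ I K ∩ Finset.Icc 1 n := by
        intro m hm
        obtain ⟨h1, h2⟩ := Finset.mem_Icc.1 hm
        have hm1 : b ^ K ≤ (m:ℝ) := le_trans (Nat.le_ceil _) (by exact_mod_cast h1)
        have hm2 : (m:ℝ) ≤ n := by exact_mod_cast h2
        refine Finset.mem_inter.2 ⟨(memI K m).2 ⟨hm1, lt_of_le_of_lt hm2 htop⟩,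
          Finset.mem_Icc.2 ⟨?_, h2⟩⟩
        exact_mod_cast le_trans (hpow1 K) hm1
      have hcard : (n:ℝ) - b ^ K ≤ ((I K ∩ Finset.Icc 1 n).card : ℝ) := by
        have := Finset.card_le_card hJ
        have hc2 : (Finset.Icc ⌈b ^ K⌉₊ n).card = n + 1 - ⌈b ^ K⌉₊ := Nat.card_Icc _ _
        have hcast : ((n + 1 - ⌈b ^ K⌉₊ : ℕ) : ℝ) = (n:ℝ) + 1 - ⌈b ^ K⌉₊ := by
          rw [Nat.cast_sub (le_trans hceilKn (Nat.le_succ n))]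
          push_cast; ring
        have hceil : (⌈b ^ K⌉₊ : ℝ) < b ^ K + 1 := Nat.ceil_lt_add_one (hpow_pos K).le
        calc (n:ℝ) - b ^ K ≤ (n:ℝ) + 1 - ⌈b ^ K⌉₊ := by linarith
          _ = ((Finset.Icc ⌈b ^ K⌉₊ n).card : ℝ) := by rw [hc2, hcast]
          _ ≤ _ := by exact_mod_cast this
      -- combine: total ≥ c(b^K - 1) - K + n - b^K ≥ c n - c - K ≥ c n - (K+2)
      have h3 : (1 - c) * b ^ K ≤ (1 - c) * n :=
        mul_le_mul_of_nonneg_left hKn (by linarith)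
      have h3' : b ^ K - c * b ^ K ≤ (n:ℝ) - c * n := by nlinarith [h3]
      linarith [hsum, hsum2, hcard, h3', hc1]
  -- existence of K(n)
  have exK : ∀ n : ℕ, 1 ≤ n → ∃ K : ℕ, b ^ K ≤ (n:ℝ) ∧ (n:ℝ) < b ^ (K+1) := by
    intro n hn
    have h0 : (b:ℝ) ^ 0 ≤ (n:ℝ) := by
      simpa using (Nat.one_le_cast.2 hn : (1:ℝ) ≤ n)
    obtain ⟨N, hN⟩ := pow_unbounded_of_one_lt (n:ℝ) hb
    by_contra h
    push_neg at h
    have hall : ∀ K : ℕ, b ^ K ≤ (n:ℝ) := by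
      intro K
      induction K with
      | zero => exact h0
      | succ k ih => exact h k ih
    exact absurd (hall N) (not_le.2 hN)
  -- boundedness of f
  have f_nonneg : ∀ n, 0 ≤ f n := fun n => div_nonneg (Nat.cast_nonneg _) (Nat.cast_nonneg _)
  have f_le_one : ∀ n, f n ≤ 1 := by
    intro n
    rcases Nat.eq_zero_or_pos n with h | h
    · simp [hf, h]
    · have hsub : A ∩ Set.Icc 1 n ⊆ Set.Icc 1 n := Set.inter_subset_right
      have hfin : (Set.Icc 1 n).Finite := Set.finite_Icc _ _
      have hle : Nat.card ↥(A ∩ Set.Icc 1 n) ≤ Nat.card ↥(Set.Icc 1 n) := by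
        rw [Nat.card_coe_set_eq, Nat.card_coe_set_eq]
        exact Set.ncard_le_ncard hsub hfin
      have hIcc : Nat.card ↥(Set.Icc 1 n) = n := by
        rw [Nat.card_coe_set_eq, ← Finset.coe_Icc, Set.ncard_coe_finset, Nat.card_Icc]
        omega
      rw [hf]
      have hn0 : (0:ℝ) < n := by exact_mod_cast h
      rw [div_le_one hn0]
      exact_mod_cast hle.trans_eq hIcc
  have hbdd_le : IsBoundedUnder (· ≤ ·) atTop f := isBoundedUnder_of ⟨1, f_le_one⟩
  have hbdd_ge : IsBoundedUnder (· ≥ ·) atTop f := isBoundedUnder_of ⟨0, f_nonneg⟩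
  -- general tendsto helper
  have hgen : ∀ C : ℝ, Tendsto (fun k : ℕ => ((k:ℝ) + C) / b ^ k) atTop (nhds 0) := by
    intro C
    have h1 := tendsto_pow_const_div_const_pow_of_one_lt 1 hb
    have h2 : Tendsto (fun k : ℕ => C * (b⁻¹) ^ k) atTop (nhds 0) := by
      simpa using (tendsto_pow_atTop_nhds_zero_of_lt_one (inv_nonneg.2 hb0.le)
        (inv_lt_one_of_one_lt₀ hb)).const_mul C
    have h3 := h1.add h2
    rw [add_zero] at h3
    refine h3.congr fun k => ?_
    rw [pow_one, inv_pow]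
    field_simp
  -- liminf ≥ c
  have hlower : c ≤ liminf f atTop := by
    refine le_of_forall_pos_le_add fun ε hε => ?_
    have h2 : c - ε ≤ liminf f atTop := by
      refine le_liminf_of_le hbdd_le.isCoboundedUnder_ge ?_
      obtain ⟨K₀, hK₀⟩ := (eventually_atTop.1 (((hgen 2).eventually
        (gt_mem_nhds hε))))
      filter_upwards [eventually_ge_atTop (max 1 ⌈b ^ K₀⌉₊)] with n hn
      have hn1 : 1 ≤ n := le_trans (le_max_left _ _) hn
      have hnK₀ : b ^ K₀ ≤ (n:ℝ) :=
        Nat.ceil_le.1 (le_trans (le_max_right _ _) hn)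
      obtain ⟨K, hK1, hK2⟩ := exK n hn1
      have hKK₀ : K₀ ≤ K := by
        have h : (b:ℝ) ^ K₀ < b ^ (K+1) := lt_of_le_of_lt hnK₀ hK2
        exact Nat.lt_succ_iff.1 ((pow_lt_pow_iff_right₀ hb).1 h)
      have hKb : ((K:ℝ) + 2) / b ^ K < ε := hK₀ K hKK₀
      have hbKpos := hpow_pos K
      have hKn : ((K:ℝ) + 2) ≤ ε * n := by
        have h4 : ((K:ℝ) + 2) < ε * b ^ K := (div_lt_iff₀ hbKpos).1 hKb
        have h5 : ε * b ^ K ≤ ε * n := mul_le_mul_of_nonneg_left hK1 hε.le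
        linarith
      have hcount := count_ge n K hn1 hK1 hK2
      have hn0 : (0:ℝ) < n := by exact_mod_cast hn1
      rw [hf]
      rw [le_div_iff₀ hn0]
      have hexp : (c - ε) * (n:ℝ) = c * n - ε * n := by ring
      linarith [hcount, hKn, hexp]
    linarith
  -- liminf ≤ c
  have hupper : liminf f atTop ≤ c := by
    refine le_of_forall_pos_le_add fun ε hε => ?_
    refine liminf_le_of_frequently_le ?_ hbdd_ge
    rw [frequently_atTop]
    intro M
    -- choose K large with several properties
    have hev1 : ∀ᶠ K : ℕ in atTop, ((K:ℝ) + (2 + c + ε)) / b ^ K < ε :=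
      (hgen (2 + c + ε)).eventually (gt_mem_nhds hε)
    have hev2 : ∀ᶠ K : ℕ in atTop, ((M:ℝ) + 2) < b ^ (K+1) :=
      (tendsto_pow_atTop_atTop_of_one_lt hb).comp (tendsto_add_atTop_nat 1)
        |>.eventually_gt_atTop _
    obtain ⟨K, hK1, hK2⟩ := (hev1.and hev2).exists
    set n : ℕ := ⌈b ^ (K+1)⌉₊ - 1 with hn
    have hbb : (2:ℝ) ≤ b ^ (K+1) := by
      have : (0:ℝ) ≤ M := Nat.cast_nonneg M
      linarith
    have hceil2 : 2 ≤ ⌈b ^ (K+1)⌉₊ := by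
      have h := le_trans hbb (Nat.le_ceil (b ^ (K+1)))
      exact_mod_cast h
    have hncast : (n:ℝ) = (⌈b ^ (K+1)⌉₊ : ℝ) - 1 := by
      rw [hn, Nat.cast_sub (le_trans (by norm_num) hceil2)]
      norm_num
    have hnge : b ^ (K+1) - 1 ≤ (n:ℝ) := by
      rw [hncast]
      have := Nat.le_ceil (b ^ (K+1))
      linarith
    have hnlt : (n:ℝ) < b ^ (K+1) := by
      rw [hncast]
      have := Nat.ceil_lt_add_one (le_trans (by norm_num : (0:ℝ) ≤ 2) hbb)
      linarith
    have hn1 : 1 ≤ n := by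
      rw [hn]; omega
    have hnM : M ≤ n := by
      have : (M:ℝ) ≤ n := by linarith
      exact_mod_cast this
    refine ⟨n, hnM, ?_⟩
    have hcount := count_le n K hn1 hnlt
    have hn0 : (0:ℝ) < n := by exact_mod_cast hn1
    rw [hf, div_le_iff₀ hn0]
    -- need: count ≤ (c + ε) n, i.e. c b^{K+1} + K+1 ≤ (c+ε)(b^{K+1}-1) ⟸ K+1+c+ε ≤ ε b^{K+1}
    have hKb : ((K:ℝ) + (2 + c + ε)) < ε * b ^ K := (div_lt_iff₀ (hpow_pos K)).1 hK1
    have hmono : ε * b ^ K ≤ ε * b ^ (K+1) :=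
      mul_le_mul_of_nonneg_left (pow_le_pow_right₀ hb.le (Nat.le_succ K)) hε.le
    have h6 : c * (n:ℝ) ≤ c * b ^ (K+1) := mul_le_mul_of_nonneg_left hnlt.le hc0
    have h7 : ε * b ^ (K+1) - ε ≤ ε * n := by nlinarith [mul_le_mul_of_nonneg_left hnge hε.le]
    have h8 : c * b ^ (K+1) - c ≤ c * n := by nlinarith [mul_le_mul_of_nonneg_left hnge hc0]
    have hexp : (c + ε) * (n:ℝ) = c * n + ε * n := by ring
    linarith [hcount, hKb, hmono, h7, h8, hexp]
  linarith [le_antisymm hupper hlower]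


theorem stmt4 (a b : ℝ) (ha : 1 < a) (hab : a ≤ b) :
    lowerDensity {n : ℕ | ∃ k : ℕ, b ^ k ≤ (n : ℝ) ∧ (n : ℝ) < a * b ^ k} =
      (a - 1) / (b - 1) := by
  unfold lowerDensity
  exact stmt4' a b ha hab
end

section
/- If A ⊆ ℕ has lower asymptotic density d(A) ≥ 1/2, then R(A) = {a/a' : a, a' ∈ A} is dense in [0,∞). -/
open Filter


open Classical in
noncomputable def cntA (A : Set ℕ) (n : ℕ) : Finset ℕ :=
  (Finset.Icc 1 n).filter (fun m => m ∈ A)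

lemma mem_cntA {A : Set ℕ} {n a : ℕ} : a ∈ cntA A n ↔ a ∈ A ∧ 1 ≤ a ∧ a ≤ n := by
  classical
  simp only [cntA, Finset.mem_filter, Finset.mem_Icc]
  tauto

lemma cntA_spec (A : Set ℕ) (n : ℕ) :
    Nat.card ↥(A ∩ Set.Icc 1 n) = (cntA A n).card := by
  classical
  have h : A ∩ Set.Icc 1 n = ↑(cntA A n) := by
    ext x
    simp only [Set.mem_inter_iff, Set.mem_Icc, Finset.coe_sort_coe, Finset.mem_coe, mem_cntA]
  rw [h, Nat.card_coe_set_eq, Set.ncard_coe_finset]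

lemma cell_disj (u : ℕ) {a b : ℕ} (h : a ≠ b) :
    Disjoint (Finset.Ico (u*(a-1)) (u*a)) (Finset.Ico (u*(b-1)) (u*b)) := by
  rcases lt_or_gt_of_ne h with hlt | hlt
  · refine Finset.disjoint_left.mpr ?_
    intro k hk1 hk2
    simp only [Finset.mem_Ico] at hk1 hk2
    have : u*a ≤ u*(b-1) := Nat.mul_le_mul_left u (by omega)
    omega
  · refine Finset.disjoint_left.mpr ?_
    intro k hk1 hk2
    simp only [Finset.mem_Ico] at hk1 hk2
    have : u*b ≤ u*(a-1) := Nat.mul_le_mul_left u (by omega)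
    omega

lemma cell_card (u : ℕ) {a : ℕ} (ha : 1 ≤ a) :
    (Finset.Ico (u*(a-1)) (u*a)).card = u := by
  obtain ⟨a', rfl⟩ : ∃ a', a = a' + 1 := ⟨a - 1, by omega⟩
  rw [Nat.card_Ico]
  simp only [Nat.add_sub_cancel, Nat.mul_succ]
  omega

lemma star (A : Set ℕ) {u v A₀ : ℕ} (hu : 1 ≤ u) (hv : 1 ≤ v) {D : ℝ} (hD : 1 < D)
    (hA₀ : ∀ a : ℕ, A₀ ≤ a → (a : ℝ) ≤ D * ((a : ℝ) - 1))
    (hforbid : ∀ a ∈ A, ∀ b ∈ A,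
      ¬((u : ℝ) * a < D * ((v : ℝ) * b) ∧ (v : ℝ) * b < D * ((u : ℝ) * a)))
    (n : ℕ) :
    u * (cntA A n).card + v * (cntA A (u*n/v)).card ≤ u*n + (u+v)*A₀ := by
  classical
  set m := u*n/v with hm
  set S₁ := (cntA A n).filter (fun a => A₀ ≤ a) with hS₁
  set S₂ := (cntA A m).filter (fun a => A₀ ≤ a) with hS₂
  set B₁ := S₁.biUnion (fun a => Finset.Ico (u*(a-1)) (u*a)) with hB₁
  set B₂ := S₂.biUnion (fun b => Finset.Ico (v*(b-1)) (v*b)) with hB₂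
  have hDpos : (0:ℝ) < D := lt_trans one_pos hD
  have memS₁ : ∀ a ∈ S₁, a ∈ A ∧ 1 ≤ a ∧ a ≤ n ∧ A₀ ≤ a := by
    intro a ha
    rw [hS₁, Finset.mem_filter, mem_cntA] at ha
    tauto
  have memS₂ : ∀ a ∈ S₂, a ∈ A ∧ 1 ≤ a ∧ a ≤ m ∧ A₀ ≤ a := by
    intro a ha
    rw [hS₂, Finset.mem_filter, mem_cntA] at ha
    tauto
  have cardB₁ : B₁.card = u * S₁.card := by
    rw [hB₁, Finset.card_biUnion (fun a _ b _ hab => cell_disj u hab)]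
    rw [Finset.sum_congr rfl (fun a ha => cell_card u (memS₁ a ha).2.1)]
    rw [Finset.sum_const, smul_eq_mul, mul_comm]
  have cardB₂ : B₂.card = v * S₂.card := by
    rw [hB₂, Finset.card_biUnion (fun a _ b _ hab => cell_disj v hab)]
    rw [Finset.sum_congr rfl (fun a ha => cell_card v (memS₂ a ha).2.1)]
    rw [Finset.sum_const, smul_eq_mul, mul_comm]
  have hB₁sub : B₁ ⊆ Finset.range (u*n) := by
    intro k hk
    rw [hB₁, Finset.mem_biUnion] at hk
    obtain ⟨a, ha, hka⟩ := hk
    rw [Finset.mem_Ico] at hka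
    rw [Finset.mem_range]
    exact lt_of_lt_of_le hka.2 (Nat.mul_le_mul_left u (memS₁ a ha).2.2.1)
  have hB₂sub : B₂ ⊆ Finset.range (u*n) := by
    intro k hk
    rw [hB₂, Finset.mem_biUnion] at hk
    obtain ⟨b, hb, hkb⟩ := hk
    rw [Finset.mem_Ico] at hkb
    rw [Finset.mem_range]
    have h1 : v*b ≤ v*m := Nat.mul_le_mul_left v (memS₂ b hb).2.2.1
    have h2 : v*m ≤ u*n := by
      rw [hm, mul_comm]
      exact Nat.div_mul_le_self (u*n) v
    omega
  -- lower bound on a cell: w * a ≤ D * k for k in the cell of a at scale w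
  have cellbound : ∀ (w a k : ℕ), 1 ≤ a → A₀ ≤ a → w*(a-1) ≤ k →
      (w : ℝ) * a ≤ D * k := by
    intro w a k ha1 hAa hk
    have h1 : (w:ℝ) * ((a:ℝ) - 1) ≤ (k:ℝ) := by
      have h : ((w*(a-1) : ℕ) : ℝ) ≤ (k : ℝ) := Nat.cast_le.mpr hk
      rwa [Nat.cast_mul, Nat.cast_sub ha1, Nat.cast_one] at h
    calc (w:ℝ)*a ≤ (w:ℝ)*(D*((a:ℝ)-1)) :=
          mul_le_mul_of_nonneg_left (hA₀ a hAa) (Nat.cast_nonneg w)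
      _ = D * ((w:ℝ)*((a:ℝ)-1)) := by ring
      _ ≤ D * k := mul_le_mul_of_nonneg_left h1 hDpos.le
  have hdisj : Disjoint B₁ B₂ := by
    rw [Finset.disjoint_left]
    intro k hk1 hk2
    rw [hB₁, Finset.mem_biUnion] at hk1
    rw [hB₂, Finset.mem_biUnion] at hk2
    obtain ⟨a, ha, hka⟩ := hk1
    obtain ⟨b, hb, hkb⟩ := hk2
    rw [Finset.mem_Ico] at hka hkb
    obtain ⟨haA, ha1, -, haA₀⟩ := memS₁ a ha
    obtain ⟨hbA, hb1, -, hbA₀⟩ := memS₂ b hb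
    have r1 : (u:ℝ) * a ≤ D * k := cellbound u a k ha1 haA₀ hka.1
    have r2 : (v:ℝ) * b ≤ D * k := cellbound v b k hb1 hbA₀ hkb.1
    have s1 : (k:ℝ) < (u:ℝ) * a := by exact_mod_cast hka.2
    have s2 : (k:ℝ) < (v:ℝ) * b := by exact_mod_cast hkb.2
    refine hforbid a haA b hbA ⟨?_, ?_⟩
    · exact lt_of_le_of_lt r1 (by exact mul_lt_mul_of_pos_left s2 hDpos)
    · exact lt_of_le_of_lt r2 (by exact mul_lt_mul_of_pos_left s1 hDpos)
  have total : u * S₁.card + v * S₂.card ≤ u * n := by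
    have h1 : (B₁ ∪ B₂).card ≤ (Finset.range (u*n)).card :=
      Finset.card_le_card (Finset.union_subset hB₁sub hB₂sub)
    rw [Finset.card_union_of_disjoint hdisj, Finset.card_range, cardB₁, cardB₂] at h1
    exact h1
  have hc₁ : (cntA A n).card ≤ S₁.card + A₀ := by
    have hsub : cntA A n ⊆ S₁ ∪ Finset.range A₀ := by
      intro a ha
      rcases le_or_gt A₀ a with h | h
      · exact Finset.mem_union_left _ (by rw [hS₁, Finset.mem_filter]; exact ⟨ha, h⟩)
      · exact Finset.mem_union_right _ (Finset.mem_range.mpr h)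
    calc (cntA A n).card ≤ (S₁ ∪ Finset.range A₀).card := Finset.card_le_card hsub
      _ ≤ S₁.card + (Finset.range A₀).card := Finset.card_union_le _ _
      _ = S₁.card + A₀ := by rw [Finset.card_range]
  have hc₂ : (cntA A m).card ≤ S₂.card + A₀ := by
    have hsub : cntA A m ⊆ S₂ ∪ Finset.range A₀ := by
      intro a ha
      rcases le_or_gt A₀ a with h | h
      · exact Finset.mem_union_left _ (by rw [hS₂, Finset.mem_filter]; exact ⟨ha, h⟩)
      · exact Finset.mem_union_right _ (Finset.mem_range.mpr h)
    calc (cntA A m).card ≤ (S₂ ∪ Finset.range A₀).card := Finset.card_le_card hsub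
      _ ≤ S₂.card + (Finset.range A₀).card := Finset.card_union_le _ _
      _ = S₂.card + A₀ := by rw [Finset.card_range]
  have e1 : u * (cntA A n).card ≤ u * S₁.card + u * A₀ := by
    calc u * (cntA A n).card ≤ u * (S₁.card + A₀) := Nat.mul_le_mul_left u hc₁
      _ = u * S₁.card + u * A₀ := by ring
  have e2 : v * (cntA A m).card ≤ v * S₂.card + v * A₀ := by
    calc v * (cntA A m).card ≤ v * (S₂.card + A₀) := Nat.mul_le_mul_left v hc₂
      _ = v * S₂.card + v * A₀ := by ring
  calc u * (cntA A n).card + v * (cntA A m).card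
      ≤ (u * S₁.card + v * S₂.card) + (u * A₀ + v * A₀) := by omega
    _ ≤ u * n + (u + v) * A₀ := by
        have := total
        have h : u * A₀ + v * A₀ = (u+v)*A₀ := by ring
        omega

lemma density_lb (A : Set ℕ) (hd : (1 : ℝ) / 2 ≤ lowerDensity A) :
    ∀ ε : ℝ, 0 < ε → ∃ N : ℕ, 1 ≤ N ∧ ∀ n, N ≤ n → (1/2 - ε) * n ≤ ((cntA A n).card : ℝ) := by
  intro ε hε
  have hliminf : lowerDensity A
      = liminf (fun n : ℕ => ((cntA A n).card : ℝ) / n) atTop := by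
    unfold lowerDensity
    congr 1
    funext n
    rw [cntA_spec]
  have hb : (1:ℝ)/2 - ε < liminf (fun n : ℕ => ((cntA A n).card : ℝ) / n) atTop := by
    rw [← hliminf]; linarith
  have hbdd : IsBoundedUnder (· ≥ ·) atTop (fun n : ℕ => ((cntA A n).card : ℝ) / n) := by
    refine ⟨0, ?_⟩
    simp only [eventually_map, eventually_atTop]
    exact ⟨0, fun n _ => by positivity⟩
  have hev := Filter.eventually_lt_of_lt_liminf hb hbdd
  rw [eventually_atTop] at hev
  obtain ⟨N₀, hN₀⟩ := hev
  refine ⟨max N₀ 1, le_max_right _ _, fun n hn => ?_⟩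
  have h := hN₀ n (le_trans (le_max_left _ _) hn)
  have hn1 : 1 ≤ n := le_trans (le_max_right _ _) hn
  have hnpos : (0:ℝ) < n := by exact_mod_cast hn1
  rw [lt_div_iff₀ hnpos] at h
  exact h.le

lemma A_unbounded (A : Set ℕ) (hd : (1 : ℝ) / 2 ≤ lowerDensity A) :
    ∀ B : ℕ, ∃ a ∈ A, B ≤ a := by
  intro B
  by_contra hcon
  push_neg at hcon
  obtain ⟨N, hN1, hN⟩ := density_lb A hd (1/4) (by norm_num)
  set n := max N (8*(B+1)) with hn
  have h1 : (1/2 - 1/4 : ℝ) * n ≤ ((cntA A n).card : ℝ) := hN n (le_max_left _ _)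
  have h2 : (cntA A n).card ≤ B := by
    have hsub : cntA A n ⊆ Finset.range B := by
      intro a ha
      rw [mem_cntA] at ha
      exact Finset.mem_range.mpr (hcon a ha.1)
    calc (cntA A n).card ≤ (Finset.range B).card := Finset.card_le_card hsub
      _ = B := Finset.card_range B
  have h3 : (8*(B+1) : ℕ) ≤ n := le_max_right _ _
  have h4 : ((8*(B+1) : ℕ) : ℝ) ≤ (n : ℝ) := Nat.cast_le.mpr h3
  have h5 : ((cntA A n).card : ℝ) ≤ B := Nat.cast_le.mpr h2
  push_cast at h4
  linarith

set_option maxHeartbeats 1000000 in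
lemma ratio_dense_aux (A : Set ℕ) (hA : 0 ∉ A) (hd : (1 : ℝ) / 2 ≤ lowerDensity A)
    {p q : ℝ} (hp : 0 < p) (hpq : p < q)
    (hmiss : ∀ r ∈ ratioSet A, r ≤ p ∨ q ≤ r) : False := by
  classical
  have hqpos : 0 < q := hp.trans hpq
  obtain ⟨r₁, hpr₁, hr₁q⟩ := exists_between hpq
  obtain ⟨r₃, hr₁₃, hr₃q⟩ := exists_between hr₁q
  obtain ⟨ρ, hρ₁, hρ₃⟩ := exists_rat_btwn hr₁₃
  have hr₁pos : 0 < r₁ := hp.trans hpr₁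
  have hρpos : (0:ℝ) < (ρ:ℝ) := hr₁pos.trans hρ₁
  have hρratpos : 0 < ρ := by exact_mod_cast hρpos
  set u := ρ.num.toNat with hu_def
  set v := ρ.den with hv_def
  have hv : 1 ≤ v := ρ.pos
  have hnum : 0 < ρ.num := Rat.num_pos.mpr hρratpos
  have hu : 1 ≤ u := by omega
  have hvpos' : (0:ℝ) < v := by
    have h0 : (0:ℕ) < v := hv
    exact_mod_cast h0
  have hupos : (0:ℝ) < u := by
    have h0 : (0:ℕ) < u := hu
    exact_mod_cast h0
  have hint : (u:ℤ) = ρ.num := Int.toNat_of_nonneg hnum.le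
  have hureal : (u:ℝ) = ((ρ.num : ℤ):ℝ) := by exact_mod_cast hint
  have huv : (u:ℝ) = (ρ:ℝ) * v := by
    rw [hureal, Rat.cast_def]
    have hden : ((ρ.den:ℕ):ℝ) ≠ 0 := by positivity
    field_simp [hv_def]
    rw [hv_def]
  set D := min ((ρ:ℝ)/r₁) (r₃/(ρ:ℝ)) with hD_def
  have hD : 1 < D := lt_min ((one_lt_div hr₁pos).mpr hρ₁) ((one_lt_div hρpos).mpr hρ₃)
  have hDpos : (0:ℝ) < D := lt_trans one_pos hD
  have hDr₁ : D * r₁ ≤ (ρ:ℝ) := (le_div_iff₀ hr₁pos).mp (min_le_left _ _)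
  have hDr₃ : D * (ρ:ℝ) ≤ r₃ := (le_div_iff₀ hρpos).mp (min_le_right _ _)
  set A₀ := ⌈D/(D-1)⌉₊ with hA₀_def
  have hA₀ : ∀ a : ℕ, A₀ ≤ a → (a : ℝ) ≤ D * ((a : ℝ) - 1) := by
    intro a ha
    have h1 : D/(D-1) ≤ (a:ℝ) := Nat.ceil_le.mp ha
    have hD1 : (0:ℝ) < D - 1 := by linarith only [hD]
    rw [div_le_iff₀ hD1] at h1
    linarith only [h1]
  have hforbid : ∀ a ∈ A, ∀ b ∈ A,
      ¬((u : ℝ) * a < D * ((v : ℝ) * b) ∧ (v : ℝ) * b < D * ((u : ℝ) * a)) := by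
    rintro a haA b hbA ⟨h1, h2⟩
    have ha1 : 1 ≤ a := Nat.one_le_iff_ne_zero.mpr (fun h => hA (h ▸ haA))
    have hapos : (0:ℝ) < a := by exact_mod_cast ha1
    have hbr : ((b:ℝ)/a) ∈ ratioSet A := ⟨b, hbA, a, haA, rfl⟩
    have key1 : r₁ * (a:ℝ) < b := by
      have e0 : (v:ℝ)*(D*r₁) ≤ (v:ℝ)*(ρ:ℝ) := mul_le_mul_of_nonneg_left hDr₁ hvpos'.le
      have e1 : (v:ℝ) * (D * r₁) ≤ (u:ℝ) := by rw [huv]; linarith only [e0]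
      have e2 : (v:ℝ)*(D*r₁)*a ≤ (u:ℝ)*a := mul_le_mul_of_nonneg_right e1 hapos.le
      have e3 : (v:ℝ)*(D*r₁)*a < D*((v:ℝ)*b) := lt_of_le_of_lt e2 h1
      have e4 : (D*(v:ℝ))*(r₁*a) < (D*(v:ℝ))*b := by linarith only [e3]
      exact lt_of_mul_lt_mul_left e4 (mul_pos hDpos hvpos').le
    have key2 : (b:ℝ) < r₃ * a := by
      have e0 : (D*(ρ:ℝ))*v ≤ r₃*(v:ℝ) := mul_le_mul_of_nonneg_right hDr₃ hvpos'.le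
      have e1 : D*(u:ℝ) ≤ (v:ℝ)*r₃ := by rw [huv]; linarith only [e0]
      have h5 := mul_le_mul_of_nonneg_right e1 hapos.le
      have e2 : D*((u:ℝ)*a) ≤ (v:ℝ)*r₃*a := by linarith only [h5]
      have e3 : (v:ℝ)*b < (v:ℝ)*r₃*a := lt_of_lt_of_le h2 e2
      have e4 : (v:ℝ)*b < (v:ℝ)*(r₃*a) := by linarith only [e3]
      exact lt_of_mul_lt_mul_left e4 hvpos'.le
    rcases hmiss _ hbr with h | h
    · rw [div_le_iff₀ hapos] at h
      have hpa : p*(a:ℝ) < r₁*a := mul_lt_mul_of_pos_right hpr₁ hapos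
      linarith only [key1, hpa, h]
    · rw [le_div_iff₀ hapos] at h
      have hqa : r₃*(a:ℝ) < q*a := mul_lt_mul_of_pos_right hr₃q hapos
      linarith only [key2, hqa, h]
  -- choose ε and the large element a
  set ε := (q-p)/(4*(p+q)) with hεdef
  have hεpos : 0 < ε := by
    rw [hεdef]
    have h1 : 0 < p + q := by linarith only [hp, hqpos]
    have h2 : 0 < q - p := by linarith only [hpq]
    positivity
  have hεle : ε ≤ 1/4 := by
    rw [hεdef, div_le_iff₀ (by positivity : (0:ℝ) < 4*(p+q))]
    linarith only [hp]
  have hhalf : (0:ℝ) ≤ 1/2 - ε := by linarith only [hεle]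
  obtain ⟨N₁, hN₁1, hN₁⟩ := density_lb A hd ε hεpos
  set E₀ := (((u:ℝ)+v)*A₀ + v)/u with hE₀def
  have hE₀nonneg : 0 ≤ E₀ := by positivity
  set R := max (((N₁:ℝ)+1)/q) (max ((((v*N₁:ℕ):ℝ)+1)/p) ((4*(E₀+1))/(q-p) + 1)) with hRdef
  obtain ⟨a, haA, haB⟩ := A_unbounded A hd (⌈R⌉₊ + 1)
  have haR : R ≤ (a:ℝ) := by
    have h1 : R ≤ (⌈R⌉₊ : ℝ) := Nat.le_ceil R
    have h2 : ((⌈R⌉₊ + 1 : ℕ):ℝ) ≤ a := Nat.cast_le.mpr haB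
    push_cast at h2
    linarith only [h1, h2]
  have ha1 : 1 ≤ a := Nat.one_le_iff_ne_zero.mpr (fun h => hA (h ▸ haA))
  have hapos : (0:ℝ) < a := by exact_mod_cast ha1
  have hb1 : (N₁:ℝ) + 1 ≤ q*a := by
    have h1 : ((N₁:ℝ)+1)/q ≤ (a:ℝ) := le_trans (le_max_left _ _) haR
    rw [div_le_iff₀ hqpos] at h1
    linarith only [h1]
  have hb2 : ((v*N₁:ℕ):ℝ) + 1 ≤ p*a := by
    have h1 : (((v*N₁:ℕ):ℝ)+1)/p ≤ (a:ℝ) :=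
      le_trans (le_trans (le_max_left _ _) (le_max_right (((N₁:ℝ)+1)/q) _)) haR
    rw [div_le_iff₀ hp] at h1
    linarith only [h1]
  have hb3 : 4*(E₀+1) < (q-p)*a := by
    have h1 : (4*(E₀+1))/(q-p) + 1 ≤ (a:ℝ) :=
      le_trans (le_trans (le_max_right _ _) (le_max_right (((N₁:ℝ)+1)/q) _)) haR
    have hqp : (0:ℝ) < q - p := by linarith only [hpq]
    have h2 : (4*(E₀+1))/(q-p) < (a:ℝ) := by linarith only [h1]
    rw [div_lt_iff₀ hqp] at h2
    linarith only [h2]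
  set k := ⌊p*(a:ℝ)⌋₊ with hkdef
  set l := ⌈q*(a:ℝ)⌉₊ - 1 with hldef
  have hqa_pos : 0 < q*(a:ℝ) := by positivity
  have hceil1 : 1 ≤ ⌈q*(a:ℝ)⌉₊ := Nat.ceil_pos.mpr hqa_pos
  have hlcast : (l:ℝ) = (⌈q*(a:ℝ)⌉₊ : ℝ) - 1 := by
    rw [hldef, Nat.cast_sub hceil1, Nat.cast_one]
  have hl_ge : q*(a:ℝ) - 1 ≤ l := by
    rw [hlcast]
    linarith only [Nat.le_ceil (q*(a:ℝ))]
  have hl_lt : (l:ℝ) < q*a := by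
    rw [hlcast]
    linarith only [Nat.ceil_lt_add_one (le_of_lt hqa_pos)]
  have hk_le : (k:ℝ) ≤ p*a := Nat.floor_le (by positivity)
  have hk_gt : p*(a:ℝ) - 1 < k := by
    linarith only [Nat.lt_floor_add_one (p*(a:ℝ))]
  have hole : cntA A l ⊆ cntA A k := by
    intro b hb
    rw [mem_cntA] at hb ⊢
    obtain ⟨hbA, hb1', hbl⟩ := hb
    refine ⟨hbA, hb1', ?_⟩
    have hbr : ((b:ℝ)/a) ∈ ratioSet A := ⟨b, hbA, a, haA, rfl⟩
    rcases hmiss _ hbr with h | h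
    · rw [div_le_iff₀ hapos] at h
      exact Nat.le_floor h
    · exfalso
      rw [le_div_iff₀ hapos] at h
      have hbl' : (b:ℝ) ≤ l := Nat.cast_le.mpr hbl
      linarith only [h, hbl', hl_lt]
  have hlN₁ : N₁ ≤ l := by
    have h1 : (N₁:ℝ) ≤ l := by linarith only [hb1, hl_ge]
    exact_mod_cast h1
  have hkvN₁ : v*N₁ ≤ k := by
    have h1 : ((v*N₁:ℕ):ℝ) < k := by linarith only [hb2, hk_gt]
    exact_mod_cast h1.le
  set m := u*k/v with hmdef
  have hmN₁ : N₁ ≤ m := by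
    have h1 : u*(v*N₁) ≤ u*k := Nat.mul_le_mul_left u hkvN₁
    have h2 : u*(v*N₁)/v ≤ u*k/v := Nat.div_le_div_right h1
    have h3 : u*(v*N₁)/v = u*N₁ := by
      rw [show u*(v*N₁) = (u*N₁)*v by ring, Nat.mul_div_cancel _ hv]
    rw [h3] at h2
    calc N₁ ≤ u*N₁ := Nat.le_mul_of_pos_left N₁ hu
      _ ≤ m := h2
  have hstar := star A hu hv hD hA₀ hforbid k
  have hdl : (1/2 - ε)*(l:ℝ) ≤ ((cntA A l).card : ℝ) := hN₁ l hlN₁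
  have hdm : (1/2 - ε)*(m:ℝ) ≤ ((cntA A m).card : ℝ) := hN₁ m hmN₁
  have hvm : (u:ℝ)*k - v ≤ (v:ℝ)*m := by
    have h1 : v*m + (u*k)%v = u*k := Nat.div_add_mod (u*k) v
    have h2 : (u*k) % v < v := Nat.mod_lt _ hv
    have hc : (v:ℝ)*m + (((u*k)%v : ℕ):ℝ) = (u:ℝ)*k := by exact_mod_cast h1
    have hc2 : (((u*k)%v : ℕ):ℝ) < v := by exact_mod_cast h2
    linarith only [hc, hc2]
  set c1 := ((cntA A k).card : ℝ) with hc1def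
  set c2 := ((cntA A m).card : ℝ) with hc2def
  have hcast : (u:ℝ)*c1 + (v:ℝ)*c2 ≤ (u:ℝ)*k + ((u:ℝ)+(v:ℝ))*(A₀:ℝ) := by
    rw [hc1def, hc2def]
    exact_mod_cast hstar
  have huE : (u:ℝ)*E₀ = ((u:ℝ)+v)*A₀ + v := by
    rw [hE₀def]
    field_simp
  have hchain : (u:ℝ)*c1 ≤ (1/2+ε)*((u:ℝ)*k) + (u:ℝ)*E₀ := by
    have s2 : (1/2-ε)*((v:ℝ)*m) ≤ (v:ℝ)*c2 := by
      have s1 : (v:ℝ)*((1/2-ε)*m) ≤ (v:ℝ)*c2 := mul_le_mul_of_nonneg_left hdm hvpos'.le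
      linarith only [s1]
    have s3 : (1/2-ε)*((u:ℝ)*k - v) ≤ (1/2-ε)*((v:ℝ)*m) := mul_le_mul_of_nonneg_left hvm hhalf
    have s4 : (1/2-ε)*(v:ℝ) ≤ (v:ℝ) := by
      have s5 : 0 ≤ ε*(v:ℝ) := mul_nonneg hεpos.le hvpos'.le
      linarith only [s5, hvpos'.le]
    rw [huE]
    linarith only [hcast, s2, s3, s4]
  have hck : c1 ≤ (1/2+ε)*(k:ℝ) + E₀ := by
    have hrw : (1/2+ε)*((u:ℝ)*k) + (u:ℝ)*E₀ = (u:ℝ)*((1/2+ε)*k + E₀) := by ring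
    rw [hrw] at hchain
    exact le_of_mul_le_mul_left hchain hupos
  have final1 : (1/2-ε)*(q*(a:ℝ)-1) ≤ (1/2+ε)*(p*(a:ℝ)) + E₀ := by
    have t1 : (1/2-ε)*(q*(a:ℝ)-1) ≤ (1/2-ε)*(l:ℝ) := mul_le_mul_of_nonneg_left hl_ge hhalf
    have t2 : ((cntA A l).card:ℝ) ≤ c1 := by
      rw [hc1def]
      exact_mod_cast Finset.card_le_card hole
    have t3 : (1/2+ε)*(k:ℝ) ≤ (1/2+ε)*(p*a) :=
      mul_le_mul_of_nonneg_left hk_le (by linarith only [hεpos])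
    linarith only [t1, t2, t3, hdl, hck]
  have hid2 : ε*(p+q)*(a:ℝ) = (q-p)/4*(a:ℝ) := by
    rw [hεdef]
    field_simp
  have final2 : (a:ℝ)*(q-p)/4 ≤ E₀ + 1 := by
    linarith only [final1, hid2, hεpos]
  linarith only [final2, hb3]

theorem stmt6 (A : Set ℕ) (hA : 0 ∉ A) (hd : (1 : ℝ) / 2 ≤ lowerDensity A) :
    Set.Ici (0 : ℝ) ⊆ closure (ratioSet A) := by
  intro x hx
  by_contra hxcl
  rw [Metric.mem_closure_iff] at hxcl
  push_neg at hxcl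
  obtain ⟨η, hη, hfar⟩ := hxcl
  rcases (Set.mem_Ici.mp hx).eq_or_lt with h0 | hpos
  · -- x = 0 : small ratios exist since A is unbounded
    obtain ⟨a₀, ha₀A, ha₀1⟩ := A_unbounded A hd 1
    obtain ⟨a₁, ha₁A, ha₁ge⟩ := A_unbounded A hd (⌈(a₀:ℝ)/η⌉₊ + 1)
    have hmem : ((a₀:ℝ)/(a₁:ℝ)) ∈ ratioSet A := ⟨a₀, ha₀A, a₁, ha₁A, rfl⟩
    have h1 := hfar _ hmem
    have ha₁pos : (0:ℝ) < a₁ := by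
      have h2 : 1 ≤ a₁ := by omega
      exact_mod_cast h2
    have hlt : (a₀:ℝ)/a₁ < η := by
      rw [div_lt_iff₀ ha₁pos]
      have h3 : ((⌈(a₀:ℝ)/η⌉₊ + 1 : ℕ):ℝ) ≤ a₁ := Nat.cast_le.mpr ha₁ge
      push_cast at h3
      have h4 : (a₀:ℝ)/η < a₁ := by
        linarith only [h3, Nat.le_ceil ((a₀:ℝ)/η)]
      rw [div_lt_iff₀ hη] at h4
      linarith only [h4]
    have hdist : dist x ((a₀:ℝ)/(a₁:ℝ)) < η := by
      rw [← h0, Real.dist_eq, zero_sub, abs_neg,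
        abs_of_nonneg (by positivity : (0:ℝ) ≤ (a₀:ℝ)/(a₁:ℝ))]
      exact hlt
    linarith only [h1, hdist]
  · -- 0 < x : a missing interval (p, q) around x contradicts ratio_dense_aux
    set p := x - (min η x)/2 with hpdef
    set q := x + η/2 with hqdef
    have hminpos : 0 < min η x := lt_min hη hpos
    have hminle : min η x ≤ x := min_le_right _ _
    have hminleη : min η x ≤ η := min_le_left _ _
    have hp : 0 < p := by rw [hpdef]; linarith only [hminpos, hminle]
    have hpq : p < q := by rw [hpdef, hqdef]; linarith only [hminpos, hη]
    have hmiss : ∀ r ∈ ratioSet A, r ≤ p ∨ q ≤ r := by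
      intro r hr
      by_contra hcon
      push_neg at hcon
      obtain ⟨h1, h2⟩ := hcon
      have h3 := hfar r hr
      rw [Real.dist_eq] at h3
      have habs : |x - r| < η := by
        rw [abs_lt]
        constructor
        · rw [hqdef] at h2; linarith only [h2, hη]
        · rw [hpdef] at h1; linarith only [h1, hminleη, hη]
      linarith only [h3, habs]
    exact ratio_dense_aux A hA hd hp hpq hmiss
end

section
/- For every δ with 0 ≤ δ < 1/2, there exists a set A ⊆ ℕ with lower asymptotic density exactly δ such that R(A) is not dense in [0,∞). -/
set_option maxHeartbeats 1000000

noncomputable def cseq (ε : ℝ) (N : ℕ) : ℕ → ℕ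
  | 0 => N
  | k + 1 => cseq ε N k + ⌈ε * cseq ε N k⌉₊

lemma ncard_Ico_nat (a b : ℕ) : (Set.Ico a b).ncard = b - a := by
  rw [← Finset.coe_Ico, Set.ncard_coe_finset, Nat.card_Ico]

/-- counting lemma for disjoint block unions -/
lemma block_count (c L : ℕ → ℕ) (hc : StrictMono c) (hpos : 1 ≤ c 0)
    (hfit : ∀ k, c k + L k ≤ c (k + 1)) (k : ℕ) :
    ((⋃ j, Set.Ico (c j) (c j + L j)) ∩ Set.Icc 1 (c k - 1)).ncard
      = ∑ j ∈ Finset.range k, L j := by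
  induction k with
  | zero =>
    convert Set.ncard_empty ℕ
    · ext x
      simp only [Set.mem_inter_iff, Set.mem_iUnion, Set.mem_Icc, Set.mem_Ico,
        Set.mem_empty_iff_false, iff_false]
      rintro ⟨⟨j, hj1, hj2⟩, _, hx2⟩
      have : c 0 ≤ c j := hc.monotone (Nat.zero_le j)
      omega
    · simp
  | succ k ih =>
    have hckk : c k ≤ c (k+1) := hc.monotone (Nat.le_succ k)
    have key : (⋃ j, Set.Ico (c j) (c j + L j)) ∩ Set.Icc 1 (c (k+1) - 1)
        = ((⋃ j, Set.Ico (c j) (c j + L j)) ∩ Set.Icc 1 (c k - 1))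
          ∪ Set.Ico (c k) (c k + L k) := by
      ext x
      simp only [Set.mem_inter_iff, Set.mem_iUnion, Set.mem_Icc, Set.mem_Ico, Set.mem_union]
      constructor
      · rintro ⟨⟨j, hj1, hj2⟩, hx1, hx2⟩
        by_cases hx : x < c k
        · exact Or.inl ⟨⟨j, hj1, hj2⟩, hx1, by omega⟩
        · right
          push_neg at hx
          rcases lt_trichotomy j k with h | h | h
          · have : c (j+1) ≤ c k := hc.monotone h
            have := hfit j
            omega
          · subst h; omega
          · have : c (k+1) ≤ c j := hc.monotone h
            omega
      · rintro (⟨h1, h2, h3⟩ | ⟨h1, h2⟩)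
        · exact ⟨h1, h2, by omega⟩
        · refine ⟨⟨k, h1, h2⟩, ?_, ?_⟩
          · have : 1 ≤ c k := le_trans hpos (hc.monotone (Nat.zero_le k))
            omega
          · have := hfit k
            omega
    have hdisj : Disjoint ((⋃ j, Set.Ico (c j) (c j + L j)) ∩ Set.Icc 1 (c k - 1))
        (Set.Ico (c k) (c k + L k)) := by
      rw [Set.disjoint_left]
      rintro x ⟨_, _, hx2⟩ ⟨hx3, _⟩
      have : 1 ≤ c k := le_trans hpos (hc.monotone (Nat.zero_le k))
      omega
    have hf1 : ((⋃ j, Set.Ico (c j) (c j + L j)) ∩ Set.Icc 1 (c k - 1)).Finite :=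
      Set.Finite.subset (Set.finite_Icc 1 (c k - 1)) (Set.inter_subset_right)
    rw [key, Set.ncard_union_eq hdisj hf1 (Set.finite_Ico _ _), ih, ncard_Ico_nat,
      Finset.sum_range_succ]
    omega

lemma block_lb (c L : ℕ → ℕ) (hc : StrictMono c) (hpos : 1 ≤ c 0)
    (hfit : ∀ k, c k + L k ≤ c (k + 1)) (k n : ℕ) (hn : c k ≤ n) :
    (∑ j ∈ Finset.range k, L j) + min (n + 1 - c k) (L k)
      ≤ ((⋃ j, Set.Ico (c j) (c j + L j)) ∩ Set.Icc 1 n).ncard := by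
  set A := ⋃ j, Set.Ico (c j) (c j + L j) with hA
  have hck1 : 1 ≤ c k := le_trans hpos (hc.monotone (Nat.zero_le k))
  have hsub : (A ∩ Set.Icc 1 (c k - 1)) ∪ Set.Ico (c k) (c k + min (n + 1 - c k) (L k))
      ⊆ A ∩ Set.Icc 1 n := by
    rintro x (⟨hx1, hx2, hx3⟩ | hx)
    · exact ⟨hx1, hx2, by omega⟩
    · simp only [Set.mem_Ico] at hx
      refine ⟨Set.mem_iUnion.2 ⟨k, Set.mem_Ico.2 ⟨hx.1, by omega⟩⟩, Set.mem_Icc.2 ⟨by omega, by omega⟩⟩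
  have hdisj : Disjoint (A ∩ Set.Icc 1 (c k - 1)) (Set.Ico (c k) (c k + min (n + 1 - c k) (L k))) := by
    rw [Set.disjoint_left]
    rintro x ⟨_, _, hx2⟩ hx3
    simp only [Set.mem_Ico] at hx3
    omega
  have hf1 : (A ∩ Set.Icc 1 (c k - 1)).Finite :=
    Set.Finite.subset (Set.finite_Icc 1 (c k - 1)) Set.inter_subset_right
  calc (∑ j ∈ Finset.range k, L j) + min (n + 1 - c k) (L k)
      = ((A ∩ Set.Icc 1 (c k - 1)) ∪ Set.Ico (c k) (c k + min (n + 1 - c k) (L k))).ncard := by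
        rw [Set.ncard_union_eq hdisj hf1 (Set.finite_Ico _ _),
          block_count c L hc hpos hfit k, ncard_Ico_nat]
        omega
    _ ≤ _ := Set.ncard_le_ncard hsub (Set.Finite.subset (Set.finite_Icc 1 n) Set.inter_subset_right)

lemma block_gap (δ ε u : ℝ) (hε : 0 < ε) (hu1 : 1 < u) (huu : u * u < 1 + ε)
    (c L : ℕ → ℕ) (hmono : StrictMono c) (hck1 : ∀ k, 1 ≤ c k)
    (hfit : ∀ k, c k + L k ≤ c (k+1))
    (htop : ∀ k, (c k : ℝ) + L k ≤ u * c k)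
    (hgrowth : ∀ k, (1+ε) * c k ≤ (c (k+1) : ℝ)) :
    ¬ (Set.Ici (0 : ℝ) ⊆ closure (ratioSet (⋃ j, Set.Ico (c j) (c j + L j)))) := by
  set A : Set ℕ := ⋃ j, Set.Ico (c j) (c j + L j) with hA
  have hu0 : 0 < u := by linarith
  set v : ℝ := (1+ε)/u with hvdef
  have huv : u < v := by
    rw [hvdef, lt_div_iff₀ hu0]; linarith
  have hv0 : 0 < v := lt_trans hu0 huv
  -- key gap
  have hgap : ∀ x ∈ ratioSet A, x ∉ Set.Ioo u v := by
    rintro x ⟨m, hm, n, hn, rfl⟩ ⟨hx1, hx2⟩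
    rw [hA] at hm hn
    obtain ⟨k, hk⟩ := Set.mem_iUnion.1 hm
    obtain ⟨j, hj⟩ := Set.mem_iUnion.1 hn
    simp only [Set.mem_Ico] at hk hj
    have hnR : (0:ℝ) < n := by
      have := hck1 j; exact_mod_cast lt_of_lt_of_le (by omega : (0:ℕ) < 1) (le_trans (hck1 j) hj.1)
    have hmn : (n:ℝ) < m := by
      have : (1:ℝ) < (m:ℝ)/n := lt_trans hu1 hx1
      rw [lt_div_iff₀ hnR] at this; linarith
    rcases lt_trichotomy k j with h | h | h
    · -- m in lower block: m < c (k+1) ≤ c j ≤ n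
      have h1 : c (k+1) ≤ c j := hmono.monotone h
      have h2 := hfit k
      have : m < n := by omega
      have : (m:ℝ) < n := by exact_mod_cast this
      linarith
    · -- same block: m/n < u
      subst h
      have h1 : (m:ℝ) < u * c k := by
        have : (m:ℝ) < (c k : ℝ) + L k := by exact_mod_cast hk.2
        linarith [htop k]
      have h2 : (c k : ℝ) ≤ n := by exact_mod_cast hj.1
      have : (m:ℝ)/n < u := by
        rw [div_lt_iff₀ hnR]
        nlinarith
      linarith
    · -- m in higher block: m/n ≥ v
      have h1 : (c (j+1) : ℝ) ≤ c k := by exact_mod_cast hmono.monotone h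
      have h2 : ((1:ℝ)+ε) * c j ≤ m := by
        have : (c k : ℝ) ≤ m := by exact_mod_cast hk.1
        linarith [hgrowth j]
      have h3 : (n:ℝ) < u * c j := by
        have : (n:ℝ) < (c j : ℝ) + L j := by exact_mod_cast hj.2
        linarith [htop j]
      have hvun : v * n < (1+ε) * c j := by
        have : v * u = 1 + ε := by rw [hvdef]; field_simp
        nlinarith
      have : v < (m:ℝ)/n := by
        rw [lt_div_iff₀ hnR]
        linarith
      linarith
  intro hsub
  set x₀ : ℝ := (u+v)/2 with hx₀
  have hx₀mem : x₀ ∈ Set.Ici (0:ℝ) := by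
    simp only [Set.mem_Ici, hx₀]; linarith
  have h1 : x₀ ∈ closure (ratioSet A) := hsub hx₀mem
  have h2 : closure (ratioSet A) ⊆ (Set.Ioo u v)ᶜ :=
    closure_minimal (fun x hx => hgap x hx) (isOpen_Ioo.isClosed_compl)
  exact h2 h1 ⟨by simp only [hx₀]; linarith, by simp only [hx₀]; linarith⟩

lemma block_density (δ : ℝ) (h0 : 0 ≤ δ) (h1 : δ < 1/2) (c L F : ℕ → ℕ)
    (hmono : StrictMono c) (hck1 : ∀ k, 1 ≤ c k)
    (hfit : ∀ k, c k + L k ≤ c (k+1))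
    (hFmono : Monotone F)
    (hLdef : ∀ k, L k = F (k+1) - F k)
    (hFlb : ∀ k, δ * c k ≤ (F k : ℝ))
    (hFub : ∀ k, (F k : ℝ) < δ * c k + 1) :
    lowerDensity (⋃ j, Set.Ico (c j) (c j + L j)) = δ := by
  set A : Set ℕ := ⋃ j, Set.Ico (c j) (c j + L j) with hA
  set f : ℕ → ℕ := fun n => (A ∩ Set.Icc 1 n).ncard with hf
  have hld : lowerDensity A = Filter.liminf (fun n => (f n : ℝ)/n) Filter.atTop := by
    unfold lowerDensity
    simp only [Nat.card_coe_set_eq]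
    rfl
  have hkc : ∀ m, m ≤ c m := by
    intro m
    induction m with
    | zero => exact Nat.zero_le _
    | succ m ih => exact Nat.succ_le_of_lt (lt_of_le_of_lt ih (hmono (Nat.lt_succ_self m)))
  have hsum : ∀ k, (∑ j ∈ Finset.range k, L j) + F 0 = F k := by
    intro k
    induction k with
    | zero => simp
    | succ k ih =>
      show (∑ j ∈ Finset.range (k+1), L j) + F 0 = F (k+1)
      rw [Finset.sum_range_succ]
      have := hFmono (show k ≤ k+1 by omega)
      have := hLdef k
      omega
  have hfle : ∀ n, f n ≤ n := by
    intro n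
    have h1 : f n ≤ (Set.Icc 1 n).ncard :=
      Set.ncard_le_ncard Set.inter_subset_right (Set.finite_Icc _ _)
    rwa [← Finset.coe_Icc, Set.ncard_coe_finset, Nat.card_Icc, Nat.add_sub_cancel] at h1
  -- upper: frequently ≤ δ + η
  have hub_freq : ∀ η : ℝ, 0 < η → ∃ᶠ n in Filter.atTop, (f n : ℝ)/n ≤ δ + η := by
    intro η hη
    rw [Filter.frequently_atTop]
    intro M
    set K : ℕ := max (M+1) (⌈(1+δ+η)/η⌉₊ + 1) with hK
    refine ⟨c K - 1, ?_, ?_⟩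
    · have h1 : M + 1 ≤ K := le_max_left _ _
      have := hkc K
      omega
    · have hcK2 : 2 ≤ c K := by
        have h1 : (1:ℕ) ≤ K := by omega
        have := hmono (show 0 < K by omega)
        have := hck1 0
        omega
      have hfval : f (c K - 1) = ∑ j ∈ Finset.range K, L j :=
        block_count c L hmono (hck1 0) hfit K
      have hfub : (f (c K - 1) : ℝ) ≤ (F K : ℝ) := by
        have := hsum K
        have : f (c K - 1) ≤ F K := by omega
        exact_mod_cast this
      have hcKR : ((c K - 1 : ℕ) : ℝ) = (c K : ℝ) - 1 := by
        have : (1:ℕ) ≤ c K := by omega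
        push_cast [Nat.cast_sub this]
        ring
      have hKbig : (1+δ+η)/η ≤ (c K : ℝ) := by
        have h1 : (⌈(1+δ+η)/η⌉₊ + 1 : ℕ) ≤ K := le_max_right _ _
        have h2 : K ≤ c K := hkc K
        have h3 : ((⌈(1+δ+η)/η⌉₊ : ℕ) : ℝ) ≤ (c K : ℝ) := by
          have : (⌈(1+δ+η)/η⌉₊ : ℕ) ≤ c K := by omega
          exact_mod_cast this
        exact le_trans (Nat.le_ceil _) h3
      have hηcK : 1 + δ + η ≤ η * c K := by
        rw [div_le_iff₀ hη] at hKbig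
        linarith
      have hcKR2 : (2:ℝ) ≤ (c K : ℝ) := by exact_mod_cast hcK2
      have hpos' : (0:ℝ) < ((c K - 1 : ℕ) : ℝ) := by rw [hcKR]; linarith
      rw [div_le_iff₀ hpos', hcKR]
      have h5 := hFub K
      nlinarith
  -- lower: eventually ≥ δ - η
  have hlb_ev : ∀ η : ℝ, 0 < η → ∀ᶠ n in Filter.atTop, δ - η ≤ (f n : ℝ)/n := by
    intro η hη
    rw [Filter.eventually_atTop]
    refine ⟨max (c 0) (⌈((F 0 : ℝ)+1)/η⌉₊ + 1), fun n hn => ?_⟩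
    have hn0 : c 0 ≤ n := le_trans (le_max_left _ _) hn
    have hnη : ((F 0 : ℝ)+1)/η < n := by
      have h1 : (⌈((F 0 : ℝ)+1)/η⌉₊ + 1 : ℕ) ≤ n := le_trans (le_max_right _ _) hn
      have h2 : (((F 0 : ℝ)+1)/η) ≤ (⌈((F 0 : ℝ)+1)/η⌉₊ : ℝ) := Nat.le_ceil _
      have h3 : ((⌈((F 0 : ℝ)+1)/η⌉₊ : ℕ) : ℝ) + 1 ≤ (n : ℝ) := by exact_mod_cast h1
      linarith
    have hnpos : (0:ℝ) < n := lt_of_le_of_lt (by positivity) hnη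
    -- find the block index
    set K : ℕ := Nat.findGreatest (fun k => c k ≤ n) n with hKdef
    have hK1 : c K ≤ n := Nat.findGreatest_spec (P := fun k => c k ≤ n) (Nat.zero_le n) hn0
    have hK2 : n < c (K+1) := by
      by_contra h
      push_neg at h
      have h1 : K + 1 ≤ n := le_trans (hkc (K+1)) h
      have h2 : K + 1 ≤ K := Nat.le_findGreatest h1 h
      omega
    have hmain : (∑ j ∈ Finset.range K, L j) + min (n + 1 - c K) (L K) ≤ f n :=
      block_lb c L hmono (hck1 0) hfit K n hK1
    have hkey : δ * n - ((F 0 : ℝ) + 1) ≤ (f n : ℝ) := by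
      rcases le_or_gt (L K) (n + 1 - c K) with hm | hm
      · -- full block counted
        have h1 : F (K+1) ≤ f n + F 0 := by
          have hs := hsum K
          have hL := hLdef K
          have hm2 : F K ≤ F (K+1) := hFmono (show K ≤ K+1 by omega)
          rw [min_eq_right hm] at hmain
          omega
        have h2 : (F (K+1) : ℝ) ≤ (f n : ℝ) + F 0 := by exact_mod_cast h1
        have h3 := hFlb (K+1)
        have h4 : (n : ℝ) + 1 ≤ c (K+1) := by exact_mod_cast hK2
        nlinarith
      · -- partial block
        have h1 : F K + (n + 1 - c K) ≤ f n + F 0 := by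
          have hs := hsum K
          rw [min_eq_left (by omega)] at hmain
          omega
        have h2 : (F K : ℝ) + ((n:ℝ) + 1 - c K) ≤ (f n : ℝ) + F 0 := by
          have hcKn : c K ≤ n + 1 := by omega
          have : ((n + 1 - c K : ℕ) : ℝ) = (n:ℝ) + 1 - c K := by
            push_cast [Nat.cast_sub hcKn]; ring
          rw [← this]
          exact_mod_cast h1
        have h3 := hFlb K
        have h4 : (c K : ℝ) ≤ n := by exact_mod_cast hK1
        nlinarith
    rw [le_div_iff₀ hnpos]
    rw [div_lt_iff₀ hη] at hnη
    nlinarith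
  -- boundedness facts
  have hbdd : Filter.IsBoundedUnder (· ≥ ·) Filter.atTop (fun n => (f n : ℝ)/n) :=
    Filter.isBoundedUnder_of ⟨0, fun n => by positivity⟩
  have hble : Filter.IsBoundedUnder (· ≤ ·) Filter.atTop (fun n => (f n : ℝ)/n) := by
    refine Filter.isBoundedUnder_of ⟨1, fun n => ?_⟩
    rcases Nat.eq_zero_or_pos n with h | h
    · simp [h]
    · have hnpos : (0:ℝ) < n := by exact_mod_cast h
      rw [div_le_one hnpos]
      exact_mod_cast hfle n
  have hcob : Filter.IsCoboundedUnder (· ≥ ·) Filter.atTop (fun n => (f n : ℝ)/n) :=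
    hble.isCoboundedUnder_ge
  rw [hld]
  refine le_antisymm ?_ ?_
  · apply le_of_forall_pos_le_add
    intro η hη
    exact Filter.liminf_le_of_frequently_le (hub_freq η hη) hbdd
  · apply le_of_forall_pos_le_add
    intro η hη
    have := Filter.le_liminf_of_le hcob (hlb_ev η hη)
    linarith

theorem stmt7 (δ : ℝ) (h0 : 0 ≤ δ) (h1 : δ < 1 / 2) :
    ∃ A : Set ℕ, 0 ∉ A ∧ lowerDensity A = δ ∧
      ¬ (Set.Ici (0 : ℝ) ⊆ closure (ratioSet A)) := by
  set ε : ℝ := (1 - 2*δ)/2 with hεdef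
  have hε : 0 < ε := by simp only [hεdef]; linarith
  have hε2 : ε ≤ 1/2 := by simp only [hεdef]; linarith
  set G : ℝ := (1 + ε) - (1 + δ*ε)^2 with hGdef
  have hG : 0 < G := by
    have hGeq : G = ε^2*(2-δ^2) := by simp only [hGdef, hεdef]; ring
    rw [hGeq]
    exact mul_pos (pow_pos hε 2) (by nlinarith)
  set N : ℕ := ⌈max (2/ε) (10/G)⌉₊ + 1 with hNdef
  have hN1 : 1 ≤ N := by omega
  have hNε : 2/ε ≤ (N : ℝ) := by
    have := Nat.le_ceil (max (2/ε) (10/G))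
    have h2 : (⌈max (2/ε) (10/G)⌉₊ : ℝ) ≤ (N:ℝ) := by
      simp only [hNdef]; push_cast; linarith
    calc 2/ε ≤ max (2/ε) (10/G) := le_max_left _ _
      _ ≤ _ := le_trans this h2
  have hNG : 10/G ≤ (N : ℝ) := by
    have := Nat.le_ceil (max (2/ε) (10/G))
    have h2 : (⌈max (2/ε) (10/G)⌉₊ : ℝ) ≤ (N:ℝ) := by
      simp only [hNdef]; push_cast; linarith
    calc 10/G ≤ max (2/ε) (10/G) := le_max_right _ _
      _ ≤ _ := le_trans this h2
  have hNpos : (0:ℝ) < N := by positivity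
  set u : ℝ := 1 + δ*ε + 2/N with hudef
  have hu1 : 1 < u := by
    have : 0 < 2/(N:ℝ) := by positivity
    simp only [hudef]; nlinarith
  have htle : 2/(N:ℝ) ≤ G/5 := by
    rw [div_le_div_iff₀ hNpos (by norm_num)]
    have : 10 ≤ G * N := by
      rw [div_le_iff₀ hG] at hNG
      linarith [hNG]
    linarith
  have hGle : G ≤ 3/2 := by
    simp only [hGdef]; nlinarith
  have huu : u * u < 1 + ε := by
    have ha : (1 + δ*ε)^2 = 1 + ε - G := by simp only [hGdef]; ring
    have hd : δ*ε ≤ 1/2 := by nlinarith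
    have ht0 : 0 < 2/(N:ℝ) := by positivity
    simp only [hudef]
    nlinarith [sq_nonneg (2/(N:ℝ)), htle, hGle]
  have hNpos : (0:ℝ) < N := by exact_mod_cast hN1
  set c : ℕ → ℕ := cseq ε N with hcdef
  have hcsucc : ∀ k, c (k+1) = c k + ⌈ε * c k⌉₊ := fun k => rfl
  have hc0 : c 0 = N := rfl
  have hcN : ∀ k, N ≤ c k := by
    intro k; induction k with
    | zero => exact le_refl _
    | succ k ih => rw [hcsucc]; omega
  have hg2 : ∀ k, 2 ≤ ⌈ε * c k⌉₊ := by
    intro k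
    have hck : (2:ℝ)/ε ≤ (c k : ℝ) := le_trans hNε (by exact_mod_cast hcN k)
    have h2 : (1:ℝ) < ε * c k := by
      rw [div_le_iff₀ hε] at hck
      nlinarith
    have := (Nat.lt_ceil (n := 1) (a := ε * c k)).2 (by exact_mod_cast h2)
    omega
  have hmono : StrictMono c := strictMono_nat_of_lt_succ fun k => by
    have := hg2 k; rw [hcsucc]; omega
  have hck1 : ∀ k, 1 ≤ c k := fun k => le_trans hN1 (hcN k)
  have hckR : ∀ k, (N:ℝ) ≤ c k := fun k => by exact_mod_cast hcN k
  have hgub : ∀ k, (⌈ε * c k⌉₊ : ℝ) < ε * c k + 1 :=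
    fun k => Nat.ceil_lt_add_one (by positivity)
  have hglb : ∀ k, ε * c k ≤ (⌈ε * c k⌉₊ : ℝ) := fun k => Nat.le_ceil _
  -- F and L
  set F : ℕ → ℕ := fun k => ⌈δ * c k⌉₊ with hFdef
  set L : ℕ → ℕ := fun k => F (k+1) - F k with hLdef
  have hFmono : Monotone F := by
    intro a b hab
    exact Nat.ceil_le_ceil (by
      have := hmono.monotone hab
      have : (c a : ℝ) ≤ c b := by exact_mod_cast this
      nlinarith)
  have hFlb : ∀ k, δ * c k ≤ (F k : ℝ) := fun k => Nat.le_ceil _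
  have hFub : ∀ k, (F k : ℝ) < δ * c k + 1 := fun k => Nat.ceil_lt_add_one (by positivity)
  have hLcast : ∀ k, (L k : ℝ) = (F (k+1) : ℝ) - F k := by
    intro k
    simp only [hLdef]
    exact_mod_cast Nat.cast_sub (hFmono (Nat.le_succ k))
  have hcsuccR : ∀ k, (c (k+1) : ℝ) = c k + ⌈ε * c k⌉₊ := by
    intro k; rw [hcsucc]; push_cast; ring
  have hLub : ∀ k, (L k : ℝ) < δ * ⌈ε * c k⌉₊ + 1 := by
    intro k
    rw [hLcast]
    have h1 := hFub (k+1)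
    have h2 := hFlb k
    have h3 := hcsuccR k
    nlinarith
  have hfit : ∀ k, c k + L k ≤ c (k+1) := by
    intro k
    have hg := hg2 k
    have hgR : (2:ℝ) ≤ (⌈ε * c k⌉₊ : ℝ) := by exact_mod_cast hg
    have : (L k : ℝ) < (⌈ε * c k⌉₊ : ℝ) := by
      have := hLub k
      nlinarith
    have : L k < ⌈ε * c k⌉₊ := by exact_mod_cast this
    rw [hcsucc]; omega
  -- block top bound
  have htop : ∀ k, (c k : ℝ) + L k ≤ u * c k := by
    intro k
    have h1 := hLub k
    have h2 := hgub k
    have h3 := hckR k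
    have h4 : (2:ℝ) ≤ (2/N) * c k := by
      rw [div_mul_eq_mul_div, le_div_iff₀ hNpos]
      nlinarith
    have h5 : (L k : ℝ) ≤ δ*ε*(c k) + 2 := by nlinarith
    rw [hudef]
    nlinarith
  have hgrowth : ∀ k, (1+ε) * c k ≤ (c (k+1) : ℝ) := by
    intro k
    rw [hcsuccR k]
    have := hglb k
    nlinarith [hckR k]
  refine ⟨⋃ j, Set.Ico (c j) (c j + L j), ?_, ?_, ?_⟩
  · intro h
    obtain ⟨j, hj⟩ := Set.mem_iUnion.1 h
    simp only [Set.mem_Ico] at hj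
    have := hck1 j
    omega
  · exact block_density δ h0 h1 c L F hmono hck1 hfit hFmono (fun k => rfl) hFlb hFub
  · exact block_gap δ ε u hε hu1 huu c L hmono hck1 hfit htop hgrowth
end

section
/- Suppose A ⊆ ℕ is a set whose quotient set avoids an interval: there exist 0 < α < β ≤ 1 with R(A) ∩ (α, β) = ∅. Then the lower asymptotic density of A satisfies (1 + α/β)·d(A) ≤ α/β. -/
namespace Stmt8Aux

noncomputable def cnt (A : Set ℕ) (n : ℕ) : ℕ := Nat.card ↥(A ∩ Set.Icc 1 n)

lemma cnt_eq_ncard (A : Set ℕ) (n : ℕ) : cnt A n = (A ∩ Set.Icc 1 n).ncard :=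
  Nat.card_coe_set_eq _

lemma finite_inter (A : Set ℕ) (n : ℕ) : (A ∩ Set.Icc 1 n).Finite :=
  (Set.finite_Icc 1 n).subset Set.inter_subset_right

lemma ncard_Icc' (m n : ℕ) : (Set.Icc m n).ncard = n + 1 - m := by
  rw [← Finset.coe_Icc, Set.ncard_coe_finset, Nat.card_Icc]

lemma cnt_le (A : Set ℕ) (n : ℕ) : cnt A n ≤ n := by
  rw [cnt_eq_ncard]
  calc (A ∩ Set.Icc 1 n).ncard ≤ (Set.Icc 1 n).ncard :=
        Set.ncard_le_ncard Set.inter_subset_right (Set.finite_Icc 1 n)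
    _ = n := by rw [ncard_Icc']; omega

lemma cnt_mono (A : Set ℕ) {m n : ℕ} (h : m ≤ n) : cnt A m ≤ cnt A n := by
  rw [cnt_eq_ncard, cnt_eq_ncard]
  exact Set.ncard_le_ncard
    (Set.inter_subset_inter_right _ (Set.Icc_subset_Icc_right h)) (finite_inter A n)

lemma cnt_add (A : Set ℕ) {m n : ℕ} (h : m ≤ n) : cnt A n ≤ cnt A m + (n - m) := by
  rw [cnt_eq_ncard, cnt_eq_ncard]
  have hsub : A ∩ Set.Icc 1 n ⊆ (A ∩ Set.Icc 1 m) ∪ Set.Icc (m+1) n := by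
    rintro x ⟨hxA, hx1, hxn⟩
    by_cases hxm : x ≤ m
    · exact Or.inl ⟨hxA, hx1, hxm⟩
    · exact Or.inr ⟨by omega, hxn⟩
  calc (A ∩ Set.Icc 1 n).ncard
      ≤ ((A ∩ Set.Icc 1 m) ∪ Set.Icc (m+1) n).ncard :=
        Set.ncard_le_ncard hsub ((finite_inter A m).union (Set.finite_Icc _ _))
    _ ≤ (A ∩ Set.Icc 1 m).ncard + (Set.Icc (m+1) n).ncard := Set.ncard_union_le _ _
    _ ≤ (A ∩ Set.Icc 1 m).ncard + (n - m) := by rw [ncard_Icc']; omega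

lemma cnt_congr (A : Set ℕ) {m n : ℕ} (hmn : m ≤ n)
    (h : ∀ k, m < k → k ≤ n → k ∉ A) : cnt A n = cnt A m := by
  have hset : A ∩ Set.Icc 1 n = A ∩ Set.Icc 1 m := by
    ext x
    constructor
    · rintro ⟨hxA, hx1, hxn⟩
      refine ⟨hxA, hx1, ?_⟩
      by_contra hxm
      exact h x (by omega) hxn hxA
    · rintro ⟨hxA, hx1, hxm⟩
      exact ⟨hxA, hx1, hxm.trans hmn⟩
  unfold cnt
  rw [hset]

lemma cnt_succ (A : Set ℕ) {b : ℕ} (hb : b ∈ A) (hb1 : 1 ≤ b) :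
    cnt A b = cnt A (b-1) + 1 := by
  rw [cnt_eq_ncard, cnt_eq_ncard]
  have hset : A ∩ Set.Icc 1 b = insert b (A ∩ Set.Icc 1 (b-1)) := by
    ext x
    constructor
    · rintro ⟨hxA, hx1, hxb⟩
      by_cases hxe : x = b
      · exact Or.inl hxe
      · exact Or.inr ⟨hxA, hx1, by omega⟩
    · rintro (rfl | ⟨hxA, hx1, hxb⟩)
      · exact ⟨hb, hb1, le_rfl⟩
      · exact ⟨hxA, hx1, by omega⟩
  rw [hset, Set.ncard_insert_of_notMem (by rintro ⟨_, _, h2⟩; omega) (finite_inter A (b-1))]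


section Core

variable {A : Set ℕ} {α β : ℝ}

/-- ratio avoidance in arithmetic form -/
lemma no_ratio (hα : 0 < α) (havoid : ratioSet A ∩ Set.Ioo α β = ∅)
    {b k : ℕ} (hb : b ∈ A) (hk : k ∈ A) (h1 : α * k < b) (h2 : (b:ℝ) < β * k) : False := by
  have hk0 : 0 < k := by
    rcases Nat.eq_zero_or_pos k with rfl | h
    · push_cast at h1 h2; nlinarith
    · exact h
  have hkR : (0:ℝ) < k := by exact_mod_cast hk0
  have hmem : ((b:ℝ)/k) ∈ ratioSet A ∩ Set.Ioo α β := by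
    refine ⟨⟨b, hb, k, hk, rfl⟩, ?_, ?_⟩
    · rw [lt_div_iff₀ hkR]; linarith [mul_comm α (k:ℝ)]
    · rw [div_lt_iff₀ hkR]; linarith [mul_comm β (k:ℝ)]
  rw [havoid] at hmem
  exact hmem

/-- the point just below b/α -/
noncomputable def pf (α : ℝ) (b : ℕ) : ℕ := ⌈(b:ℝ)/α⌉₊ - 1

lemma pf_cast (hα : 0 < α) (hα1 : α < 1) {b : ℕ} (hb : 1 ≤ b) :
    (pf α b : ℝ) = (⌈(b:ℝ)/α⌉₊ : ℝ) - 1 := by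
  have h1 : (1:ℝ) ≤ (b:ℝ)/α := by
    rw [le_div_iff₀ hα]
    have : (1:ℝ) ≤ (b:ℝ) := by exact_mod_cast hb
    nlinarith
  have : 1 ≤ ⌈(b:ℝ)/α⌉₊ := Nat.one_le_ceil_iff.mpr (by linarith)
  unfold pf
  push_cast [Nat.cast_sub this]
  ring

lemma pf_lt (hα : 0 < α) (hα1 : α < 1) {b : ℕ} (hb : 1 ≤ b) :
    α * (pf α b : ℝ) < b := by
  rw [pf_cast hα hα1 hb]
  have h0 : (0:ℝ) ≤ (b:ℝ)/α := by positivity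
  have := Nat.ceil_lt_add_one h0
  have h2 : ((⌈(b:ℝ)/α⌉₊ : ℝ) - 1) < (b:ℝ)/α := by linarith
  calc α * ((⌈(b:ℝ)/α⌉₊ : ℝ) - 1) < α * ((b:ℝ)/α) := by nlinarith
    _ = b := by field_simp

lemma pf_ge (hα : 0 < α) (hα1 : α < 1) {b : ℕ} (hb : 1 ≤ b) :
    (b:ℝ) - α ≤ α * (pf α b : ℝ) := by
  rw [pf_cast hα hα1 hb]
  have := Nat.le_ceil ((b:ℝ)/α)
  have h2 : (b:ℝ)/α - 1 ≤ ((⌈(b:ℝ)/α⌉₊ : ℝ) - 1) := by linarith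
  calc (b:ℝ) - α = α * ((b:ℝ)/α - 1) := by field_simp
    _ ≤ α * ((⌈(b:ℝ)/α⌉₊ : ℝ) - 1) := by nlinarith

lemma pf_mono (hα : 0 < α) {b b' : ℕ} (h : b' ≤ b) : pf α b' ≤ pf α b := by
  unfold pf
  have : ⌈(b':ℝ)/α⌉₊ ≤ ⌈(b:ℝ)/α⌉₊ := by
    apply Nat.ceil_le_ceil
    have hbb : (b':ℝ) ≤ b := by exact_mod_cast h
    gcongr
  omega


lemma core (hA : 0 ∉ A) (hα : 0 < α) (hαβ : α < β) (hβ : β ≤ 1)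
    (havoid : ratioSet A ∩ Set.Ioo α β = ∅) :
    ∀ b : ℕ, b ∈ A →
      (cnt A b : ℝ) ≤ α * ((pf α b : ℝ) - cnt A (pf α b)) + ((b:ℝ) - α * (pf α b))
        + (β*(1+α)/(β-α) + 2) := by
  have hα1 : α < 1 := lt_of_lt_of_le hαβ hβ
  have hβ0 : 0 < β := lt_trans hα hαβ
  have hba : 0 < β - α := by linarith
  intro b
  induction b using Nat.strong_induction_on with
  | _ b ih =>
  intro hbA
  have hb1 : 1 ≤ b := by
    rcases Nat.eq_zero_or_pos b with rfl | h
    · exact absurd hbA hA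
    · exact h
  have hcntle : ∀ n : ℕ, (cnt A n : ℝ) ≤ n := fun n => by exact_mod_cast cnt_le A n
  have hpl := pf_lt hα hα1 hb1
  have hpg := pf_ge hα hα1 hb1
  have hterm2 : (0:ℝ) ≤ (b:ℝ) - α * (pf α b) := by linarith
  have hterm1 : (0:ℝ) ≤ α * ((pf α b : ℝ) - cnt A (pf α b)) := by
    have := hcntle (pf α b); nlinarith
  have hE2 : (0:ℝ) ≤ β*(1+α)/(β-α) := by positivity
  by_cases hsmall : (b:ℝ) < β*(1+α)/(β-α)
  · have : (cnt A b : ℝ) ≤ b := hcntle b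
    linarith
  push_neg at hsmall
  set q : ℕ := ⌊(b:ℝ)/β⌋₊ with hqdef
  have hwin : ∀ k : ℕ, q < k → k ≤ pf α b → k ∉ A := by
    intro k hk1 hk2 hkA
    have hbk : (b:ℝ) < β * k := by
      have h1 : (b:ℝ)/β < (q:ℝ) + 1 := Nat.lt_floor_add_one _
      have h2 : (q:ℝ) + 1 ≤ (k:ℝ) := by exact_mod_cast hk1
      have h3 : (b:ℝ)/β < (k:ℝ) := by linarith
      calc (b:ℝ) = β * ((b:ℝ)/β) := by field_simp
        _ < β * k := by nlinarith
    have hak : α * k < b := by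
      have h2 : (k:ℝ) ≤ (pf α b : ℝ) := by exact_mod_cast hk2
      nlinarith
    exact no_ratio hα havoid hbA hkA hak hbk
  rcases (A ∩ Set.Icc 1 (b-1)).eq_empty_or_nonempty with hemp | hne
  · have h0 : cnt A (b-1) = 0 := by rw [cnt_eq_ncard, hemp, Set.ncard_empty]
    have h1 : cnt A b = 1 := by rw [cnt_succ A hbA hb1, h0]
    rw [h1]
    push_cast
    linarith
  · obtain ⟨b', hb'S, hb'max⟩ :=
      Set.exists_max_image (A ∩ Set.Icc 1 (b-1)) id (finite_inter A (b-1)) hne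
    obtain ⟨hb'A, hb'1, hb'le⟩ := hb'S
    have hb'lt : b' < b := by omega
    have hstep : cnt A b = cnt A b' + 1 := by
      rw [cnt_succ A hbA hb1]
      congr 1
      exact cnt_congr A hb'le (fun k hk1 hk2 hkA => by
        have := hb'max k ⟨hkA, by omega, hk2⟩
        simp only [id] at this
        omega)
    have ihb' := ih b' hb'lt hb'A
    have hpg' := pf_ge hα hα1 hb'1
    have hpl' := pf_lt hα hα1 hb'1
    by_cases hover : q ≤ pf α b'
    · -- same component
      have hpmono : pf α b' ≤ pf α b := pf_mono hα hb'lt.le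
      have hrw : cnt A (pf α b) = cnt A (pf α b') :=
        cnt_congr A hpmono (fun k hk1 hk2 => hwin k (by omega) hk2)
      have hcast : ((b':ℝ) + 1) ≤ (b:ℝ) := by
        have : b' + 1 ≤ b := by omega
        exact_mod_cast this
      rw [hstep, hrw]
      push_cast
      rw [hrw] at *
      linarith [ihb']
    · push_neg at hover
      have hq0 : (0:ℝ) ≤ (b:ℝ)/β := by positivity
      have hqle : (q:ℝ) ≤ (b:ℝ)/β := Nat.floor_le hq0
      have hsm : β*(1+α) ≤ (b:ℝ)*(β-α) := by
        rw [div_le_iff₀ hba] at hsmall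
        linarith
      have hkey : (1:ℝ) + α ≤ (b:ℝ) - α * ((b:ℝ)/β) := by
        have hc : α * ((b:ℝ)/β) * β = α * b := by field_simp
        nlinarith
      have hqpf : q < pf α b := by
        have h1 : (b:ℝ)/α - 1 ≤ (pf α b : ℝ) := by
          rw [pf_cast hα hα1 hb1]
          have := Nat.le_ceil ((b:ℝ)/α)
          linarith
        have hdiff : (b:ℝ)/α - (b:ℝ)/β = (b:ℝ)*(β-α)/(α*β) := by
          field_simp
        have hmono : (β*(1+α))/(α*β) ≤ (b:ℝ)*(β-α)/(α*β) := by
          gcongr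
        have hsimp : (β*(1+α))/(α*β) = 1/α + 1 := by
          field_simp
        have hainv : (0:ℝ) < 1/α := by positivity
        have h2 : (b:ℝ)/β + 1 < (b:ℝ)/α := by linarith
        have : (q:ℝ) < (pf α b : ℝ) := by linarith
        exact_mod_cast this
      have hrw : cnt A (pf α b) = cnt A q :=
        cnt_congr A hqpf.le (fun k hk1 hk2 => hwin k hk1 hk2)
      have haddR : (cnt A q : ℝ) ≤ (cnt A (pf α b') : ℝ) + ((q:ℝ) - (pf α b':ℝ)) := by
        have h2 := (Nat.cast_le (α := ℝ)).mpr (cnt_add A hover.le)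
        push_cast [Nat.cast_sub hover.le] at h2
        linarith
      have hαq : α*(q:ℝ) ≤ α*((b:ℝ)/β) := mul_le_mul_of_nonneg_left hqle hα.le
      rw [hstep, hrw]
      push_cast
      linarith [ihb', hpg', hkey, hαq, mul_le_mul_of_nonneg_left haddR hα.le]


lemma cnt_bounded {m : ℕ} (hm : ∀ x ∈ A, x ≤ m) (n : ℕ) : cnt A n ≤ m := by
  rw [cnt_eq_ncard]
  calc (A ∩ Set.Icc 1 n).ncard ≤ (Set.Icc 1 m).ncard := by
        apply Set.ncard_le_ncard ?_ (Set.finite_Icc 1 m)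
        rintro x ⟨hxA, hx1, _⟩
        exact ⟨hx1, hm x hxA⟩
    _ = m := by rw [ncard_Icc']; omega

lemma master (hA : 0 ∉ A) (hα : 0 < α) (hαβ : α < β) (hβ : β ≤ 1)
    (havoid : ratioSet A ∩ Set.Ioo α β = ∅) {n t : ℕ} (hnt : (n:ℝ) ≤ α * t) :
    (cnt A n : ℝ) ≤ α * ((t:ℝ) - cnt A t) + (α + (β*(1+α)/(β-α) + 2)) := by
  have hα1 : α < 1 := lt_of_lt_of_le hαβ hβ
  have hba : 0 < β - α := by linarith
  have hnonneg : (0:ℝ) ≤ (t:ℝ) - cnt A t := by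
    have : (cnt A t:ℝ) ≤ t := by exact_mod_cast cnt_le A t
    linarith
  have hE : (0:ℝ) ≤ β*(1+α)/(β-α) := by
    apply div_nonneg (by nlinarith) hba.le
  rcases (A ∩ Set.Icc 1 n).eq_empty_or_nonempty with hemp | hne
  · have h0 : cnt A n = 0 := by rw [cnt_eq_ncard, hemp, Set.ncard_empty]
    rw [h0]
    push_cast
    nlinarith
  · obtain ⟨c, hcS, hcmax⟩ := Set.exists_max_image _ id (finite_inter A n) hne
    obtain ⟨hcA, hc1, hcn⟩ := hcS
    have hcnteq : cnt A n = cnt A c := by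
      apply cnt_congr A hcn
      intro k hk1 hk2 hkA
      have := hcmax k ⟨hkA, by omega, hk2⟩
      simp only [id] at this
      omega
    have hcore := core hA hα hαβ hβ havoid c hcA
    have hplt : (pf α c : ℝ) < (t:ℝ) := by
      have h1 : α * (pf α c : ℝ) < c := pf_lt hα hα1 hc1
      have h2 : (c:ℝ) ≤ n := by exact_mod_cast hcn
      have h3 : α * (pf α c : ℝ) < α * t := by linarith
      exact lt_of_mul_lt_mul_left h3 hα.le
    have hpt : pf α c ≤ t := by
      have : pf α c < t := by exact_mod_cast hplt
      omega
    have hdiff : (pf α c : ℝ) - cnt A (pf α c) ≤ (t:ℝ) - cnt A t := by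
      have h2 := (Nat.cast_le (α := ℝ)).mpr (cnt_add A hpt)
      push_cast [Nat.cast_sub hpt] at h2
      linarith
    have hpg := pf_ge hα hα1 hc1
    have hcnR : (c:ℝ) ≤ n := by exact_mod_cast hcn
    rw [hcnteq]
    have := mul_le_mul_of_nonneg_left hdiff hα.le
    linarith


lemma density_step (hA : 0 ∉ A) (hα : 0 < α) (hαβ : α < β) (hβ : β ≤ 1)
    (havoid : ratioSet A ∩ Set.Ioo α β = ∅)
    {D : ℝ} {N : ℕ} (hD0 : 0 ≤ D) (hD1 : D ≤ 1)
    (hN : ∀ n : ℕ, N ≤ n → D * (n:ℝ) ≤ (cnt A n : ℝ))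
    {a : ℕ} (haA : a ∈ A)
    (hc1 : ((N:ℝ) + 2) ≤ β * (a:ℝ))
    (hc3 : (1:ℝ) ≤ (β - α) * (a:ℝ))
    (hc2 : ((N:ℝ) + 1) ≤ (a:ℝ)) :
    (D * β) * (a:ℝ) ≤ (α * (1 - D)) * (a:ℝ) + (α + (β*(1+α)/(β-α) + 2) + 1) := by
  have hα1 : α < 1 := lt_of_lt_of_le hαβ hβ
  have hβ0 : 0 < β := hα.trans hαβ
  have hba : 0 < β - α := by linarith
  have hNc : (0:ℝ) ≤ (N:ℝ) := Nat.cast_nonneg N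
  have haRpos : (0:ℝ) < (a:ℝ) := by linarith
  have haN : N ≤ a := by exact_mod_cast (by linarith : (N:ℝ) ≤ (a:ℝ))
  -- cut points
  have hceil1 : 1 ≤ ⌈β * (a:ℝ)⌉₊ := Nat.one_le_ceil_iff.mpr (by nlinarith)
  have hn₂cast : ((⌈β * (a:ℝ)⌉₊ - 1 : ℕ) : ℝ) = (⌈β * (a:ℝ)⌉₊:ℝ) - 1 := by
    push_cast [Nat.cast_sub hceil1]
    ring
  have hn₂ge : β * (a:ℝ) - 1 ≤ ((⌈β * (a:ℝ)⌉₊ - 1 : ℕ) : ℝ) := by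
    rw [hn₂cast]
    have := Nat.le_ceil (β * (a:ℝ))
    linarith
  have hn₂lt : ((⌈β * (a:ℝ)⌉₊ - 1 : ℕ) : ℝ) < β * (a:ℝ) := by
    rw [hn₂cast]
    have := Nat.ceil_lt_add_one (show (0:ℝ) ≤ β * (a:ℝ) by positivity)
    linarith
  have hn₂N : N ≤ ⌈β * (a:ℝ)⌉₊ - 1 := by
    have : (N:ℝ) ≤ ((⌈β * (a:ℝ)⌉₊ - 1 : ℕ) : ℝ) := by linarith
    exact_mod_cast this
  have hn₁le : ((⌊α * (a:ℝ)⌋₊ : ℕ) : ℝ) ≤ α * (a:ℝ) := Nat.floor_le (by positivity)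
  have hn₁lt : α * (a:ℝ) < ((⌊α * (a:ℝ)⌋₊ : ℕ) : ℝ) + 1 := Nat.lt_floor_add_one _
  have hn₁n₂ : ⌊α * (a:ℝ)⌋₊ ≤ ⌈β * (a:ℝ)⌉₊ - 1 := by
    have : ((⌊α * (a:ℝ)⌋₊ : ℕ) : ℝ) ≤ ((⌈β * (a:ℝ)⌉₊ - 1 : ℕ) : ℝ) := by nlinarith
    exact_mod_cast this
  -- the gap
  have hgap : cnt A (⌈β * (a:ℝ)⌉₊ - 1) = cnt A ⌊α * (a:ℝ)⌋₊ := by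
    apply cnt_congr A hn₁n₂
    intro k hk1 hk2 hkA
    have hk1R : ((⌊α * (a:ℝ)⌋₊ : ℕ) : ℝ) + 1 ≤ (k:ℝ) := by exact_mod_cast hk1
    have hk2R : (k:ℝ) ≤ ((⌈β * (a:ℝ)⌉₊ - 1 : ℕ) : ℝ) := by exact_mod_cast hk2
    exact no_ratio hα havoid hkA haA (by linarith) (by linarith)
  -- density lower bounds
  have hcnt₂ : D * (β * (a:ℝ) - 1) ≤ (cnt A (⌈β * (a:ℝ)⌉₊ - 1) : ℝ) := by
    have h := hN _ hn₂N
    calc D * (β * (a:ℝ) - 1) ≤ D * ((⌈β * (a:ℝ)⌉₊ - 1 : ℕ) : ℝ) :=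
          mul_le_mul_of_nonneg_left (by linarith) hD0
      _ ≤ _ := h
  have hcnta : D * (a:ℝ) ≤ (cnt A a : ℝ) := hN a haN
  have hmaster := master hA hα hαβ hβ havoid (n := ⌊α * (a:ℝ)⌋₊) (t := a) hn₁le
  have hgapR : (cnt A (⌈β * (a:ℝ)⌉₊ - 1) : ℝ) = (cnt A ⌊α * (a:ℝ)⌋₊ : ℝ) := by
    exact_mod_cast congrArg (fun x : ℕ => (x:ℝ)) hgap
  have s2 : α * ((a:ℝ) - (cnt A a : ℝ)) ≤ α * ((a:ℝ) - D*(a:ℝ)) :=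
    mul_le_mul_of_nonneg_left (by linarith) hα.le
  nlinarith [hmaster]

end Core

end Stmt8Aux


set_option maxHeartbeats 2000000 in
theorem stmt8 (A : Set ℕ) (hA : 0 ∉ A) (α β : ℝ) (hα : 0 < α) (hαβ : α < β)
    (hβ : β ≤ 1) (havoid : ratioSet A ∩ Set.Ioo α β = ∅) :
    (1 + α / β) * lowerDensity A ≤ α / β := by
  classical
  have hβ0 : 0 < β := hα.trans hαβ
  have hα1 : α < 1 := lt_of_lt_of_le hαβ hβ
  have hba : 0 < β - α := by linarith
  set f : ℕ → ℝ := fun n : ℕ => (Nat.card ↥(A ∩ Set.Icc 1 n) : ℝ) / (n : ℝ) with hf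
  have hld : lowerDensity A = Filter.liminf f Filter.atTop := rfl
  have hfcnt : ∀ n, f n = (Stmt8Aux.cnt A n : ℝ)/(n:ℝ) := fun n => rfl
  have hf0 : ∀ n, 0 ≤ f n := fun n => by rw [hfcnt]; positivity
  have hf1 : ∀ n, f n ≤ 1 := by
    intro n
    rcases Nat.eq_zero_or_pos n with rfl | hn
    · rw [hfcnt]; norm_num
    · rw [hfcnt, div_le_one (by exact_mod_cast hn)]
      exact_mod_cast Stmt8Aux.cnt_le A n
  have hbddge : Filter.IsBoundedUnder (· ≥ ·) Filter.atTop f :=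
    Filter.isBoundedUnder_of ⟨0, hf0⟩
  have hbddle : Filter.IsBoundedUnder (· ≤ ·) Filter.atTop f :=
    Filter.isBoundedUnder_of ⟨1, hf1⟩
  have hcob : Filter.IsCoboundedUnder (· ≥ ·) Filter.atTop f :=
    hbddle.isCoboundedUnder_ge
  set δ := Filter.liminf f Filter.atTop with hδ
  have hδ0 : 0 ≤ δ := Filter.le_liminf_of_le hcob (Filter.Eventually.of_forall hf0)
  have hδ1 : δ ≤ 1 := by
    have h := Filter.liminf_le_liminf (Filter.Eventually.of_forall hf1) hbddge
      ((Filter.isBoundedUnder_of ⟨1, fun _ => le_rfl⟩).isCoboundedUnder_ge)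
    simpa [Filter.liminf_const] using h
  clear_value f δ
  have hkey : (α + β) * δ ≤ α := by
    by_cases hbd : ∃ m : ℕ, ∀ x ∈ A, x ≤ m
    · obtain ⟨m, hm⟩ := hbd
      have hδeq : δ = 0 := by
        have htend : Filter.Tendsto f Filter.atTop (nhds 0) := by
          apply squeeze_zero hf0 (g := fun n : ℕ => (m:ℝ)/(n:ℝ)) ?_
            (tendsto_const_div_atTop_nhds_zero_nat (m:ℝ))
          intro n
          rcases Nat.eq_zero_or_pos n with rfl | hn
          · rw [hfcnt]; norm_num
          · rw [hfcnt]
            have hnum : (Stmt8Aux.cnt A n : ℝ) ≤ (m:ℝ) := by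
              exact_mod_cast Stmt8Aux.cnt_bounded hm n
            have hden : (0:ℝ) < (n:ℝ) := by exact_mod_cast hn
            exact div_le_div_of_nonneg_right hnum hden.le
        rw [hδ]
        exact htend.liminf_eq
      rw [hδeq]
      nlinarith
    · push_neg at hbd
      have hmain : ∀ ε : ℝ, 0 < ε → (α + β) * δ ≤ α + ε := by
        intro ε hε
        rcases eq_or_lt_of_le hδ0 with hδz | hδpos
        · rw [← hδz]; nlinarith
        have hab1 : (0:ℝ) < α + β + 1 := by linarith
        set ε' : ℝ := min δ (ε/(2*(α+β+1))) with hε'def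
        have hε'pos : 0 < ε' := lt_min hδpos (by positivity)
        have hε'δ : ε' ≤ δ := min_le_left _ _
        have hε'ε : ε' * (α+β) ≤ ε/2 := by
          have h1 : ε' ≤ ε/(2*(α+β+1)) := min_le_right _ _
          have h2 : ε/(2*(α+β+1)) * (α+β+1) = ε/2 := by field_simp
          nlinarith
        clear_value ε'
        obtain ⟨N, hN⟩ := Filter.eventually_atTop.mp
          (Filter.eventually_lt_of_lt_liminf (show δ - ε' < Filter.liminf f Filter.atTop by
            rw [← hδ]; linarith) hbddge)
        have hNcnt : ∀ n : ℕ, N + 1 ≤ n → (δ - ε') * (n:ℝ) ≤ (Stmt8Aux.cnt A n : ℝ) := by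
          intro n hn
          have h := hN n (by omega)
          rw [hfcnt] at h
          have hnpos : (0:ℝ) < (n:ℝ) := by
            have : (0:ℕ) < n := by omega
            exact_mod_cast this
          rw [lt_div_iff₀ hnpos] at h
          linarith
        set E : ℝ := β*(1+α)/(β-α) + 2 with hEdef
        have hE0 : (0:ℝ) ≤ E := by
          have h : (0:ℝ) ≤ β*(1+α)/(β-α) := div_nonneg (by nlinarith) hba.le
          rw [hEdef]; linarith
        clear_value E
        -- choose a large element of A
        obtain ⟨a, haA, haM⟩ := hbd
          (⌈max (max (((N:ℝ)+3)/β) (2*(α+E+1)/ε)) (max (1/(β-α)) ((N:ℝ)+2))⌉₊)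
        have haR : max (max (((N:ℝ)+3)/β) (2*(α+E+1)/ε)) (max (1/(β-α)) ((N:ℝ)+2)) ≤ (a:ℝ) := by
          refine le_trans (Nat.le_ceil _) ?_
          have : (⌈max (max (((N:ℝ)+3)/β) (2*(α+E+1)/ε)) (max (1/(β-α)) ((N:ℝ)+2))⌉₊ : ℝ)
              ≤ (a:ℝ) := by exact_mod_cast haM.le
          exact this
        have c1 : ((N:ℝ)+1) + 2 ≤ β * (a:ℝ) := by
          have h := le_trans (le_max_left _ _) (le_trans (le_max_left _ _) haR)
          rw [div_le_iff₀ hβ0] at h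
          linarith
        have c4 : α + E + 1 ≤ (ε/2) * (a:ℝ) := by
          have h := le_trans (le_max_right _ _) (le_trans (le_max_left _ _) haR)
          rw [div_le_iff₀ hε] at h
          have hr : ε/2*(a:ℝ) = ((a:ℝ)*ε)/2 := by ring
          linarith [hr.ge, hr.le]
        have c3 : (1:ℝ) ≤ (β - α) * (a:ℝ) := by
          have h := le_trans (le_max_left _ _) (le_trans (le_max_right _ _) haR)
          rw [div_le_iff₀ hba] at h
          linarith
        have c2 : ((N:ℝ)+1) + 1 ≤ (a:ℝ) :=
          le_trans (by linarith) (le_trans (le_max_right _ _) (le_trans (le_max_right _ _) haR))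
        have hD0 : 0 ≤ δ - ε' := by linarith
        have hD1 : δ - ε' ≤ 1 := by linarith
        have hstep := Stmt8Aux.density_step hA hα hαβ hβ havoid (N := N + 1) hD0 hD1
          (fun n hn => hNcnt n hn) haA (by push_cast; linarith) c3 (by push_cast; linarith)
        have haRpos : (0:ℝ) < (a:ℝ) := by
          have : (0:ℝ) ≤ (N:ℝ) := Nat.cast_nonneg N
          linarith
        have h3 : ((δ - ε') * β) * (a:ℝ) ≤ (α*(1 - δ + ε') + ε/2) * (a:ℝ) := by
          have hEh : α + E + 1 = α + (β*(1+α)/(β-α) + 2) + 1 := by rw [hEdef]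
          nlinarith [hstep]
        have h4 : (δ - ε') * β ≤ α*(1 - δ + ε') + ε/2 :=
          (mul_le_mul_iff_of_pos_right haRpos).mp h3
        nlinarith [hε'ε]
      by_contra hc
      push_neg at hc
      have := hmain (((α+β)*δ - α)/2) (by linarith)
      linarith
  rw [hld]
  have heq : (1 + α/β) * δ = ((α+β) * δ)/β := by
    field_simp
    ring_nf
  rw [heq]
  gcongr
end

section
/- There exist three pairwise disjoint sets A, B, C ⊆ ℕ with A ∪ B ∪ C = ℕ such that none of R(A), R(B), R(C) is dense in [0,∞). Specifically, one may take A, B, C to consist of the natural numbers whose base-5 representation begins with digit 1, with digit 2, and with digit 3 or 4, respectively. -/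
def setA : Set ℕ := {n | ∃ k, 5^k ≤ n ∧ n < 2*5^k}
def setB : Set ℕ := {n | ∃ k, 2*5^k ≤ n ∧ n < 3*5^k}
def setC : Set ℕ := {n | ∃ k, 3*5^k ≤ n ∧ n < 5*5^k}

lemma pow_dichotomy (a b : ℕ) : 5*5^b ≤ 5^a ∨ 5^a ≤ 5^b := by
  rcases le_or_gt (b+1) a with h | h
  · left
    calc 5*5^b = 5^(b+1) := by rw [pow_succ]; ring
    _ ≤ 5^a := Nat.pow_le_pow_right (by norm_num) h
  · right; exact Nat.pow_le_pow_right (by norm_num) (by omega)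

lemma not_dense_aux (S : Set ℕ) (a b t : ℝ) (ht : a < t) (ht' : t < b) (h0 : 0 ≤ t)
    (h : ∀ x ∈ ratioSet S, x ∉ Set.Ioo a b) :
    ¬ (Set.Ici (0:ℝ) ⊆ closure (ratioSet S)) := by
  intro hsub
  have h2 : closure (ratioSet S) ⊆ (Set.Ioo a b)ᶜ :=
    closure_minimal h isOpen_Ioo.isClosed_compl
  exact h2 (hsub h0) ⟨ht, ht'⟩

theorem stmt9 :
    ∃ A B C : Set ℕ,
      Disjoint A B ∧ Disjoint A C ∧ Disjoint B C ∧
      A ∪ B ∪ C = {n : ℕ | 0 < n} ∧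
      ¬ (Set.Ici (0 : ℝ) ⊆ closure (ratioSet A)) ∧
      ¬ (Set.Ici (0 : ℝ) ⊆ closure (ratioSet B)) ∧
      ¬ (Set.Ici (0 : ℝ) ⊆ closure (ratioSet C)) := by
  refine ⟨setA, setB, setC, ?_, ?_, ?_, ?_, ?_, ?_, ?_⟩
  · rw [Set.disjoint_left]
    rintro n ⟨k1, h1, h2⟩ ⟨k2, h3, h4⟩
    have hk1 : Nat.log 5 n = k1 := Nat.log_eq_of_pow_le_of_lt_pow h1
      (by rw [pow_succ]; omega)
    have hk2 : Nat.log 5 n = k2 := Nat.log_eq_of_pow_le_of_lt_pow (by omega)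
      (by rw [pow_succ]; omega)
    subst hk1; rw [hk2] at h1 h2; omega
  · rw [Set.disjoint_left]
    rintro n ⟨k1, h1, h2⟩ ⟨k2, h3, h4⟩
    have hk1 : Nat.log 5 n = k1 := Nat.log_eq_of_pow_le_of_lt_pow h1
      (by rw [pow_succ]; omega)
    have hk2 : Nat.log 5 n = k2 := Nat.log_eq_of_pow_le_of_lt_pow (by omega)
      (by rw [pow_succ]; omega)
    subst hk1; rw [hk2] at h1 h2; omega
  · rw [Set.disjoint_left]
    rintro n ⟨k1, h1, h2⟩ ⟨k2, h3, h4⟩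
    have hk1 : Nat.log 5 n = k1 := Nat.log_eq_of_pow_le_of_lt_pow (by omega)
      (by rw [pow_succ]; omega)
    have hk2 : Nat.log 5 n = k2 := Nat.log_eq_of_pow_le_of_lt_pow (by omega)
      (by rw [pow_succ]; omega)
    subst hk1; rw [hk2] at h1 h2; omega
  · ext n
    simp only [Set.mem_union, Set.mem_setOf_eq, setA, setB, setC]
    constructor
    · rintro ((⟨k, h1, h2⟩ | ⟨k, h1, h2⟩) | ⟨k, h1, h2⟩) <;>
        (have := Nat.one_le_two_pow (n := k); have h5 : 0 < 5^k := Nat.pow_pos (by norm_num); omega)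
    · intro hn
      set k := Nat.log 5 n with hk
      have h1 : 5^k ≤ n := Nat.pow_log_le_self 5 (by omega)
      have h2 : n < 5^(k+1) := Nat.lt_pow_succ_log_self (by norm_num) n
      rw [pow_succ] at h2
      rcases lt_or_ge n (2*5^k) with h | h
      · exact Or.inl (Or.inl ⟨k, h1, h⟩)
      · rcases lt_or_ge n (3*5^k) with h' | h'
        · exact Or.inl (Or.inr ⟨k, h, h'⟩)
        · exact Or.inr ⟨k, h', by omega⟩
  · refine not_dense_aux _ 2 (5/2) (9/4) (by norm_num) (by norm_num) (by norm_num) ?_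
    rintro x ⟨m, ⟨a, hm1, hm2⟩, n, ⟨b, hn1, hn2⟩, rfl⟩ ⟨hx1, hx2⟩
    have hb : 0 < 5^b := Nat.pow_pos (by norm_num)
    have hn0 : (0:ℝ) < n := by exact_mod_cast (by omega : 0 < n)
    have H1 : 2*n < m := by
      have := (lt_div_iff₀ hn0).mp hx1
      exact_mod_cast (by push_cast; linarith : ((2*n:ℕ):ℝ) < m)
    have H2 : 2*m < 5*n := by
      have := (div_lt_iff₀ hn0).mp hx2
      exact_mod_cast (by push_cast; linarith : ((2*m:ℕ):ℝ) < ((5*n:ℕ):ℝ))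
    rcases pow_dichotomy a b with h | h <;> omega
  · refine not_dense_aux _ (3/2) (10/3) 2 (by norm_num) (by norm_num) (by norm_num) ?_
    rintro x ⟨m, ⟨a, hm1, hm2⟩, n, ⟨b, hn1, hn2⟩, rfl⟩ ⟨hx1, hx2⟩
    have hb : 0 < 5^b := Nat.pow_pos (by norm_num)
    have hn0 : (0:ℝ) < n := by exact_mod_cast (by omega : 0 < n)
    have H1 : 3*n < 2*m := by
      have := (lt_div_iff₀ hn0).mp hx1
      exact_mod_cast (by push_cast; linarith : ((3*n:ℕ):ℝ) < ((2*m:ℕ):ℝ))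
    have H2 : 3*m < 10*n := by
      have := (div_lt_iff₀ hn0).mp hx2
      exact_mod_cast (by push_cast; linarith : ((3*m:ℕ):ℝ) < ((10*n:ℕ):ℝ))
    rcases pow_dichotomy a b with h | h <;> omega
  · refine not_dense_aux _ (5/3) 3 2 (by norm_num) (by norm_num) (by norm_num) ?_
    rintro x ⟨m, ⟨a, hm1, hm2⟩, n, ⟨b, hn1, hn2⟩, rfl⟩ ⟨hx1, hx2⟩
    have hb : 0 < 5^b := Nat.pow_pos (by norm_num)
    have hn0 : (0:ℝ) < n := by exact_mod_cast (by omega : 0 < n)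
    have H1 : 5*n < 3*m := by
      have := (lt_div_iff₀ hn0).mp hx1
      exact_mod_cast (by push_cast; linarith : ((5*n:ℕ):ℝ) < ((3*m:ℕ):ℝ))
    have H2 : m < 3*n := by
      have := (div_lt_iff₀ hn0).mp hx2
      exact_mod_cast (by push_cast; linarith : ((m:ℕ):ℝ) < ((3*n:ℕ):ℝ))
    rcases pow_dichotomy a b with h | h <;> omega
end

section
/- Let C = ∪_{k≥0} [3·5^k, 5·5^k) ∩ ℕ. Then for every integer ℓ, R(C) ∩ [(5/3)·5^ℓ, (3/5)·5^{ℓ+1}] = ∅; in particular R(C) is not dense in [0,∞). -/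
lemma key_empty (l : ℤ) :
    ratioSet {n : ℕ | ∃ k : ℕ, 3 * 5 ^ k ≤ n ∧ n < 5 * 5 ^ k} ∩
      Set.Icc ((5 / 3 : ℝ) * (5 : ℝ) ^ l) ((3 / 5 : ℝ) * (5 : ℝ) ^ (l + 1)) = ∅ := by
  ext x
  simp only [Set.mem_inter_iff, Set.mem_empty_iff_false, iff_false, not_and]
  rintro ⟨m, ⟨j, hj1, hj2⟩, n, ⟨k, hk1, hk2⟩, rfl⟩ ⟨h5, h6⟩
  have hnpos : (0 : ℝ) < n := by
    have : 0 < n := lt_of_lt_of_le (by positivity) hk1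
    exact_mod_cast this
  -- cast hypotheses to ℝ
  have hj1' : (3 : ℝ) * 5 ^ j ≤ m := by exact_mod_cast hj1
  have hj2' : (m : ℝ) < 5 * 5 ^ j := by exact_mod_cast hj2
  have hk1' : (3 : ℝ) * 5 ^ k ≤ n := by exact_mod_cast hk1
  have hk2' : (n : ℝ) < 5 * 5 ^ k := by exact_mod_cast hk2
  rw [div_le_iff₀ hnpos] at h6
  rw [le_div_iff₀ hnpos] at h5
  have e1 : ((3 : ℝ) / 5) * (5 : ℝ) ^ (l + 1) = 3 * (5 : ℝ) ^ l := by
    rw [zpow_add_one₀ (by norm_num : (5:ℝ) ≠ 0)]; ring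
  rw [e1] at h6
  have hz : ∀ a : ℕ, (5 : ℝ) ^ a = (5 : ℝ) ^ (a : ℤ) := fun a => (zpow_natCast _ _).symm
  rw [hz j] at hj1' hj2'
  rw [hz k] at hk1' hk2'
  -- From h5: 5 * 5^(l+k) ≤ 5/3*5^l * n ≤ m < 5 * 5^j
  have hA : (5 : ℝ) * 5 ^ ((l + k : ℤ)) < 5 * 5 ^ ((j : ℤ)) := by
    have h1 : (5 / 3 : ℝ) * 5 ^ l * (3 * 5 ^ (k : ℤ)) ≤ (5/3) * 5^l * n := by
      have : (0:ℝ) < (5/3) * 5^l := by positivity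
      nlinarith [this]
    calc (5 : ℝ) * 5 ^ ((l + k : ℤ)) = (5/3 : ℝ) * 5 ^ l * (3 * 5 ^ (k:ℤ)) := by
          rw [zpow_add₀ (by norm_num : (5:ℝ) ≠ 0)]; ring
      _ ≤ (5/3) * 5^l * n := h1
      _ ≤ m := h5
      _ < 5 * 5 ^ ((j:ℤ)) := hj2'
  have hB : (3 : ℝ) * 5 ^ ((j : ℤ)) < 3 * 5 * 5 ^ ((l + k : ℤ)) := by
    calc (3 : ℝ) * 5 ^ ((j:ℤ)) ≤ m := hj1'
      _ ≤ 3 * 5^l * n := h6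
      _ < 3 * 5^l * (5 * 5 ^ (k:ℤ)) := by
          have : (0:ℝ) < 3 * 5^l := by positivity
          nlinarith [this]
      _ = 3 * 5 * 5 ^ ((l + k : ℤ)) := by
          rw [zpow_add₀ (by norm_num : (5:ℝ) ≠ 0)]; ring
  have h1 : (5 : ℝ) ^ ((l + k : ℤ)) < 5 ^ ((j : ℤ)) := by linarith
  have h2 : (5 : ℝ) ^ ((j : ℤ)) < 5 ^ ((l + k + 1 : ℤ)) := by
    rw [zpow_add_one₀ (by norm_num : (5:ℝ) ≠ 0)]; linarith
  have hlt1 : (l + k : ℤ) < j := by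
    exact_mod_cast (zpow_lt_zpow_iff_right₀ (by norm_num : (1:ℝ) < 5)).mp h1
  have hlt2 : (j : ℤ) < l + k + 1 := by
    exact_mod_cast (zpow_lt_zpow_iff_right₀ (by norm_num : (1:ℝ) < 5)).mp h2
  omega

theorem stmt10 :
    (∀ l : ℤ,
      ratioSet {n : ℕ | ∃ k : ℕ, 3 * 5 ^ k ≤ n ∧ n < 5 * 5 ^ k} ∩
        Set.Icc ((5 / 3 : ℝ) * (5 : ℝ) ^ l) ((3 / 5 : ℝ) * (5 : ℝ) ^ (l + 1)) = ∅) ∧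
    ¬ (Set.Ici (0 : ℝ) ⊆
        closure (ratioSet {n : ℕ | ∃ k : ℕ, 3 * 5 ^ k ≤ n ∧ n < 5 * 5 ^ k})) := by
  refine ⟨key_empty, ?_⟩
  intro hsub
  set R := ratioSet {n : ℕ | ∃ k : ℕ, 3 * 5 ^ k ≤ n ∧ n < 5 * 5 ^ k}
  have h0 := key_empty 0
  simp only [zpow_zero, mul_one] at h0
  have hsubset : R ⊆ (Set.Ioo (5/3 : ℝ) 3)ᶜ := by
    intro x hx hmem
    have : x ∈ R ∩ Set.Icc ((5/3 : ℝ) * (5:ℝ)^(0:ℤ)) ((3/5 : ℝ) * (5:ℝ)^((0:ℤ)+1)) := by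
      refine ⟨hx, ?_⟩
      constructor
      · simp only [zpow_zero, mul_one]; exact le_of_lt hmem.1
      · have : (3/5 : ℝ) * (5:ℝ)^((0:ℤ)+1) = 3 := by norm_num
        rw [this]; exact le_of_lt hmem.2
    rw [key_empty 0] at this
    exact this
  have hcl : closure R ⊆ (Set.Ioo (5/3 : ℝ) 3)ᶜ :=
    closure_minimal hsubset (isOpen_Ioo.isClosed_compl)
  have h2 : (2 : ℝ) ∈ closure R := hsub (by norm_num : (2:ℝ) ∈ Set.Ici 0)
  exact hcl h2 (by norm_num)
end

section
/- If A and B are disjoint subsets of ℕ with A ∪ B = ℕ, then at least one of R(A), R(B) is dense in [0,∞). -/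
/-- A set containing all naturals from some positive `N` on has dense ratio set. -/
lemma cofinite_dense {S : Set ℕ} (N : ℕ) (hN : 1 ≤ N) (h : ∀ k, N ≤ k → k ∈ S) :
    Set.Ici (0:ℝ) ⊆ closure (ratioSet S) := by
  intro x hx
  rw [Metric.mem_closure_iff]
  intro ε hε
  obtain ⟨n, hn⟩ := exists_nat_gt (max (N:ℝ) (((N:ℝ)+1)/ε))
  have hnN : (N:ℝ) ≤ n := le_of_lt (lt_of_le_of_lt (le_max_left _ _) hn)
  have hnN' : N ≤ n := by exact_mod_cast hnN
  have hn0 : (0:ℝ) < n := lt_of_lt_of_le (by exact_mod_cast hN) hnN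
  have hne : ((N:ℝ)+1)/ε < n := lt_of_le_of_lt (le_max_right _ _) hn
  have hx0 : (0:ℝ) ≤ x := hx
  set m : ℕ := ⌈x * n⌉₊ + N with hm
  have hxn : (0:ℝ) ≤ x * n := by positivity
  have h1 : x * n ≤ (⌈x * n⌉₊ : ℝ) := Nat.le_ceil _
  have h2 : (⌈x * n⌉₊ : ℝ) < x * n + 1 := Nat.ceil_lt_add_one hxn
  refine ⟨(m:ℝ)/n, ⟨m, h m (by omega), n, h n hnN', rfl⟩, ?_⟩
  have hmr : (m:ℝ) = (⌈x * n⌉₊ : ℝ) + N := by push_cast [hm]; ring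
  have hub : (m:ℝ)/n - x < ε := by
    rw [div_sub' (ne_of_gt hn0), div_lt_iff₀ hn0]
    have hNe : (N:ℝ) + 1 < ε * n := by
      rw [div_lt_iff₀ hε] at hne; linarith [hne]
    nlinarith [h2]
  have hlb : 0 < (m:ℝ)/n - x := by
    have hNpos : (0:ℝ) < N := by exact_mod_cast hN
    have : x < (m:ℝ)/n := by
      rw [lt_div_iff₀ hn0]; nlinarith [h1]
    linarith
  rw [Real.dist_eq, abs_lt]
  constructor <;> [linarith; linarith]

/-- Decompose a real in a product of open intervals. -/
lemma decomp {a b a' b' s : ℝ} (ha : 1 ≤ a) (hab : a < b) (ha' : 1 ≤ a') (hab' : a' < b')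
    (h1 : a * a' < s) (h2 : s < b * b') :
    ∃ u v : ℝ, a < u ∧ u < b ∧ a' < v ∧ v < b' ∧ s = u * v := by
  have ha0 : (0:ℝ) < a := lt_of_lt_of_le one_pos ha
  have ha'0 : (0:ℝ) < a' := lt_of_lt_of_le one_pos ha'
  have hb0 : (0:ℝ) < b := lt_trans ha0 hab
  have hs0 : (0:ℝ) < s := lt_trans (by positivity) h1
  set lo := max a' (s/b) with hlo
  set hi := min b' (s/a) with hhi
  have h3 : a' < s/a := by rw [lt_div_iff₀ ha0]; nlinarith
  have h4 : s/b < b' := by rw [div_lt_iff₀ hb0]; nlinarith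
  have h5 : s/b < s/a := by
    apply div_lt_div_of_pos_left hs0 ha0 hab
  have hlohi : lo < hi := by
    rw [hlo, hhi, max_lt_iff, lt_min_iff, lt_min_iff]
    exact ⟨⟨hab', h3⟩, ⟨h4, h5⟩⟩
  set v := (lo + hi)/2 with hv
  have hv1 : lo < v := by rw [hv]; linarith
  have hv2 : v < hi := by rw [hv]; linarith
  have hva' : a' < v := lt_of_le_of_lt (le_max_left _ _) hv1
  have hvb' : v < b' := lt_of_lt_of_le hv2 (min_le_left _ _)
  have hv0 : (0:ℝ) < v := lt_trans ha'0 hva'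
  refine ⟨s/v, v, ?_, ?_, hva', hvb', ?_⟩
  · rw [lt_div_iff₀ hv0]
    have : v < s/a := lt_of_lt_of_le hv2 (min_le_right _ _)
    rw [lt_div_iff₀ ha0] at this; linarith [this]
  · rw [div_lt_iff₀ hv0]
    have : s/b < v := lt_of_le_of_lt (le_max_right _ _) hv1
    rw [div_lt_iff₀ hb0] at this; nlinarith [this]
  · rw [div_mul_cancel₀ _ (ne_of_gt hv0)]

/-- One step: if `n ∈ A` and `R(A)` avoids `(a,b)`, then near `u·n` there is an element of `B`. -/
lemma stepLemma {A B : Set ℕ} (hunion : A ∪ B = {n : ℕ | 0 < n})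
    {a b : ℝ} (hav : ∀ m ∈ A, ∀ n ∈ A, ¬(a < (m:ℝ)/(n:ℝ) ∧ (m:ℝ)/(n:ℝ) < b))
    {u : ℝ} (hau : a < u) (hub : u < b) (hu0 : 0 < u) {n : ℕ} (hnA : n ∈ A)
    (hn0 : 0 < n) (hn : 1/(b-u) < (n:ℝ)) :
    ∃ m ∈ B, 0 < m ∧ u * n ≤ (m:ℝ) ∧ (m:ℝ) ≤ u * n + 1 := by
  have hn0' : (0:ℝ) < n := by exact_mod_cast hn0
  set m : ℕ := ⌈u * (n:ℝ)⌉₊ with hm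
  have hun : (0:ℝ) < u * n := by positivity
  have h1 : u * (n:ℝ) ≤ m := Nat.le_ceil _
  have h2 : (m:ℝ) ≤ u * n + 1 := le_of_lt (Nat.ceil_lt_add_one hun.le)
  have hm0 : 0 < m := Nat.ceil_pos.mpr hun
  have hbu : 0 < b - u := by linarith
  have hinv : 1 / (n:ℝ) < b - u := by
    rw [div_lt_iff₀ hbu] at hn
    rw [div_lt_iff₀ hn0']; linarith [hn]
  have hr1 : a < (m:ℝ)/n := by
    rw [lt_div_iff₀ hn0']; nlinarith [h1]
  have hr2 : (m:ℝ)/n < b := by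
    rw [div_lt_iff₀ hn0']
    rw [div_lt_iff₀ hn0'] at hinv
    nlinarith [h2]
  have hmA : m ∉ A := fun hmem => hav m hmem n hnA ⟨hr1, hr2⟩
  have hmem : m ∈ A ∪ B := by rw [hunion]; exact hm0
  exact ⟨m, hmem.resolve_left hmA, hm0, h1, h2⟩

/-- Composite step A → B → A multiplying by `u*v`. -/
lemma compStep {A B : Set ℕ} (hunion : A ∪ B = {n : ℕ | 0 < n})
    {a b a' b' : ℝ} (h1a : 1 ≤ a) (h1a' : 1 ≤ a')
    (havA : ∀ m ∈ A, ∀ n ∈ A, ¬(a < (m:ℝ)/(n:ℝ) ∧ (m:ℝ)/(n:ℝ) < b))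
    (havB : ∀ m ∈ B, ∀ n ∈ B, ¬(a' < (m:ℝ)/(n:ℝ) ∧ (m:ℝ)/(n:ℝ) < b'))
    {u v : ℝ} (hau : a < u) (hub : u < b) (hav' : a' < v) (hvb : v < b')
    {n : ℕ} (hnA : n ∈ A) (hn0 : 0 < n)
    (hT : max (1/(b-u)) (1/(b'-v)) < (n:ℝ)) :
    ∃ m ∈ A, 0 < m ∧ u*v*n ≤ (m:ℝ) ∧ (m:ℝ) ≤ u*v*n + v + 1 := by
  have hu0 : 0 < u := lt_of_lt_of_le (lt_of_lt_of_le one_pos h1a) hau.le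
  have hv0 : 0 < v := lt_of_lt_of_le (lt_of_lt_of_le one_pos h1a') hav'.le
  have hu1 : 1 ≤ u := le_trans h1a hau.le
  obtain ⟨m₁, hm₁B, hm₁0, hl₁, hu₁⟩ :=
    stepLemma hunion havA hau hub hu0 hnA hn0
      (lt_of_le_of_lt (le_max_left _ _) hT)
  have hunion' : B ∪ A = {n : ℕ | 0 < n} := by rw [Set.union_comm]; exact hunion
  have hn0' : (0:ℝ) < n := by exact_mod_cast hn0
  have hm₁big : 1/(b'-v) < (m₁:ℝ) := by
    have : (n:ℝ) ≤ m₁ := le_trans (by nlinarith) hl₁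
    exact lt_of_lt_of_le (lt_of_le_of_lt (le_max_right _ _) hT) this
  obtain ⟨m₂, hm₂A, hm₂0, hl₂, hu₂⟩ :=
    stepLemma hunion' havB hav' hvb hv0 hm₁B hm₁0 hm₁big
  refine ⟨m₂, hm₂A, hm₂0, ?_, ?_⟩
  · nlinarith [hl₁, hl₂]
  · nlinarith [hu₁, hu₂]

/-- Iterated composite step. -/
lemma iterLemma {A B : Set ℕ} (hunion : A ∪ B = {n : ℕ | 0 < n})
    {a b a' b' : ℝ} (h1a : 1 ≤ a) (h1a' : 1 ≤ a')
    (havA : ∀ m ∈ A, ∀ n ∈ A, ¬(a < (m:ℝ)/(n:ℝ) ∧ (m:ℝ)/(n:ℝ) < b))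
    (havB : ∀ m ∈ B, ∀ n ∈ B, ¬(a' < (m:ℝ)/(n:ℝ) ∧ (m:ℝ)/(n:ℝ) < b'))
    {u v : ℝ} (hau : a < u) (hub : u < b) (hav' : a' < v) (hvb : v < b') :
    ∀ k : ℕ, ∃ E : ℝ, 0 ≤ E ∧ ∃ T : ℝ, ∀ n ∈ A, 0 < n → T ≤ (n:ℝ) →
      ∃ m ∈ A, 0 < m ∧ (u*v)^k * n ≤ (m:ℝ) ∧ (m:ℝ) ≤ (u*v)^k * n + E ∧ (n:ℝ) ≤ (m:ℝ) := by
  have hu1 : 1 ≤ u := le_trans h1a hau.le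
  have hv1 : 1 ≤ v := le_trans h1a' hav'.le
  have hs1 : 1 ≤ u*v := by nlinarith
  have hs0 : 0 < u*v := by linarith
  intro k
  induction k with
  | zero =>
    refine ⟨0, le_refl _, 1, fun n hnA hn0 _ => ⟨n, hnA, hn0, ?_, ?_, le_refl _⟩⟩ <;> simp
  | succ k ih =>
    obtain ⟨E, hE, T, hT⟩ := ih
    refine ⟨(u*v)*E + v + 1, by nlinarith, max T (max (1/(b-u)) (1/(b'-v)) + 1), ?_⟩
    intro n hnA hn0 hn
    obtain ⟨m, hmA, hm0, hml, hmu, hnm⟩ :=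
      hT n hnA hn0 (le_trans (le_max_left _ _) hn)
    have hmbig : max (1/(b-u)) (1/(b'-v)) < (m:ℝ) := by
      have := le_trans (le_max_right _ _) hn
      linarith [hnm]
    obtain ⟨m₂, hm₂A, hm₂0, hl₂, hu₂⟩ :=
      compStep hunion h1a h1a' havA havB hau hub hav' hvb hmA hm0 hmbig
    have hn0' : (0:ℝ) < n := by exact_mod_cast hn0
    have hm0' : (0:ℝ) < m := by exact_mod_cast hm0
    refine ⟨m₂, hm₂A, hm₂0, ?_, ?_, ?_⟩
    · have : (u*v)^(k+1) * n = (u*v) * ((u*v)^k * n) := by ring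
      rw [this]
      calc (u*v) * ((u*v)^k * n) ≤ (u*v) * m := by nlinarith
        _ ≤ m₂ := by nlinarith
    · have : (u*v)^(k+1) * n + ((u*v)*E + v + 1)
          = (u*v) * ((u*v)^k * n + E) + v + 1 := by ring
      rw [this]
      nlinarith
    · calc (n:ℝ) ≤ m := hnm
        _ ≤ u*v*m := by nlinarith
        _ ≤ m₂ := hl₂

/-- Extract a forbidden interval `(a,b)` with `1 ≤ a` from non-density. -/
lemma extract {S : Set ℕ} (hS : S ⊆ {n : ℕ | 0 < n}) (hinf : S.Infinite)
    (h : ¬ Set.Ici (0:ℝ) ⊆ closure (ratioSet S)) :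
    ∃ a b : ℝ, 1 ≤ a ∧ a < b ∧ ∀ m ∈ S, ∀ n ∈ S, ¬(a < (m:ℝ)/(n:ℝ) ∧ (m:ℝ)/(n:ℝ) < b) := by
  rw [Set.subset_def] at h
  push_neg at h
  obtain ⟨x, hx0, hx⟩ := h
  have hx0' : (0:ℝ) ≤ x := hx0
  rw [Metric.mem_closure_iff] at hx
  push_neg at hx
  obtain ⟨ε, hε, hball⟩ := hx
  have h1 : ∀ m ∈ S, ∀ n ∈ S, ¬(x - ε < (m:ℝ)/(n:ℝ) ∧ (m:ℝ)/(n:ℝ) < x + ε) := by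
    intro m hm n hn ⟨hl, hr⟩
    have h2 := hball ((m:ℝ)/n) ⟨m, hm, n, hn, rfl⟩
    rw [Real.dist_eq] at h2
    have h3 : |x - (m:ℝ)/n| < ε := abs_lt.mpr ⟨by linarith, by linarith⟩
    linarith
  obtain ⟨a₀, ha₀⟩ := hinf.nonempty
  have ha₀0 : 0 < a₀ := hS ha₀
  have ha₀0' : (0:ℝ) < a₀ := by exact_mod_cast ha₀0
  have h11 : ¬(x - ε < 1 ∧ (1:ℝ) < x + ε) := by
    have := h1 a₀ ha₀ a₀ ha₀
    rwa [div_self (ne_of_gt ha₀0')] at this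
  rw [not_and_or, not_lt, not_lt] at h11
  rcases h11 with hcase | hcase
  · exact ⟨x - ε, x + ε, hcase, by linarith, h1⟩
  · -- x + ε ≤ 1
    have hxε : 0 < x + ε := by linarith
    rcases le_or_gt (x - ε) 0 with hneg | hpos
    · -- contradiction with infinitude
      exfalso
      obtain ⟨n, hnS, hn⟩ := hinf.exists_gt ⌈(a₀:ℝ)/(x+ε)⌉₊
      have hn' : (a₀:ℝ)/(x+ε) < n := by
        calc (a₀:ℝ)/(x+ε) ≤ ⌈(a₀:ℝ)/(x+ε)⌉₊ := Nat.le_ceil _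
          _ < n := by exact_mod_cast hn
      have hn0 : (0:ℝ) < n := lt_of_le_of_lt (by positivity) hn'
      apply h1 a₀ ha₀ n hnS
      constructor
      · calc x - ε ≤ 0 := hneg
          _ < (a₀:ℝ)/n := by positivity
      · rw [div_lt_iff₀ hn0]
        rw [div_lt_iff₀ hxε] at hn'
        nlinarith
    · -- invert the interval
      refine ⟨1/(x+ε), 1/(x-ε), ?_, ?_, ?_⟩
      · rw [le_div_iff₀ hxε]; linarith
      · rw [div_lt_div_iff₀ hxε hpos]; linarith
      · intro m hm n hn ⟨hl, hr⟩
        have hm0 : (0:ℝ) < m := by exact_mod_cast hS hm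
        have hn0 : (0:ℝ) < n := by exact_mod_cast hS hn
        apply h1 n hn m hm
        rw [div_lt_div_iff₀ hxε (by positivity)] at hl
        rw [div_lt_div_iff₀ (by positivity) hpos] at hr
        constructor
        · rw [lt_div_iff₀ hm0]; nlinarith
        · rw [div_lt_iff₀ hm0]; nlinarith

theorem stmt11 (A B : Set ℕ) (hdisj : Disjoint A B) (hunion : A ∪ B = {n : ℕ | 0 < n}) :
    Set.Ici (0 : ℝ) ⊆ closure (ratioSet A) ∨
    Set.Ici (0 : ℝ) ⊆ closure (ratioSet B) := by
  by_contra hcon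
  push_neg at hcon
  obtain ⟨hA, hB⟩ := hcon
  have hApos : A ⊆ {n : ℕ | 0 < n} := by
    intro n hn; rw [← hunion]; exact Or.inl hn
  have hBpos : B ⊆ {n : ℕ | 0 < n} := by
    intro n hn; rw [← hunion]; exact Or.inr hn
  -- finite cases
  rcases A.finite_or_infinite with hAf | hAinf
  · obtain ⟨N, hN⟩ := hAf.bddAbove
    apply hB
    apply cofinite_dense (N+1) (by omega)
    intro k hk
    have hk0 : 0 < k := by omega
    have : k ∈ A ∪ B := by rw [hunion]; exact hk0
    rcases this with hkA | hkB
    · exact absurd (hN hkA) (by omega)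
    · exact hkB
  rcases B.finite_or_infinite with hBf | hBinf
  · obtain ⟨N, hN⟩ := hBf.bddAbove
    apply hA
    apply cofinite_dense (N+1) (by omega)
    intro k hk
    have hk0 : 0 < k := by omega
    have : k ∈ A ∪ B := by rw [hunion]; exact hk0
    rcases this with hkA | hkB
    · exact hkA
    · exact absurd (hN hkB) (by omega)
  obtain ⟨a, b, h1a, hab, havA⟩ := extract hApos hAinf hA
  obtain ⟨a', b', h1a', hab', havB⟩ := extract hBpos hBinf hB
  have ha0 : (0:ℝ) < a := lt_of_lt_of_le one_pos h1a
  have ha'0 : (0:ℝ) < a' := lt_of_lt_of_le one_pos h1a'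
  have hb1 : 1 < b := lt_of_le_of_lt h1a hab
  have hb'1 : 1 < b' := lt_of_le_of_lt h1a' hab'
  set μ := (a+b)/2 with hμ
  have hμa : a < μ := by rw [hμ]; linarith
  have hμb : μ < b := by rw [hμ]; linarith
  have hμ1 : 1 < μ := lt_of_le_of_lt h1a hμa
  set s := (a*a' + b*b')/2 with hs
  have haabb : a*a' < b*b' := by nlinarith
  have hsl : a*a' < s := by rw [hs]; linarith
  have hsu : s < b*b' := by rw [hs]; linarith
  have hs0 : (0:ℝ) < s := lt_trans (by positivity) hsl
  set c := b*b'/s with hc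
  have hc1 : 1 < c := by rw [hc, lt_div_iff₀ hs0]; linarith
  -- choose k with μ < c^k
  obtain ⟨k, hk⟩ := pow_unbounded_of_one_lt μ hc1
  have hk0 : k ≠ 0 := by
    rintro rfl; simp at hk; linarith
  have hk0' : (0:ℝ) < k := by
    have : 0 < k := Nat.pos_of_ne_zero hk0
    exact_mod_cast this
  set ρ := μ ^ ((k:ℝ)⁻¹) with hρ
  have hρ1 : 1 < ρ := by
    rw [hρ]
    exact (Real.one_lt_rpow_iff_of_pos (by linarith)).mpr (Or.inl ⟨hμ1, by positivity⟩)
  have hρc : ρ < c := by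
    have h0μ : (0:ℝ) ≤ μ := by linarith
    have := Real.rpow_lt_rpow h0μ hk (by positivity : (0:ℝ) < (k:ℝ)⁻¹)
    rwa [← Real.rpow_natCast c k, ← Real.rpow_mul (by linarith : (0:ℝ) ≤ c),
      mul_inv_cancel₀ (ne_of_gt hk0'), Real.rpow_one] at this
  have hρk : ρ ^ k = μ := by
    rw [hρ, ← Real.rpow_natCast (μ ^ ((k:ℝ)⁻¹)) k, ← Real.rpow_mul (by linarith : (0:ℝ) ≤ μ),
      inv_mul_cancel₀ (ne_of_gt hk0'), Real.rpow_one]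
  set t := s * ρ with ht
  have htl : a*a' < t := by nlinarith
  have htu : t < b*b' := by
    have : s * ρ < s * c := by nlinarith
    rw [ht]
    calc s * ρ < s * c := this
      _ = b*b' := by rw [hc]; field_simp
  obtain ⟨u, v, hau, hub, hav', hvb, hsuv⟩ := decomp h1a hab h1a' hab' hsl hsu
  obtain ⟨u', v', hau', hub', hav'', hvb', htuv⟩ := decomp h1a hab h1a' hab' htl htu
  obtain ⟨E, hE, T, hT⟩ := iterLemma hunion h1a h1a' havA havB hau hub hav' hvb k
  obtain ⟨E', hE', T', hT'⟩ := iterLemma hunion h1a h1a' havA havB hau' hub' hav'' hvb' k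
  set P := s ^ k with hP
  have hP0 : 0 < P := by positivity
  have hPuv : (u*v)^k = P := by rw [hP, hsuv]
  have hQuv : (u'*v')^k = P * μ := by
    rw [hP, ← htuv, ht, mul_pow, hρk]
  -- choose n large
  set M := max T (max T' (max 1 (max (a*E/(P*(μ-a)) + 1) (E'/(P*(b-μ)) + 1)))) with hM
  obtain ⟨n, hnA, hn⟩ := hAinf.exists_gt ⌈M⌉₊
  have hnM : M ≤ (n:ℝ) := by
    calc M ≤ ⌈M⌉₊ := Nat.le_ceil _
      _ ≤ n := by exact_mod_cast hn.le
  have hM1 : T ≤ M := le_max_left _ _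
  have hM2 : T' ≤ M := le_trans (le_max_left _ _) (le_max_right _ _)
  have hM3 : (1:ℝ) ≤ M :=
    le_trans (le_max_left _ _) (le_trans (le_max_right _ _) (le_max_right _ _))
  have hM4 : a*E/(P*(μ-a)) + 1 ≤ M :=
    le_trans (le_max_left _ _) (le_trans (le_max_right _ _)
      (le_trans (le_max_right _ _) (le_max_right _ _)))
  have hM5 : E'/(P*(b-μ)) + 1 ≤ M :=
    le_trans (le_max_right _ _) (le_trans (le_max_right _ _)
      (le_trans (le_max_right _ _) (le_max_right _ _)))
  have hn1 : (1:ℝ) ≤ n := le_trans hM3 hnM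
  have hn0 : 0 < n := by exact_mod_cast lt_of_lt_of_le one_pos hn1
  have hn0' : (0:ℝ) < n := by exact_mod_cast hn0
  obtain ⟨m, hmA, hm0, hml, hmu, _⟩ :=
    hT n hnA hn0 (le_trans hM1 hnM)
  obtain ⟨m', hm'A, hm'0, hm'l, hm'u, _⟩ :=
    hT' n hnA hn0 (le_trans hM2 hnM)
  rw [hPuv] at hml hmu
  rw [hQuv] at hm'l hm'u
  have hm0' : (0:ℝ) < m := by exact_mod_cast hm0
  have hnE : a*E/(P*(μ-a)) + 1 ≤ (n:ℝ) := le_trans hM4 hnM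
  have hnE' : E'/(P*(b-μ)) + 1 ≤ (n:ℝ) := by
    exact le_trans hM5 hnM
  have hPμa : 0 < P*(μ-a) := by
    apply mul_pos hP0; linarith
  have hPbμ : 0 < P*(b-μ) := by
    apply mul_pos hP0; linarith
  have key1 : a*E < P*(μ-a)*n := by
    have h := (div_lt_iff₀ hPμa).mp (show a*E/(P*(μ-a)) < n by linarith)
    calc a*E < (n:ℝ) * (P*(μ-a)) := h
      _ = P*(μ-a)*n := by ring
  have key2 : E' < P*(b-μ)*n := by
    have h := (div_lt_iff₀ hPbμ).mp (show E'/(P*(b-μ)) < n by linarith)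
    calc E' < (n:ℝ) * (P*(b-μ)) := h
      _ = P*(b-μ)*n := by ring
  apply havA m' hm'A m hmA
  have hb0 : (0:ℝ) < b := by linarith
  constructor
  · rw [lt_div_iff₀ hm0']
    have f1 : a*(m:ℝ) ≤ a*(P*n + E) := mul_le_mul_of_nonneg_left hmu ha0.le
    have f2 : a*(P*n + E) = a*(P*(n:ℝ)) + a*E := by ring
    have f3 : P*(μ-a)*n = P*μ*(n:ℝ) - a*(P*(n:ℝ)) := by ring
    linarith [f1, f2, f3, key1, hm'l]
  · rw [div_lt_iff₀ hm0']
    have f1 : b*(P*(n:ℝ)) ≤ b*(m:ℝ) := mul_le_mul_of_nonneg_left hml hb0.le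
    have f2 : P*(b-μ)*n = b*(P*(n:ℝ)) - P*μ*(n:ℝ) := by ring
    linarith [f1, f2, key2, hm'u]
end

section
/- The set A = {2^j : j ≥ 2} ∪ {3^k : k ≥ 2} has a quotient set R(A) that is dense in [0,∞). -/
set_option maxHeartbeats 1000000


lemma no_rel : ∀ m n : ℤ, (m:ℝ) * Real.log 2 = (n:ℝ) * Real.log 3 → m = 0 := by
  have L2pos : 0 < Real.log 2 := Real.log_pos (by norm_num)
  have L3pos : 0 < Real.log 3 := Real.log_pos (by norm_num)
  -- first handle positive m
  have key : ∀ m n : ℤ, 0 < m → (m:ℝ) * Real.log 2 = (n:ℝ) * Real.log 3 → False := by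
    intro m n hm h
    have hn : 0 < n := by
      by_contra hn
      push_neg at hn
      have hm' : (0:ℝ) < m := by exact_mod_cast hm
      have hn2 : (n:ℝ) ≤ 0 := by exact_mod_cast hn
      nlinarith
    lift m to ℕ using hm.le with m'
    lift n to ℕ using hn.le with n'
    have hm' : 1 ≤ m' := by exact_mod_cast hm
    have hn' : 1 ≤ n' := by exact_mod_cast hn
    have hlog : Real.log ((2:ℝ) ^ m') = Real.log ((3:ℝ) ^ n') := by
      rw [Real.log_pow, Real.log_pow]; exact_mod_cast h
    have hpow : (2:ℝ) ^ m' = (3:ℝ) ^ n' :=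
      Real.log_injOn_pos (Set.mem_Ioi.2 (by positivity)) (Set.mem_Ioi.2 (by positivity)) hlog
    have hnat : (2:ℕ) ^ m' = 3 ^ n' := by exact_mod_cast hpow
    have h2 : (2:ℕ) ∣ 3 ^ n' := hnat ▸ dvd_pow_self 2 (by omega)
    have := (Nat.prime_two.dvd_of_dvd_pow h2)
    omega
  intro m n h
  rcases lt_trichotomy m 0 with hm | hm | hm
  · exact absurd (key (-m) (-n) (by omega) (by push_cast; linarith)) (fun f => f.elim)
  · exact hm
  · exact absurd (key m n hm h) (fun f => f.elim)

/-- the subgroup of ℤ-combinations of log 2 and log 3 -/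
noncomputable def Slog : AddSubgroup ℝ where
  carrier := {x : ℝ | ∃ a b : ℤ, x = (a:ℝ) * Real.log 2 + (b:ℝ) * Real.log 3}
  zero_mem' := ⟨0, 0, by norm_num⟩
  add_mem' := by
    rintro x y ⟨a, b, rfl⟩ ⟨c, d, rfl⟩
    exact ⟨a + c, b + d, by push_cast; ring⟩
  neg_mem' := by
    rintro x ⟨a, b, rfl⟩
    exact ⟨-a, -b, by push_cast; ring⟩

lemma dense_Slog : Dense {x : ℝ | ∃ a b : ℤ, x = (a:ℝ) * Real.log 2 + (b:ℝ) * Real.log 3} := by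
  have L2pos : 0 < Real.log 2 := Real.log_pos (by norm_num)
  have L3pos : 0 < Real.log 3 := Real.log_pos (by norm_num)
  rcases Slog.dense_or_cyclic with h | ⟨g, hg⟩
  · exact h
  · exfalso
    have h2 : Real.log 2 ∈ Slog := ⟨1, 0, by norm_num⟩
    have h3 : Real.log 3 ∈ Slog := ⟨0, 1, by norm_num⟩
    rw [hg, AddSubgroup.mem_closure_singleton] at h2 h3
    obtain ⟨m, hm⟩ := h2
    obtain ⟨n, hn⟩ := h3
    rw [zsmul_eq_mul] at hm hn
    have hrel : (n:ℝ) * Real.log 2 = (m:ℝ) * Real.log 3 := by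
      rw [← hm, ← hn]; ring
    have hn0 : n = 0 := no_rel n m hrel
    rw [hn0] at hn
    norm_num at hn
    linarith

lemma key_approx (t ε : ℝ) (hε : 0 < ε) :
    ∃ k j : ℕ, 2 ≤ k ∧ 2 ≤ j ∧ |(k:ℝ) * Real.log 3 - (j:ℝ) * Real.log 2 - t| < ε := by
  have L2pos : 0 < Real.log 2 := Real.log_pos (by norm_num)
  have L2lt : Real.log 2 < 1 := by
    calc Real.log 2 < 0.6931471808 := Real.log_two_lt_d9
      _ < 1 := by norm_num
  have L2gt : (2:ℝ)/3 < Real.log 2 := by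
    calc (2:ℝ)/3 < 0.6931471803 := by norm_num
      _ < Real.log 2 := Real.log_two_gt_d9
  have L3gt : (1:ℝ) < Real.log 3 := by
    rw [Real.lt_log_iff_exp_lt (by norm_num : (0:ℝ) < 3)]
    calc Real.exp 1 < 2.7182818286 := Real.exp_one_lt_d9
      _ < 3 := by norm_num
  set L2 := Real.log 2
  set L3 := Real.log 3
  -- reduce to small ε
  wlog hε2 : ε ≤ 1/2 generalizing ε
  · obtain ⟨k, j, hk, hj, h⟩ := this (1/2) (by norm_num) le_rfl
    exact ⟨k, j, hk, hj, h.trans_le (by linarith)⟩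
  -- a small nonzero element with positive log-3 coefficient
  obtain ⟨a, b, hb, δ, hδdef, hδpos, hδlt⟩ :
      ∃ (a b : ℤ), 1 ≤ b ∧ ∃ δ : ℝ, δ = (a:ℝ) * L2 + (b:ℝ) * L3 ∧ 0 < |δ| ∧ |δ| < ε := by
    obtain ⟨x, ⟨a₀, b₀, hx⟩, hx1, hx2⟩ :=
      dense_Slog.exists_mem_open isOpen_Ioo (⟨ε/2, by constructor <;> linarith⟩ :
        (Set.Ioo (0:ℝ) ε).Nonempty)
    have hb₀ : b₀ ≠ 0 := by
      rintro rfl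
      rw [hx] at hx1 hx2
      norm_num at hx1 hx2
      have ha : 1 ≤ a₀ := by
        by_contra h
        push_neg at h
        have : (a₀:ℝ) ≤ 0 := by exact_mod_cast (by omega : a₀ ≤ 0)
        nlinarith
      have : (1:ℝ) ≤ (a₀:ℝ) := by exact_mod_cast ha
      nlinarith
    rcases hb₀.lt_or_gt with hb₀n | hb₀p
    · exact ⟨-a₀, -b₀, by omega, -x, by rw [hx]; push_cast; ring,
        by rw [abs_neg]; rw [abs_of_pos hx1]; exact hx1,
        by rw [abs_neg, abs_of_pos hx1]; exact hx2⟩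
    · exact ⟨a₀, b₀, hb₀p, x, hx, by rw [abs_of_pos hx1]; exact hx1,
        by rw [abs_of_pos hx1]; exact hx2⟩
  have hδne : δ ≠ 0 := abs_pos.1 hδpos
  -- big shift
  set P : ℕ := ⌈6*|t|⌉₊ + 12 with hPdef
  have hP : 6*|t| + 12 ≤ (P:ℝ) := by
    have := Nat.le_ceil (6*|t|)
    push_cast [hPdef]
    linarith
  -- sign
  set s : ℤ := if 0 < δ then 1 else -1 with hsdef
  have hs : ((s:ℝ) = 1 ∧ 0 < δ) ∨ ((s:ℝ) = -1 ∧ δ < 0) := by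
    rcases hδne.lt_or_gt with h | h
    · right; refine ⟨?_, h⟩; simp [hsdef, not_lt.2 h.le]
    · left; refine ⟨?_, h⟩; simp [hsdef, h]
  have hsδ : (s:ℝ) * δ = |δ| := by
    rcases hs with ⟨h1, h2⟩ | ⟨h1, h2⟩
    · rw [h1, abs_of_pos h2]; ring
    · rw [h1, abs_of_neg h2]; ring
  set τ : ℝ := t + (s:ℝ) * P * L2 with hτdef
  have habs_t : -|t| ≤ t ∧ t ≤ |t| := ⟨neg_abs_le t, le_abs_self t⟩
  have hPL2 : 4*|t| + 8 ≤ (P:ℝ) * L2 := by nlinarith [abs_nonneg t]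
  have hsτ : 3*|t| + 8 ≤ (s:ℝ) * τ := by
    rcases hs with ⟨h1, _⟩ | ⟨h1, _⟩ <;> rw [h1] <;> simp [hτdef, h1] <;> nlinarith
  have hττ : (s:ℝ) * τ = |τ| := by
    have h0 : 0 < (s:ℝ) * τ := by nlinarith [abs_nonneg t]
    rcases hs with ⟨h1, _⟩ | ⟨h1, _⟩
    · rw [h1] at h0 ⊢; rw [abs_of_pos (by linarith)]; ring
    · rw [h1] at h0 ⊢; rw [abs_of_neg (by linarith)]; ring
  -- the multiple
  set n : ℤ := ⌈τ/δ⌉ with hndef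
  have hn_low : τ/δ ≤ (n:ℝ) := Int.le_ceil _
  have hn_high : (n:ℝ) < τ/δ + 1 := Int.ceil_lt_add_one _
  have hclose : |(n:ℝ) * δ - τ| < |δ| := by
    rcases hδne.lt_or_gt with h | h
    · have h1 : (n:ℝ) * δ ≤ (τ/δ) * δ := mul_le_mul_of_nonpos_right hn_low h.le
      have h2 : (τ/δ + 1) * δ < (n:ℝ) * δ := by
        have := mul_lt_mul_of_neg_right hn_high h
        linarith
      rw [div_mul_cancel₀ _ hδne] at h1
      rw [add_mul, div_mul_cancel₀ _ hδne] at h2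
      rw [abs_of_neg h, abs_lt]
      constructor <;> linarith
    · have h1 : (τ/δ) * δ ≤ (n:ℝ) * δ := mul_le_mul_of_nonneg_right hn_low h.le
      have h2 : (n:ℝ) * δ < (τ/δ + 1) * δ := mul_lt_mul_of_pos_right hn_high h
      rw [div_mul_cancel₀ _ hδne] at h1
      rw [add_mul, div_mul_cancel₀ _ hδne] at h2
      rw [abs_of_pos h, abs_lt]
      constructor <;> linarith
  have hτabs0 : 0 < |τ| := by rw [← hττ]; nlinarith [abs_nonneg t]
  have hτδpos : 0 < τ/δ := by
    have h1 : 0 < ((s:ℝ) * τ) * ((s:ℝ) * δ) := by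
      rw [hττ, hsδ]; exact mul_pos hτabs0 hδpos
    have h2 : 0 < τ * δ := by
      rcases hs with ⟨hh, _⟩ | ⟨hh, _⟩ <;> rw [hh] at h1 <;> nlinarith
    exact div_pos_iff.2 (by rcases mul_pos_iff.1 h2 with ⟨u,v⟩|⟨u,v⟩
                            · exact Or.inl ⟨u, v⟩
                            · exact Or.inr ⟨u, v⟩)
  have hn_ge : |τ| ≤ (n:ℝ) := by
    have h1 : τ/δ = |τ|/|δ| := by
      rw [← abs_div, abs_of_pos hτδpos]
    have h2 : |τ| ≤ |τ|/|δ| := by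
      rw [le_div_iff₀ hδpos]
      nlinarith [abs_nonneg τ, mul_nonneg (abs_nonneg τ) (by linarith : (0:ℝ) ≤ 1 - |δ|)]
    linarith
  have hτ_abs : 3*|t| + 8 ≤ |τ| := by rw [← hττ]; exact hsτ
  have hn8 : (8:ℝ) ≤ (n:ℝ) := by nlinarith [abs_nonneg t]
  have hnpos : (0:ℝ) < (n:ℝ) := by linarith
  have hnpos' : 0 < n := by exact_mod_cast hnpos
  -- the exponents
  set k : ℤ := n * b with hkdef
  set j : ℤ := s * (P:ℤ) - n * a with hjdef
  have hkn : (n:ℝ) ≤ (k:ℝ) := by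
    push_cast [hkdef]
    have hb' : (1:ℝ) ≤ (b:ℝ) := by exact_mod_cast hb
    nlinarith
  have hval : (k:ℝ) * L3 - (j:ℝ) * L2 - t = (n:ℝ) * δ - τ := by
    push_cast [hkdef, hjdef, hτdef, hδdef]
    ring
  have hbound : |(k:ℝ) * L3 - (j:ℝ) * L2 - t| < ε := by
    rw [hval]; exact hclose.trans hδlt
  have hk2 : 2 ≤ k := by
    have : (2:ℝ) ≤ (k:ℝ) := by linarith
    exact_mod_cast this
  have hj2 : 2 ≤ j := by
    have hδτ : (n:ℝ) * δ ≤ τ + |δ| := by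
      have := (abs_lt.1 hclose).2; linarith
    have hnb : (n:ℝ) * L3 ≤ (n:ℝ) * (b:ℝ) * L3 := by
      have hb' : (1:ℝ) ≤ (b:ℝ) := by exact_mod_cast hb
      nlinarith [mul_nonneg (mul_nonneg hnpos.le (sub_nonneg.2 hb')) (by linarith : (0:ℝ) ≤ L3)]
    have hjL2 : (j:ℝ) * L2 ≥ (n:ℝ) - |t| - 1 := by
      have hexp : (j:ℝ) * L2 = (s:ℝ) * (P:ℝ) * L2 - ((n:ℝ) * δ - (n:ℝ) * (b:ℝ) * L3) := by
        push_cast [hjdef, hδdef]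
        ring
      have hδ1 : |δ| ≤ 1 := by linarith
      have hsP : (s:ℝ) * (P:ℝ) * L2 - τ = -t := by rw [hτdef]; ring
      nlinarith
    have hj7 : (7:ℝ) ≤ (j:ℝ) * L2 := by nlinarith [abs_nonneg t]
    have hjpos : (0:ℝ) < (j:ℝ) := by nlinarith
    have : (2:ℝ) ≤ (j:ℝ) := by nlinarith
    exact_mod_cast this
  refine ⟨k.toNat, j.toNat, by omega, by omega, ?_⟩
  have hk' : ((k.toNat : ℕ) : ℝ) = (k : ℝ) := by
    have h := Int.toNat_of_nonneg (show (0:ℤ) ≤ k by omega)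
    exact_mod_cast congrArg (fun z : ℤ => (z : ℝ)) h
  have hj' : ((j.toNat : ℕ) : ℝ) = (j : ℝ) := by
    have h := Int.toNat_of_nonneg (show (0:ℤ) ≤ j by omega)
    exact_mod_cast congrArg (fun z : ℤ => (z : ℝ)) h
  rw [hk', hj']
  exact hbound

theorem stmt14 :
    Set.Ici (0 : ℝ) ⊆
      closure (ratioSet {n : ℕ | (∃ j : ℕ, 2 ≤ j ∧ n = 2 ^ j) ∨ (∃ k : ℕ, 2 ≤ k ∧ n = 3 ^ k)}) := by
  intro x hx
  set A : Set ℕ := {n : ℕ | (∃ j : ℕ, 2 ≤ j ∧ n = 2 ^ j) ∨ (∃ k : ℕ, 2 ≤ k ∧ n = 3 ^ k)} with hA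
  rw [Metric.mem_closure_iff]
  intro ε' hε'
  rcases eq_or_lt_of_le (Set.mem_Ici.1 hx) with hx0 | hxpos
  · -- x = 0 : use 4 / 3^k
    obtain ⟨k, hk⟩ := pow_unbounded_of_one_lt (4/ε' : ℝ) (by norm_num : (1:ℝ) < 3)
    refine ⟨((2^2 : ℕ) : ℝ) / ((3^(k+2) : ℕ) : ℝ), ⟨2^2, Or.inl ⟨2, le_refl 2, rfl⟩,
      3^(k+2), Or.inr ⟨k+2, by omega, rfl⟩, rfl⟩, ?_⟩
    rw [← hx0, dist_comm, dist_zero_right]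
    have h3 : (0:ℝ) < (3:ℝ)^(k+2) := by positivity
    have hmono : (3:ℝ)^k ≤ (3:ℝ)^(k+2) := pow_le_pow_right₀ (by norm_num) (by omega)
    rw [Real.norm_eq_abs, abs_of_pos (by positivity)]
    push_cast
    rw [div_lt_iff₀ h3]
    have h4 : (4:ℝ) < 3^k * ε' := (div_lt_iff₀ hε').1 hk
    nlinarith
  · -- x > 0
    have hcont : ContinuousAt Real.exp (Real.log x) := Real.continuous_exp.continuousAt
    rw [Metric.continuousAt_iff] at hcont
    obtain ⟨ε, hε, hcl⟩ := hcont ε' hε'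
    obtain ⟨k, j, hk, hj, happ⟩ := key_approx (Real.log x) ε hε
    refine ⟨((3^k : ℕ) : ℝ) / ((2^j : ℕ) : ℝ), ⟨3^k, Or.inr ⟨k, hk, rfl⟩,
      2^j, Or.inl ⟨j, hj, rfl⟩, rfl⟩, ?_⟩
    have hval : ((3^k : ℕ) : ℝ) / ((2^j : ℕ) : ℝ) =
        Real.exp ((k:ℝ) * Real.log 3 - (j:ℝ) * Real.log 2) := by
      rw [Real.exp_sub]
      push_cast
      rw [← Real.log_pow, ← Real.log_pow, Real.exp_log (by positivity),
        Real.exp_log (by positivity)]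
    rw [hval, dist_comm]
    have := hcl (show dist ((k:ℝ) * Real.log 3 - (j:ℝ) * Real.log 2) (Real.log x) < ε by
      rw [Real.dist_eq]; exact happ)
    rwa [Real.exp_log hxpos] at this
end

section
/- The set A = {2^j : j ≥ 2} ∪ {3^k : k ≥ 2} contains no arithmetic progression of length three: there are no distinct x, y, z ∈ A with x < y < z and x + z = 2y. -/
private lemma p2mod4 (a : ℕ) (h : 2 ≤ a) : 2 ^ a % 4 = 0 := by
  obtain ⟨t, rfl⟩ := Nat.exists_eq_add_of_le h
  rw [pow_add]
  simp [Nat.mul_mod_right]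

private lemma p3mod2 (k : ℕ) : 3 ^ k % 2 = 1 := by
  rw [Nat.pow_mod]; simp

private lemma p3mod3 (k : ℕ) (h : 1 ≤ k) : 3 ^ k % 3 = 0 := by
  obtain ⟨t, rfl⟩ := Nat.exists_eq_add_of_le h
  rw [pow_add]
  simp [Nat.mul_mod_right, Nat.mul_mod_left]

private lemma p2mod3 (a : ℕ) : 2 ^ a % 3 ≠ 0 := by
  intro h
  have : (3 : ℕ) ∣ 2 ^ a := Nat.dvd_of_mod_eq_zero h
  have := Nat.Prime.dvd_of_dvd_pow Nat.prime_three this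
  omega

private lemma pure2 (a b c : ℕ) (hab : a < b) (hbc : b < c) :
    2 ^ a + 2 ^ c ≠ 2 * 2 ^ b := by
  intro h
  have h1 : (2 : ℕ) ^ (a + 1) ∣ 2 ^ c := pow_dvd_pow 2 (by omega)
  have h2 : (2 : ℕ) ^ (a + 1) ∣ 2 * 2 ^ b := by
    rw [← pow_succ']
    exact pow_dvd_pow 2 (by omega)
  have h3 : (2 : ℕ) ^ a = 2 * 2 ^ b - 2 ^ c := by omega
  have h4 : (2 : ℕ) ^ (a + 1) ∣ 2 ^ a := h3 ▸ Nat.dvd_sub h2 h1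
  have h5 := Nat.le_of_dvd (Nat.pow_pos (n := a) (by norm_num)) h4
  have h6 : (2 : ℕ) ^ a < 2 ^ (a + 1) := Nat.pow_lt_pow_right (by norm_num) (by omega)
  omega

private lemma pure3 (a b c : ℕ) (hab : a < b) (hbc : b < c) :
    3 ^ a + 3 ^ c ≠ 2 * 3 ^ b := by
  intro h
  have h1 : (3 : ℕ) ^ (a + 1) ∣ 3 ^ c := pow_dvd_pow 3 (by omega)
  have h2 : (3 : ℕ) ^ (a + 1) ∣ 2 * 3 ^ b :=
    Dvd.dvd.mul_left (pow_dvd_pow 3 (by omega)) 2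
  have h3 : (3 : ℕ) ^ a = 2 * 3 ^ b - 3 ^ c := by omega
  have h4 : (3 : ℕ) ^ (a + 1) ∣ 3 ^ a := h3 ▸ Nat.dvd_sub h2 h1
  have h5 := Nat.le_of_dvd (Nat.pow_pos (n := a) (by norm_num)) h4
  have h6 : (3 : ℕ) ^ a < 3 ^ (a + 1) := Nat.pow_lt_pow_right (by norm_num) (by omega)
  omega

theorem stmt15 :
    ∀ x ∈ {n : ℕ | (∃ j : ℕ, 2 ≤ j ∧ n = 2 ^ j) ∨ (∃ k : ℕ, 2 ≤ k ∧ n = 3 ^ k)},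
    ∀ y ∈ {n : ℕ | (∃ j : ℕ, 2 ≤ j ∧ n = 2 ^ j) ∨ (∃ k : ℕ, 2 ≤ k ∧ n = 3 ^ k)},
    ∀ z ∈ {n : ℕ | (∃ j : ℕ, 2 ≤ j ∧ n = 2 ^ j) ∨ (∃ k : ℕ, 2 ≤ k ∧ n = 3 ^ k)},
      x < y → y < z → x + z ≠ 2 * y := by
  rintro x (⟨a, ha, rfl⟩ | ⟨a, ha, rfl⟩) y (⟨b, hb, rfl⟩ | ⟨b, hb, rfl⟩)
    z (⟨c, hc, rfl⟩ | ⟨c, hc, rfl⟩) hxy hyz heq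
  · -- 2,2,2
    have hab : a < b := (Nat.pow_lt_pow_iff_right (by norm_num)).mp hxy
    have hbc : b < c := (Nat.pow_lt_pow_iff_right (by norm_num)).mp hyz
    exact pure2 a b c hab hbc heq
  · -- 2,2,3 : 2^a + 3^c = 2*2^b, parity
    have := p2mod4 a ha
    have := p3mod2 c
    omega
  · -- 2,3,2 : mod 4
    have := p2mod4 a ha
    have := p2mod4 c hc
    have := p3mod2 b
    omega
  · -- 2,3,3 : mod 3
    have := p2mod3 a
    have := p3mod3 b (by omega)
    have := p3mod3 c (by omega)
    omega
  · -- 3,2,2 : mod 4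
    have := p3mod2 a
    have := p2mod4 b hb
    have := p2mod4 c hc
    omega
  · -- 3,2,3 : mod 3
    have := p3mod3 a (by omega)
    have := p3mod3 c (by omega)
    have := p2mod3 b
    omega
  · -- 3,3,2 : parity
    have := p3mod2 a
    have := p2mod4 c hc
    omega
  · -- 3,3,3
    have hab : a < b := (Nat.pow_lt_pow_iff_right (by norm_num)).mp hxy
    have hbc : b < c := (Nat.pow_lt_pow_iff_right (by norm_num)).mp hyz
    exact pure3 a b c hab hbc heq
end

section
/- There exists a subset A of ℕ that contains arbitrarily long arithmetic progressions (indeed arbitrarily long blocks of consecutive integers) but whose quotient set R(A) is not dense in [0,∞). -/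
theorem stmt17 :
    ∃ A : Set ℕ, 0 ∉ A ∧
      (∀ L : ℕ, ∃ a : ℕ, 0 < a ∧ ∀ i < L, a + i ∈ A) ∧
      ¬ (Set.Ici (0 : ℝ) ⊆ closure (ratioSet A)) := by
  refine ⟨{n | ∃ k : ℕ, 5 ^ k ≤ n ∧ n < 2 * 5 ^ k}, ?_, ?_, ?_⟩
  · rintro ⟨k, hk, -⟩
    exact (pow_pos (by norm_num : 0 < 5) k).not_ge hk
  · intro L
    refine ⟨5 ^ L, pow_pos (by norm_num) L, fun i hi => ⟨L, Nat.le_add_right _ _, ?_⟩⟩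
    have : L < 5 ^ L := Nat.lt_pow_self (by norm_num)
    omega
  · intro h
    have key : ratioSet {n | ∃ k : ℕ, 5 ^ k ≤ n ∧ n < 2 * 5 ^ k} ⊆
        Set.Iic (2 : ℝ) ∪ Set.Ici (5/2 : ℝ) := by
      rintro x ⟨m, ⟨j, hj1, hj2⟩, n, ⟨k, hk1, hk2⟩, rfl⟩
      have hn : (0 : ℝ) < n := by
        have : 0 < n := lt_of_lt_of_le (pow_pos (by norm_num) k) hk1
        exact_mod_cast this
      rcases le_or_gt j k with hjk | hjk
      · left
        rw [Set.mem_Iic, div_le_iff₀ hn]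
        have : m ≤ 2 * n := by
          calc m ≤ 2 * 5 ^ j := hj2.le
          _ ≤ 2 * 5 ^ k := by gcongr <;> norm_num
          _ ≤ 2 * n := by omega
        have : (m : ℝ) ≤ 2 * n := by exact_mod_cast this
        linarith
      · right
        rw [Set.mem_Ici, le_div_iff₀ hn]
        have h5 : 5 * 5 ^ k ≤ m := by
          calc 5 * 5 ^ k = 5 ^ (k + 1) := by ring
          _ ≤ 5 ^ j := Nat.pow_le_pow_right (by norm_num) hjk
          _ ≤ m := hj1
        have : 5 * n ≤ 2 * m := by omega
        have : (5 : ℝ) * n ≤ 2 * m := by exact_mod_cast this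
        linarith
    have h94 : (9/4 : ℝ) ∈ closure (ratioSet {n | ∃ k : ℕ, 5 ^ k ≤ n ∧ n < 2 * 5 ^ k}) :=
      h (by norm_num)
    have hc : (9/4 : ℝ) ∈ Set.Iic (2 : ℝ) ∪ Set.Ici (5/2 : ℝ) :=
      closure_minimal key (isClosed_Iic.union isClosed_Ici) h94
    rcases hc with hc | hc <;> simp [Set.mem_Iic, Set.mem_Ici] at hc <;> norm_num at hc
end
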